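/- arXiv:1205.6422 — 9 statements merged into one kernel-verified Lean document; each statement's English description precedes it below -/
import Mathlib

section
/- For every Tychonoff space X, the subspace ζX = X ∪ cl_{βX}(βX \ υX) of βX is pseudocompact. -/
open Set Topology

/-- A zero-set: the preimage of `{0}` under a continuous real-valued function. -/
def IsZeroSet {Y : Type*} [TopologicalSpace Y] (Z : Set Y) : Prop :=
  ∃ f : C(Y, ℝ), Z = f ⁻¹' {0}

/-- A cozero-set: the complement of a zero-set. -/
def IsCozeroSet {Y : Type*} [TopologicalSpace Y] (C : Set Y) : Prop :=
  IsZeroSet Cᶜ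

/-- A space is pseudocompact if every continuous real-valued function on it is bounded. -/
def IsPseudocompact (Y : Type*) [TopologicalSpace Y] : Prop :=
  ∀ f : C(Y, ℝ), ∃ M : ℝ, ∀ y, |f y| ≤ M

/-- A subset is pseudocompact if it is pseudocompact as a subspace. -/
def IsPseudocompactSet {Y : Type*} [TopologicalSpace Y] (A : Set Y) : Prop :=
  ∀ f : C(A, ℝ), ∃ M : ℝ, ∀ a, |f a| ≤ M

/-- The Hewitt realcompactification `υX`, realized as the subspace of `βX` consisting of
those `p ∈ βX` such that every zero-set of `βX` containing `p` meets `X`. -/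
def upsilonSet (X : Type*) [TopologicalSpace X] : Set (StoneCech X) :=
  {p | ∀ Z : Set (StoneCech X), IsZeroSet Z → p ∈ Z →
    (Z ∩ Set.range (stoneCechUnit : X → StoneCech X)).Nonempty}

/-- `ζX = X ∪ cl_{βX}(βX \ υX)`, as a subset of `βX`. -/
def zetaSet (X : Type*) [TopologicalSpace X] : Set (StoneCech X) :=
  Set.range (stoneCechUnit : X → StoneCech X) ∪ closure (upsilonSet X)ᶜ

/-- For every Tychonoff space `X`, the subspace `ζX = X ∪ cl_{βX}(βX \ υX)` of `βX`
is pseudocompact. -/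
theorem zetaSet_isPseudocompact (X : Type*) [TopologicalSpace X] [T2Space X]
    [CompletelyRegularSpace X] :
    IsPseudocompactSet (zetaSet X) := by
  intro f
  -- inclusion of X into ζX
  set e : X → zetaSet X := fun x => ⟨stoneCechUnit x, Or.inl ⟨x, rfl⟩⟩ with he
  have econt : Continuous e := continuous_stoneCechUnit.subtype_mk _
  have edense : DenseRange e := by
    intro a
    rw [closure_subtype]
    have : (Subtype.val '' range e) = range (stoneCechUnit : X → StoneCech X) := by
      rw [← range_comp]; rfl
    rw [this]
    exact denseRange_stoneCechUnit _
  by_contra hb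
  push_neg at hb
  set g : X → ℝ := fun x => f (e x) with hg
  have gcont : Continuous g := f.continuous.comp econt
  -- g is unbounded
  have hgu : ∀ M : ℝ, ∃ x : X, M < |g x| := by
    intro M
    by_contra hc
    push_neg at hc
    obtain ⟨a, ha⟩ := hb M
    have : |f a| ≤ M := by
      refine edense.induction_on a ?_ hc
      exact isClosed_le (continuous_abs.comp f.continuous) continuous_const
    linarith
  -- positivity
  have hpos : ∀ x : X, (0:ℝ) < 1 + |g x| := fun x => by positivity
  -- h' : X → unit interval
  set h' : X → unitInterval := fun x => ⟨(1 + |g x|)⁻¹, by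
    constructor
    · positivity
    · rw [inv_le_one_iff₀]; right; linarith [abs_nonneg (g x)]⟩ with hh'
  have h'cont : Continuous h' := by
    apply Continuous.subtype_mk
    exact (continuous_const.add (continuous_abs.comp gcont)).inv₀ fun x => (hpos x).ne'
  set H : StoneCech X → unitInterval := stoneCechExtend h'cont with hH
  have Hcont : Continuous H := continuous_stoneCechExtend h'cont
  have Hext : ∀ x : X, H (stoneCechUnit x) = h' x := fun x =>
    congrFun (stoneCechExtend_extends h'cont) x
  -- the real-valued version
  set Hr : StoneCech X → ℝ := fun p => (H p : ℝ) with hHr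
  have Hrcont : Continuous Hr := continuous_subtype_val.comp Hcont
  -- Z is nonempty
  have hZne : ∃ p : StoneCech X, Hr p = 0 := by
    have hcomp : IsCompact (range Hr) := isCompact_range Hrcont
    have hcl : (0:ℝ) ∈ closure (range Hr) := by
      rw [Metric.mem_closure_iff]
      intro ε hε
      obtain ⟨x, hx⟩ := hgu ε⁻¹
      refine ⟨Hr (stoneCechUnit x), mem_range_self _, ?_⟩
      have hv : Hr (stoneCechUnit x) = (1 + |g x|)⁻¹ := by
        show (H (stoneCechUnit x) : ℝ) = _
        rw [Hext]
      rw [hv, Real.dist_eq]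
      have h1 : ε⁻¹ < 1 + |g x| := by linarith [abs_nonneg (g x)]
      have h2 : (1 + |g x|)⁻¹ < ε := (inv_lt_comm₀ hε (hpos x)).mp h1
      rw [abs_sub_comm, sub_zero, abs_of_nonneg (by positivity)]
      exact h2
    rw [hcomp.isClosed.closure_eq] at hcl
    exact hcl
  obtain ⟨p, hp⟩ := hZne
  -- Z misses X
  have hZX : ∀ x : X, Hr (stoneCechUnit x) ≠ 0 := by
    intro x
    have hv : Hr (stoneCechUnit x) = (1 + |g x|)⁻¹ := by
      show (H (stoneCechUnit x) : ℝ) = _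
      rw [Hext]
    rw [hv]
    exact inv_ne_zero (hpos x).ne'
  -- p ∉ υX
  have hpnot : p ∉ upsilonSet X := by
    intro hpu
    obtain ⟨q, hq1, hq2⟩ := hpu (Hr ⁻¹' {0}) ⟨⟨Hr, Hrcont⟩, rfl⟩ hp
    obtain ⟨x, rfl⟩ := hq2
    exact hZX x hq1
  have hpz : p ∈ zetaSet X := Or.inr (subset_closure hpnot)
  -- F = Hr * (1 + |f|) on ζX
  set F : zetaSet X → ℝ := fun a => Hr a * (1 + |f a|) with hF
  have Fcont : Continuous F :=
    (Hrcont.comp continuous_subtype_val).mul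
      (continuous_const.add (continuous_abs.comp f.continuous))
  have hF1 : ∀ a, F a = 1 := by
    intro a
    refine edense.induction_on a (isClosed_eq Fcont continuous_const) ?_
    intro x
    have hx : Hr (e x : StoneCech X) = (1 + |g x|)⁻¹ := by
      show (H (stoneCechUnit x) : ℝ) = _
      rw [Hext]
    rw [hF]
    show Hr (e x : StoneCech X) * (1 + |f (e x)|) = 1
    rw [hx]
    exact inv_mul_cancel₀ (hpos x).ne'
  have := hF1 ⟨p, hpz⟩
  rw [hF] at this
  simp only at this
  rw [show Hr ((⟨p, hpz⟩ : zetaSet X) : StoneCech X) = 0 from hp] at this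
  simp at this
end

section
/- (Hager–Johnson) Let U be an open subset of a Tychonoff space X. If the closure of U in υX is compact, then the closure of U in X is pseudocompact. -/
open Set Topology Filter Function

/-- (Hager–Johnson) If `U` is open in a Tychonoff space `X` and the closure of `U` in `υX`
is compact, then the closure of `U` in `X` is pseudocompact. -/
theorem hager_johnson (X : Type*) [TopologicalSpace X] [T2Space X] [CompletelyRegularSpace X]
    (U : Set X) (hU : IsOpen U)
    (h : IsCompact (closure ((stoneCechUnit : X → StoneCech X) '' U) ∩ upsilonSet X)) :
    IsPseudocompactSet (closure U) := by
  intro f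
  by_contra hf
  push_neg at hf
  -- Step 1 : the closure of the image of U in βX is contained in υX
  have hsub : closure ((stoneCechUnit : X → StoneCech X) '' U) ⊆ upsilonSet X := by
    have hK : IsClosed (closure ((stoneCechUnit : X → StoneCech X) '' U) ∩ upsilonSet X) :=
      h.isClosed
    have himg : (stoneCechUnit : X → StoneCech X) '' U ⊆
        closure ((stoneCechUnit : X → StoneCech X) '' U) ∩ upsilonSet X := by
      rintro q ⟨x, hx, rfl⟩
      refine ⟨subset_closure ⟨x, hx, rfl⟩, ?_⟩
      intro Z hZ hpZ
      exact ⟨stoneCechUnit x, hpZ, ⟨x, rfl⟩⟩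
    intro p hp
    exact ((closure_minimal himg hK) hp).2
  -- Step 2 : open sets V n in X with val ⁻¹' (V n) = {z : closure U | n < |f z|}
  have hVex : ∀ n : ℕ, ∃ V : Set X, IsOpen V ∧
      (Subtype.val : closure U → X) ⁻¹' V = {z : (closure U : Set X) | (n : ℝ) < |f z|} := by
    intro n
    have hcont : Continuous fun z : (closure U : Set X) => |f z| := f.continuous.abs
    have : IsOpen {z : (closure U : Set X) | (n : ℝ) < |f z|} := isOpen_Ioi.preimage hcont
    rwa [isOpen_induced_iff] at this
  choose V hVopen hVpre using hVex
  -- membership in V n forces |f| > n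
  have hVval : ∀ n : ℕ, ∀ z : (closure U : Set X), (z : X) ∈ V n → (n : ℝ) < |f z| := by
    intro n z hz
    have : z ∈ (Subtype.val : closure U → X) ⁻¹' V n := hz
    rwa [hVpre n] at this
  -- Step 3 : each U ∩ V n is nonempty
  have hxs : ∀ n : ℕ, ∃ x : X, x ∈ U ∩ V n := by
    intro n
    obtain ⟨a, ha⟩ := hf n
    have haV : a ∈ (Subtype.val : closure U → X) ⁻¹' V n := by
      rw [hVpre n]; exact ha
    have hacl : (a : X) ∈ closure U := a.2
    rcases (mem_closure_iff.1 hacl) (V n) (hVopen n) haV with ⟨x, hxV, hxU⟩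
    exact ⟨x, hxU, hxV⟩
  choose xs hxsU hxsV using hxs
  -- Step 4 : the family (U ∩ V n) is locally finite in X
  have hLF : LocallyFinite fun n : ℕ => U ∩ V n := by
    intro x
    by_cases hx : x ∈ closure U
    · obtain ⟨N, hN⟩ := exists_nat_gt |f ⟨x, hx⟩|
      have hcont : Continuous fun z : (closure U : Set X) => |f z| := f.continuous.abs
      have hopen : IsOpen {z : (closure U : Set X) | |f z| < (N : ℝ)} :=
        isOpen_Iio.preimage hcont
      rw [isOpen_induced_iff] at hopen
      obtain ⟨W, hWopen, hWpre⟩ := hopen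
      have hxW : x ∈ W := by
        have : (⟨x, hx⟩ : (closure U : Set X)) ∈ (Subtype.val : closure U → X) ⁻¹' W := by
          rw [hWpre]; exact hN
        exact this
      refine ⟨W, hWopen.mem_nhds hxW, ?_⟩
      have hss : {n : ℕ | ((U ∩ V n) ∩ W).Nonempty} ⊆ Iio N := by
        intro n hn
        obtain ⟨y, ⟨hyU, hyV⟩, hyW⟩ := hn
        by_contra hnN
        simp only [mem_Iio, not_lt] at hnN
        have hycl : y ∈ closure U := subset_closure hyU
        have h1 : (n : ℝ) < |f ⟨y, hycl⟩| := hVval n ⟨y, hycl⟩ hyV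
        have h2 : |f ⟨y, hycl⟩| < (N : ℝ) := by
          have : (⟨y, hycl⟩ : (closure U : Set X)) ∈ (Subtype.val : closure U → X) ⁻¹' W := hyW
          rw [hWpre] at this
          exact this
        have : (N : ℝ) ≤ (n : ℝ) := by exact_mod_cast hnN
        linarith
      exact (finite_Iio N).subset hss
    · refine ⟨(closure U)ᶜ, (isClosed_closure.isOpen_compl).mem_nhds hx, ?_⟩
      have : {n : ℕ | ((U ∩ V n) ∩ (closure U)ᶜ).Nonempty} ⊆ (∅ : Set ℕ) := by
        intro n hn
        obtain ⟨y, ⟨hyU, _⟩, hyc⟩ := hn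
        exact absurd (subset_closure hyU) hyc
      exact Set.Finite.subset (finite_empty) this
  -- Step 5 : bump functions g n with g n (xs n) = n, vanishing off U ∩ V n
  have hgex : ∀ n : ℕ, ∃ g : X → ℝ, Continuous g ∧ g (xs n) = n ∧
      (∀ z, z ∉ U ∩ V n → g z = 0) ∧ ∀ z, 0 ≤ g z := by
    intro n
    have hKc : IsClosed (U ∩ V n)ᶜ := ((hU.inter (hVopen n)).isClosed_compl)
    have hxK : xs n ∉ (U ∩ V n)ᶜ := by simp [hxsU n, hxsV n]
    obtain ⟨φ, hφc, hφx, hφK⟩ := CompletelyRegularSpace.completely_regular (xs n) _ hKc hxK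
    refine ⟨fun z => (n : ℝ) * (1 - (φ z : ℝ)), by fun_prop, ?_, ?_, ?_⟩
    · simp only [hφx]; norm_num
    · intro z hz
      have h1 : φ z = 1 := hφK hz
      simp only [h1]; norm_num
    · intro z
      have h1 : (φ z : ℝ) ≤ 1 := (φ z).2.2
      show (0 : ℝ) ≤ (n : ℝ) * (1 - (φ z : ℝ))
      have h2 : (0 : ℝ) ≤ (n : ℝ) := Nat.cast_nonneg n
      nlinarith
  choose g hgc hgx hg0 hgnn using hgex
  -- the total function
  set G : X → ℝ := fun z => ∑ᶠ n, g n z with hG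
  have hsupp : ∀ n, support (g n) ⊆ U ∩ V n := by
    intro n z hz
    by_contra hzn
    exact hz (hg0 n z hzn)
  have hLFs : LocallyFinite fun n => support (g n) := hLF.subset hsupp
  have hGc : Continuous G := continuous_finsum hgc hLFs
  have hGnn : ∀ z, 0 ≤ G z := fun z => finsum_nonneg fun n => hgnn n z
  have hGge : ∀ n : ℕ, (n : ℝ) ≤ G (xs n) := by
    intro n
    have hfin : (support fun m => g m (xs n)).Finite := by
      apply (hLFs.point_finite (xs n)).subset
      intro m hm
      exact hm
    have := single_le_finsum n hfin (fun m => hgnn m (xs n))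
    rwa [hgx n] at this
  -- Step 6 : H : X → [0,1], H z = (1 + G z)⁻¹
  have hpos : ∀ z, (0 : ℝ) < 1 + G z := fun z => by have := hGnn z; linarith
  have hmemI : ∀ z, (1 + G z)⁻¹ ∈ Icc (0 : ℝ) 1 := by
    intro z
    constructor
    · exact inv_nonneg.2 (by have := hGnn z; linarith)
    · rw [inv_le_one_iff₀]
      right
      have := hGnn z; linarith
  set H : X → (Icc (0 : ℝ) 1) := fun z => ⟨(1 + G z)⁻¹, hmemI z⟩ with hHdef
  have hHc : Continuous H := by
    apply Continuous.subtype_mk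
    exact (continuous_const.add hGc).inv₀ fun z => (hpos z).ne'
  -- extension to βX
  let βH : StoneCech X → (Icc (0 : ℝ) 1) := stoneCechExtend hHc
  let φ : StoneCech X → ℝ := fun q => (βH q : ℝ)
  have hφc : Continuous φ := continuous_subtype_val.comp (continuous_stoneCechExtend hHc)
  have hφunit : ∀ x : X, φ (stoneCechUnit x) = (1 + G x)⁻¹ := by
    intro x
    have h1 : βH (stoneCechUnit x) = H x := congrFun (stoneCechExtend_extends hHc) x
    show ((βH (stoneCechUnit x) : ℝ)) = _
    rw [h1]
  -- Step 7 : cluster point of the sequence stoneCechUnit (xs n)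
  set y : ℕ → StoneCech X := fun n => stoneCechUnit (xs n) with hy
  have hyle : map y atTop ≤ 𝓟 (closure ((stoneCechUnit : X → StoneCech X) '' U)) := by
    rw [le_principal_iff, mem_map]
    apply Filter.Eventually.of_forall
    intro n
    exact subset_closure ⟨xs n, hxsU n, rfl⟩
  have hccl : IsCompact (closure ((stoneCechUnit : X → StoneCech X) '' U)) :=
    isClosed_closure.isCompact
  obtain ⟨p, hpcl, hpc⟩ := hccl.exists_clusterPt hyle
  -- φ p = 0
  have hφy : Tendsto (φ ∘ y) atTop (𝓝 0) := by
    have hle : ∀ n : ℕ, (φ ∘ y) n ≤ 1 / ((n : ℝ) + 1) := by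
      intro n
      have h1 : φ (y n) = (1 + G (xs n))⁻¹ := hφunit (xs n)
      have h2 : (n : ℝ) + 1 ≤ 1 + G (xs n) := by have := hGge n; linarith
      have h3 : (0 : ℝ) < (n : ℝ) + 1 := by positivity
      simp only [Function.comp_apply, h1, one_div]
      exact inv_anti₀ h3 h2
    have hge : ∀ n : ℕ, (0 : ℝ) ≤ (φ ∘ y) n := by
      intro n
      simp only [Function.comp_apply]
      rw [hφunit (xs n)]
      exact inv_nonneg.2 (hpos (xs n)).le
    exact tendsto_of_tendsto_of_tendsto_of_le_of_le tendsto_const_nhds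
      tendsto_one_div_add_atTop_nhds_zero_nat (fun n => hge n) (fun n => hle n)
  have hφp : φ p = 0 := by
    have hcp2 : ClusterPt (φ p) (map φ (map y atTop)) :=
      hpc.map hφc.continuousAt tendsto_map
    rw [Filter.map_map] at hcp2
    have : ClusterPt (φ p) (𝓝 0) := hcp2.mono hφy
    exact eq_of_nhds_neBot this
  -- Step 8 : contradiction via υX
  have hpυ : p ∈ upsilonSet X := hsub hpcl
  have hZ : IsZeroSet (φ ⁻¹' {0}) := ⟨⟨φ, hφc⟩, rfl⟩
  obtain ⟨q, hqZ, x, rfl⟩ := hpυ (φ ⁻¹' {0}) hZ hφp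
  have : φ (stoneCechUnit x) = 0 := hqZ
  rw [hφunit x] at this
  have hpz := hpos x
  rw [inv_eq_zero] at this
  linarith
end

section
/- Let A be a regular closed subset of a Tychonoff space X (i.e., A is the closure in X of an open subset of X). Then cl_{βX} A ⊆ υX if and only if A is pseudocompact. -/
open Set Topology

open Filter in
private theorem hard_dir (X : Type*) [TopologicalSpace X] [T2Space X] [CompletelyRegularSpace X]
    (A : Set X) (U : Set X) (hU : IsOpen U) (hAU : A = closure U)
    (hcl : closure ((stoneCechUnit : X → StoneCech X) '' A) ⊆ upsilonSet X) :
    IsPseudocompactSet A := by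
  by_contra hnps
  simp only [IsPseudocompactSet, not_forall, not_exists, not_le] at hnps
  obtain ⟨f, hf⟩ := hnps
  have hUA : U ⊆ A := hAU ▸ subset_closure
  have hAcl : IsClosed A := hAU ▸ isClosed_closure
  -- density of U in A lets us find points of U with |f| large
  have dense_claim : ∀ cc : ℝ, ∃ a : A, (a : X) ∈ U ∧ cc < |f a| := by
    intro cc
    obtain ⟨b, hb⟩ := hf cc
    have hO : IsOpen {x : A | cc < |f x|} := isOpen_Ioi.preimage f.continuous.abs
    rw [isOpen_induced_iff] at hO
    obtain ⟨Wb, hWb, hWbO⟩ := hO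
    have hbW : (b : X) ∈ Wb := by
      have : b ∈ (Subtype.val ⁻¹' Wb : Set A) := by rw [hWbO]; exact hb
      exact this
    have hbU : (b : X) ∈ closure U := hAU ▸ b.2
    obtain ⟨y, hyW, hyU⟩ := mem_closure_iff.mp hbU Wb hWb hbW
    refine ⟨⟨y, hUA hyU⟩, hyU, ?_⟩
    have : (⟨y, hUA hyU⟩ : A) ∈ (Subtype.val ⁻¹' Wb : Set A) := hyW
    rw [hWbO] at this
    exact this
  choose u hu1 hu2 using fun n : ℕ => dense_claim n
  set c : ℕ → ℝ := fun n => |f (u n)| with hc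
  -- open sets V n ⊆ U on which |f| is near c n
  have hSopen : ∀ n : ℕ, ∃ Wn : Set X, IsOpen Wn ∧
      (Subtype.val ⁻¹' Wn : Set A) = (fun a : A => |f a|) ⁻¹' Ioo (c n - 4⁻¹) (c n + 4⁻¹) := by
    intro n
    have : IsOpen ((fun a : A => |f a|) ⁻¹' Ioo (c n - 4⁻¹) (c n + 4⁻¹)) :=
      isOpen_Ioo.preimage f.continuous.abs
    rw [isOpen_induced_iff] at this
    obtain ⟨Wn, hWn, hWnS⟩ := this
    exact ⟨Wn, hWn, hWnS⟩
  choose W hWopen hWS using hSopen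
  set V : ℕ → Set X := fun n => W n ∩ U with hV
  have hVopen : ∀ n, IsOpen (V n) := fun n => (hWopen n).inter hU
  have hVA : ∀ n, V n ⊆ A := fun n => inter_subset_right.trans hUA
  have hmemV : ∀ n, (u n : X) ∈ V n := by
    intro n
    refine ⟨?_, hu1 n⟩
    have : (u n) ∈ (Subtype.val ⁻¹' W n : Set A) := by
      rw [hWS]
      simp only [mem_preimage, mem_Ioo]
      constructor <;> [skip; skip] <;> simp [hc] <;> norm_num
    exact this
  have hVf : ∀ (n : ℕ) (x : X), x ∈ V n → ∀ hxA : x ∈ A, c n - 4⁻¹ < |f ⟨x, hxA⟩| := by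
    intro n x hx hxA
    have : (⟨x, hxA⟩ : A) ∈ (Subtype.val ⁻¹' W n : Set A) := hx.1
    rw [hWS] at this
    exact this.1
  -- local finiteness of V
  have hlfV : LocallyFinite V := by
    intro x
    by_cases hx : x ∈ A
    · have hO : IsOpen {a : A | |f a| < |f ⟨x, hx⟩| + 1} := isOpen_Iio.preimage f.continuous.abs
      rw [isOpen_induced_iff] at hO
      obtain ⟨Wx, hWx, hWxO⟩ := hO
      have hxWx : x ∈ Wx := by
        have : (⟨x, hx⟩ : A) ∈ (Subtype.val ⁻¹' Wx : Set A) := by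
          rw [hWxO]; simp only [mem_setOf_eq]; linarith
        exact this
      refine ⟨Wx, hWx.mem_nhds hxWx, ?_⟩
      apply Set.Finite.subset (Set.finite_Iio ⌈|f ⟨x, hx⟩| + 1 + 4⁻¹⌉₊)
      rintro n ⟨y, hyV, hyW⟩
      have hyA : y ∈ A := hVA n hyV
      have h1 : |f ⟨y, hyA⟩| < |f ⟨x, hx⟩| + 1 := by
        have : (⟨y, hyA⟩ : A) ∈ (Subtype.val ⁻¹' Wx : Set A) := hyW
        rw [hWxO] at this
        exact this
      have h2 : c n - 4⁻¹ < |f ⟨y, hyA⟩| := hVf n y hyV hyA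
      have h3 : (n : ℝ) < c n := hu2 n
      rw [mem_Iio, Nat.lt_ceil]
      push_cast
      linarith
    · refine ⟨Aᶜ, hAcl.isOpen_compl.mem_nhds hx, ?_⟩
      apply Set.Finite.subset Set.finite_empty
      rintro n ⟨y, hyV, hyA⟩
      exact hyA (hVA n hyV)
  -- bump functions
  have hbump : ∀ n : ℕ, ∃ φ : X → ℝ, Continuous φ ∧ φ (u n) = 1 ∧
      (∀ x ∉ V n, φ x = 0) ∧ ∀ x, 0 ≤ φ x ∧ φ x ≤ 1 := by
    intro n
    obtain ⟨fc, hfc, hfc0, hfc1⟩ := CompletelyRegularSpace.completely_regular (u n : X) (V n)ᶜ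
      (hVopen n).isClosed_compl (by simp [hmemV n])
    refine ⟨fun x => 1 - (fc x : ℝ), by continuity, by simp [hfc0], ?_, ?_⟩
    · intro x hx
      have h1 : fc x = 1 := hfc1 hx
      simp [h1]
    · intro x
      constructor
      · simp only [sub_nonneg]; exact unitInterval.le_one (fc x)
      · simp only []; linarith [unitInterval.nonneg (fc x)]
  choose φ hφc hφ1 hφ0 hφb using hbump
  -- the unbounded continuous function g on X
  set g : X → ℝ := fun x => ∑ᶠ n : ℕ, (n : ℝ) * φ n x with hg
  have hsupp : ∀ n : ℕ, Function.support (fun x => (n : ℝ) * φ n x) ⊆ V n := by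
    intro n x hx
    by_contra hxV
    exact hx (show (n:ℝ) * φ n x = 0 by rw [hφ0 n x hxV, mul_zero])
  have hlf : LocallyFinite fun n : ℕ => Function.support fun x => (n : ℝ) * φ n x :=
    hlfV.subset hsupp
  have hgc : Continuous g :=
    continuous_finsum (fun n => continuous_const.mul (hφc n)) hlf
  have hptfin : ∀ x : X, (Function.support fun n : ℕ => (n : ℝ) * φ n x).Finite := by
    intro x
    obtain ⟨t, ht, hft⟩ := hlfV x
    apply hft.subset
    intro n hn
    have hxV : x ∈ V n := by
      by_contra h
      exact hn (show (n:ℝ) * φ n x = 0 by rw [hφ0 n x h, mul_zero])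
    exact ⟨x, hxV, mem_of_mem_nhds ht⟩
  have hg0 : ∀ x, 0 ≤ g x := fun x =>
    finsum_nonneg fun n => mul_nonneg (Nat.cast_nonneg n) (hφb n x).1
  have hgu : ∀ n : ℕ, (n : ℝ) ≤ g (u n) := by
    intro n
    have h1 := single_le_finsum n (hptfin (u n))
      (fun m => mul_nonneg (Nat.cast_nonneg m) (hφb m (u n : X)).1)
    rwa [hφ1 n, mul_one] at h1
  -- h = 1/(1+g), extended to βX
  have hpos : ∀ x, 0 < 1 + g x := fun x => by linarith [hg0 x]
  set h : X → ℝ := fun x => (1 + g x)⁻¹ with hh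
  have hhc : Continuous h := (continuous_const.add hgc).inv₀ fun x => (hpos x).ne'
  have hh01 : ∀ x, h x ∈ Set.Icc (0:ℝ) 1 := by
    intro x
    refine ⟨le_of_lt (inv_pos.2 (hpos x)), ?_⟩
    rw [← inv_one]
    apply inv_anti₀ one_pos
    linarith [hg0 x]
  haveI : CompactSpace (Set.Icc (0:ℝ) 1) := isCompact_iff_compactSpace.mp isCompact_Icc
  set hI : X → Set.Icc (0:ℝ) 1 := fun x => ⟨h x, hh01 x⟩ with hhI
  have hIc : Continuous hI := hhc.subtype_mk _
  set H := stoneCechExtend hIc with hH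
  set F : C(StoneCech X, ℝ) :=
    ⟨fun q => (H q : ℝ), continuous_subtype_val.comp (continuous_stoneCechExtend hIc)⟩ with hF
  have hFe : ∀ x : X, F (stoneCechUnit x) = h x := by
    intro x
    have h1 := congrFun (stoneCechExtend_extends hIc) x
    simp only [Function.comp_apply] at h1
    exact congrArg Subtype.val h1
  set seq : ℕ → StoneCech X := fun n => stoneCechUnit (u n : X) with hseq
  obtain ⟨p, hp⟩ := exists_clusterPt_of_compactSpace (Filter.map seq Filter.atTop)
  have hpA : p ∈ closure (stoneCechUnit '' A) := by
    have h1 : p ∈ closure (Set.range seq) :=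
      mem_closure_iff_clusterPt.2 (hp.mono (Filter.le_principal_iff.2 Filter.range_mem_map))
    refine closure_mono ?_ h1
    rintro _ ⟨n, rfl⟩
    exact ⟨(u n : X), (u n).2, rfl⟩
  have hFp0 : F p = 0 := by
    have hub : ∀ N : ℕ, F p ≤ ((N : ℝ) + 1)⁻¹ := by
      intro N
      have h1 : p ∈ closure (seq '' Set.Ici N) :=
        mem_closure_iff_clusterPt.2 (hp.mono (Filter.le_principal_iff.2
          (Filter.image_mem_map (Filter.Ici_mem_atTop N))))
      have h2 : closure (seq '' Set.Ici N) ⊆ F ⁻¹' Set.Iic ((N:ℝ)+1)⁻¹ := by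
        apply closure_minimal
        · rintro _ ⟨n, hn, rfl⟩
          rw [mem_preimage, mem_Iic]
          have he : F (seq n) = h (u n : X) := hFe _
          rw [he]
          have hn' : (N : ℝ) ≤ n := Nat.cast_le.2 hn
          calc h (u n : X) = (1 + g (u n : X))⁻¹ := rfl
            _ ≤ ((n : ℝ) + 1)⁻¹ := by
                apply inv_anti₀ (by positivity)
                linarith [hgu n]
            _ ≤ ((N : ℝ) + 1)⁻¹ := by
                apply inv_anti₀ (by positivity)
                linarith
        · exact IsClosed.preimage F.continuous isClosed_Iic
      exact h2 h1
    have hlb : 0 ≤ F p := (H p).2.1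
    have hle : F p ≤ 0 := by
      by_contra hcc
      push_neg at hcc
      obtain ⟨N, hN⟩ := exists_nat_gt (F p)⁻¹
      have h1 : ((N:ℝ)+1)⁻¹ < F p := by
        rw [← inv_inv (F p)]
        apply inv_strictAnti₀ (inv_pos.2 hcc)
        linarith
      exact absurd (hub N) (not_le.2 h1)
    linarith
  obtain ⟨q, hqZ, x, rfl⟩ := hcl hpA (F ⁻¹' {0}) ⟨F, rfl⟩ (by simpa using hFp0)
  rw [mem_preimage, mem_singleton_iff, hFe x] at hqZ
  exact absurd hqZ (ne_of_gt (inv_pos.2 (hpos x)))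


private theorem easy_dir (X : Type*) [TopologicalSpace X] (A : Set X)
    (hps : IsPseudocompactSet A) :
    closure ((stoneCechUnit : X → StoneCech X) '' A) ⊆ upsilonSet X := by
  intro p hp Z hZ hpZ
  obtain ⟨F, rfl⟩ := hZ
  by_contra hne
  rw [not_nonempty_iff_eq_empty, eq_empty_iff_forall_notMem] at hne
  have hFe : ∀ x : X, F (stoneCechUnit x) ≠ 0 := fun x hx =>
    hne (stoneCechUnit x) ⟨hx, mem_range_self x⟩
  have hAne : A.Nonempty := by
    by_contra h
    rw [not_nonempty_iff_eq_empty] at h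
    simp [h] at hp
  have hk : Continuous fun a : A => (|F (stoneCechUnit (a : X))|)⁻¹ := by
    apply Continuous.inv₀
    · exact (F.continuous.comp (continuous_stoneCechUnit.comp continuous_subtype_val)).abs
    · exact fun a => abs_ne_zero.2 (hFe a)
  obtain ⟨M, hM⟩ := hps ⟨_, hk⟩
  obtain ⟨a₀, ha₀⟩ := hAne
  have hMpos : 0 < M := by
    have h1 := hM ⟨a₀, ha₀⟩
    have h2 : 0 < (|F (stoneCechUnit a₀)|)⁻¹ :=
      inv_pos.2 (abs_pos.2 (hFe a₀))
    calc (0:ℝ) < (|F (stoneCechUnit a₀)|)⁻¹ := h2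
    _ ≤ |(|F (stoneCechUnit a₀)|)⁻¹| := le_abs_self _
    _ ≤ M := h1
  have key : ∀ a : A, M⁻¹ ≤ |F (stoneCechUnit (a : X))| := by
    intro a
    have h1 := hM a
    simp only [ContinuousMap.coe_mk] at h1
    have ht : 0 < |F (stoneCechUnit (a : X))| := abs_pos.2 (hFe a)
    rw [abs_of_pos (inv_pos.2 ht)] at h1
    rw [← one_div, one_div_le hMpos ht, one_div]
    exact h1
  have hC : closure (stoneCechUnit '' A) ⊆ {q | M⁻¹ ≤ |F q|} := by
    apply closure_minimal
    · rintro _ ⟨a, ha, rfl⟩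
      exact key ⟨a, ha⟩
    · exact IsClosed.preimage F.continuous.abs isClosed_Ici
  have := hC hp
  simp only [mem_setOf_eq, mem_preimage, mem_singleton_iff] at this hpZ
  rw [hpZ, abs_zero] at this
  exact absurd this (not_le.2 (inv_pos.2 hMpos))

/-- For a regular closed subset `A` of a Tychonoff space `X`, `cl_{βX} A ⊆ υX` if and only if
`A` is pseudocompact. -/
theorem closure_subset_upsilon_iff_isPseudocompact (X : Type*) [TopologicalSpace X] [T2Space X]
    [CompletelyRegularSpace X] (A : Set X) (hA : ∃ U : Set X, IsOpen U ∧ A = closure U) :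
    closure ((stoneCechUnit : X → StoneCech X) '' A) ⊆ upsilonSet X ↔ IsPseudocompactSet A := by
  obtain ⟨U, hU, hAU⟩ := hA
  exact ⟨fun hcl => hard_dir X A U hU hAU hcl, fun hps => easy_dir X A hps⟩
end

section
/- For every Tychonoff space X, the interior of υX in βX equals the union of the sets Ex_X C = βX \ cl_{βX}(X \ C), taken over all cozero-sets C of X whose closure in X is pseudocompact. -/
open Set Topology Filter

/-- The closure in `βX` of the image of a pseudocompact subset of `X` lies in `υX`. -/
theorem aux_closure_image_subset_upsilon {X : Type*} [TopologicalSpace X]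
    {C : Set X} (hpc : IsPseudocompactSet C) :
    closure ((stoneCechUnit : X → StoneCech X) '' C) ⊆ upsilonSet X := by
  intro q hq Z hZ hqZ
  by_contra hne
  rw [Set.not_nonempty_iff_eq_empty] at hne
  obtain ⟨f, rfl⟩ := hZ
  have hfx : ∀ x : X, f (stoneCechUnit x) ≠ 0 := by
    intro x hx
    have : stoneCechUnit x ∈ (⇑f ⁻¹' {0}) ∩ Set.range (stoneCechUnit : X → StoneCech X) :=
      ⟨hx, ⟨x, rfl⟩⟩
    simp [hne] at this
  set g : C(C, ℝ) :=
    ⟨fun a => (|f (stoneCechUnit (a : X))|)⁻¹, by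
      exact ((f.continuous.comp (continuous_stoneCechUnit.comp continuous_subtype_val)).abs).inv₀
        fun a => abs_ne_zero.mpr (hfx a)⟩ with hg
  obtain ⟨M, hM⟩ := hpc g
  set M' : ℝ := max M 1 with hM'
  have hM'pos : 0 < M' := lt_of_lt_of_le one_pos (le_max_right _ _)
  have key : ∀ a : C, M'⁻¹ ≤ |f (stoneCechUnit (a : X))| := by
    intro a
    have h1 : (|f (stoneCechUnit (a : X))|)⁻¹ ≤ M' :=
      le_trans (le_trans (le_abs_self _) (hM a)) (le_max_left _ _)
    have hb : 0 < |f (stoneCechUnit (a : X))| := abs_pos.mpr (hfx a)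
    rw [inv_le_comm₀ hM'pos hb]
    exact h1
  have hcl : closure ((stoneCechUnit : X → StoneCech X) '' C) ⊆ {r | M'⁻¹ ≤ |f r|} := by
    apply closure_minimal
    · rintro _ ⟨x, hx, rfl⟩
      exact key ⟨x, hx⟩
    · exact isClosed_le continuous_const f.continuous.abs
  have := hcl hq
  simp only [mem_setOf_eq] at this
  rw [show f q = 0 from hqZ] at this
  simp at this
  exact absurd this (not_le.mpr hM'pos)

/-- If `C` is open in `X` and the closure in `βX` of its image lies in `υX`,
then `closure C` is pseudocompact. -/
theorem aux_pseudocompact_of_closure_subset {X : Type*} [TopologicalSpace X]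
    [CompletelyRegularSpace X] {C : Set X} (hC : IsOpen C)
    (hsub : closure ((stoneCechUnit : X → StoneCech X) '' C) ⊆ upsilonSet X) :
    IsPseudocompactSet (closure C) := by
  intro g
  by_contra hunb
  push_neg at hunb
  have hGc : Continuous fun a : closure C => |g a| := g.continuous.abs
  -- Step 1: points and open sets witnessing unboundedness
  have key : ∀ n : ℕ, ∃ (u : X) (V : Set X), IsOpen V ∧ u ∈ V ∧ V ⊆ C ∧
      ∀ a : closure C, (a : X) ∈ V → (n : ℝ) < |g a| := by
    intro n
    obtain ⟨a, ha⟩ := hunb n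
    have hO : IsOpen ((fun a : closure C => |g a|) ⁻¹' Ioi (n : ℝ)) :=
      hGc.isOpen_preimage _ isOpen_Ioi
    obtain ⟨W, hWo, hWeq⟩ := isOpen_induced_iff.mp hO
    have haW : (a : X) ∈ W := by
      have : a ∈ Subtype.val ⁻¹' W := hWeq ▸ ha
      exact this
    obtain ⟨u, huW, huC⟩ := mem_closure_iff.mp a.2 W hWo haW
    refine ⟨u, W ∩ C, hWo.inter hC, ⟨huW, huC⟩, inter_subset_right, ?_⟩
    intro b hb
    have : b ∈ Subtype.val ⁻¹' W := hb.1
    rw [hWeq] at this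
    exact this
  choose u V hVo hu hVC hgt using key
  -- Step 2: local finiteness
  have hlf : LocallyFinite V := by
    intro x
    by_cases hx : x ∈ closure C
    · set a : closure C := ⟨x, hx⟩ with ha
      have hO : IsOpen ((fun b : closure C => |g b|) ⁻¹' Iio (|g a| + 1)) :=
        hGc.isOpen_preimage _ isOpen_Iio
      obtain ⟨W, hWo, hWeq⟩ := isOpen_induced_iff.mp hO
      have haW : x ∈ W := by
        have : a ∈ Subtype.val ⁻¹' W := hWeq ▸ (by simp : |g a| < |g a| + 1)
        exact this
      refine ⟨W, hWo.mem_nhds haW, ?_⟩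
      apply Set.Finite.subset (Set.finite_Iio ⌈|g a| + 1⌉₊)
      rintro n ⟨y, hyV, hyW⟩
      have hyC : y ∈ closure C := subset_closure (hVC n hyV)
      set b : closure C := ⟨y, hyC⟩ with hb
      have h1 : (n : ℝ) < |g b| := hgt n b hyV
      have h2 : |g b| < |g a| + 1 := by
        have : b ∈ Subtype.val ⁻¹' W := hyW
        rw [hWeq] at this
        exact this
      exact Nat.lt_ceil.mpr (h1.trans h2)
    · refine ⟨(closure C)ᶜ, isClosed_closure.isOpen_compl.mem_nhds hx, ?_⟩
      apply Set.Finite.subset finite_empty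
      rintro n ⟨y, hyV, hyc⟩
      exact absurd (subset_closure (hVC n hyV)) hyc
  -- Step 3: bump functions
  have bump : ∀ n : ℕ, ∃ φ : X → unitInterval, Continuous φ ∧ φ (u n) = 0 ∧
      EqOn φ 1 (V n)ᶜ := by
    intro n
    exact CompletelyRegularSpace.completely_regular (u n) (V n)ᶜ
      (hVo n).isClosed_compl (fun h => h (hu n))
  choose φ hφc hφ0 hφ1 using bump
  set t : ℕ → X → ℝ := fun n x => (n : ℝ) * (1 - (φ n x : ℝ)) with ht
  have hts : ∀ n, Function.support (t n) ⊆ V n := by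
    intro n x hx
    by_contra hxV
    apply hx
    have : φ n x = 1 := hφ1 n hxV
    simp [ht, this]
  have htc : ∀ n, Continuous (t n) := fun n =>
    continuous_const.mul (continuous_const.sub (continuous_subtype_val.comp (hφc n)))
  have htnn : ∀ n x, 0 ≤ t n x := fun n x =>
    mul_nonneg (Nat.cast_nonneg n) (sub_nonneg.mpr (φ n x).2.2)
  have hlf' : LocallyFinite fun n => Function.support (t n) := hlf.subset hts
  set h : X → ℝ := fun x => ∑ᶠ n, t n x with hh
  have hhc : Continuous h := continuous_finsum htc hlf'
  have hhnn : ∀ x, 0 ≤ h x := fun x => finsum_nonneg fun n => htnn n x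
  have hfin : ∀ x : X, (Function.support fun n => t n x).Finite := by
    intro x
    apply Set.Finite.subset (hlf'.point_finite x)
    intro n hn
    exact hn
  have hge : ∀ n : ℕ, (n : ℝ) ≤ h (u n) := by
    intro n
    have h1 : t n (u n) ≤ h (u n) := single_le_finsum n (hfin (u n)) fun j => htnn j (u n)
    have h2 : t n (u n) = n := by simp [ht, hφ0 n]
    linarith
  -- Step 4: the function k = 1/(1+h) and its Stone-Čech extension
  have h1pos : ∀ x, (0:ℝ) < 1 + h x := fun x => by linarith [hhnn x]
  set K : X → Icc (0:ℝ) 1 := fun x => ⟨(1 + h x)⁻¹,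
    ⟨le_of_lt (inv_pos.mpr (h1pos x)), by
      rw [inv_le_one_iff₀]
      right; linarith [hhnn x]⟩⟩ with hK
  have hKc : Continuous K :=
    Continuous.subtype_mk ((continuous_const.add hhc).inv₀ fun x => ne_of_gt (h1pos x)) _
  set F : StoneCech X → Icc (0:ℝ) 1 := stoneCechExtend hKc with hF
  set fh : StoneCech X → ℝ := fun q => (F q : ℝ) with hfh
  have hfhc : Continuous fh := continuous_subtype_val.comp (continuous_stoneCechExtend hKc)
  have hFe : ∀ x : X, F (stoneCechUnit x) = K x := fun x =>
    congrFun (stoneCechExtend_extends hKc) x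
  have hfhe : ∀ x : X, fh (stoneCechUnit x) = (1 + h x)⁻¹ := by
    intro x; rw [hfh]; simp only; rw [hFe x]
  -- Step 5: cluster point
  have : (Filter.map (fun n : ℕ => stoneCechUnit (u n) : ℕ → StoneCech X) atTop).NeBot :=
    Filter.map_neBot
  obtain ⟨p', hp'⟩ := exists_clusterPt_of_compactSpace
    (Filter.map (fun n : ℕ => stoneCechUnit (u n)) atTop)
  have hmem : p' ∈ closure ((stoneCechUnit : X → StoneCech X) '' C) := by
    rw [mem_closure_iff_clusterPt]
    apply hp'.mono
    rw [Filter.le_principal_iff, Filter.mem_map]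
    filter_upwards with n
    exact mem_image_of_mem _ (hVC n (hu n))
  have hle : ∀ N : ℕ, fh p' ≤ (1 + (N:ℝ))⁻¹ := by
    intro N
    have hcl : p' ∈ closure ((fun n : ℕ => stoneCechUnit (u n)) '' Ici N) := by
      rw [mem_closure_iff_clusterPt]
      apply hp'.mono
      rw [Filter.le_principal_iff, Filter.mem_map]
      filter_upwards [Filter.Ici_mem_atTop N] with n hn
      exact mem_image_of_mem _ hn
    have hS : IsClosed {q | fh q ≤ (1 + (N:ℝ))⁻¹} := isClosed_le hfhc continuous_const
    refine closure_minimal ?_ hS hcl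
    rintro _ ⟨n, hn, rfl⟩
    show fh (stoneCechUnit (u n)) ≤ (1 + (N:ℝ))⁻¹
    rw [hfhe]
    apply inv_anti₀ (by positivity)
    have := hge n
    have : (N : ℝ) ≤ n := Nat.cast_le.mpr hn
    linarith [hge n]
  have hfh0 : fh p' = 0 := by
    have h0 : 0 ≤ fh p' := (F p').2.1
    have hlim : Tendsto (fun N : ℕ => (1 + (N:ℝ))⁻¹) atTop (𝓝 0) := by
      have := tendsto_one_div_add_atTop_nhds_zero_nat (𝕜 := ℝ)
      simpa [one_div, add_comm] using this
    exact le_antisymm (ge_of_tendsto' hlim hle) h0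
  -- Step 6: contradiction
  have hup : p' ∈ upsilonSet X := hsub hmem
  obtain ⟨q, hqZ, x, rfl⟩ := hup (fh ⁻¹' {0}) ⟨⟨fh, hfhc⟩, rfl⟩ hfh0
  have : fh (stoneCechUnit x) = 0 := hqZ
  rw [hfhe] at this
  exact absurd this (ne_of_gt (inv_pos.mpr (h1pos x)))

/-- The interior of `υX` in `βX` is the union of the sets
`Ex_X C = βX \ cl_{βX}(X \ C)` over all cozero-sets `C` of `X` with pseudocompact closure. -/
theorem interior_upsilon_eq_iUnion (X : Type*) [TopologicalSpace X] [T2Space X]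
    [CompletelyRegularSpace X] :
    interior (upsilonSet X) =
      ⋃ C ∈ {C : Set X | IsCozeroSet C ∧ IsPseudocompactSet (closure C)},
        (closure ((stoneCechUnit : X → StoneCech X) '' Cᶜ))ᶜ := by
  apply subset_antisymm
  · -- ⊆
    intro p hp
    obtain ⟨f, hf0, hf1, hf01⟩ := exists_continuous_zero_one_of_isClosed
      ((isOpen_interior : IsOpen (interior (upsilonSet X))).isClosed_compl)
      (isClosed_singleton (x := p))
      (Set.disjoint_singleton_right.mpr (fun h => h hp))
    set C : Set X := {x | (1:ℝ)/2 < f (stoneCechUnit x)} with hC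
    have hCopen : IsOpen C := isOpen_lt continuous_const
      (f.continuous.comp continuous_stoneCechUnit)
    have hcoz : IsCozeroSet C := by
      refine ⟨⟨fun x => max (f (stoneCechUnit x) - 1/2) 0, ?_⟩, ?_⟩
      · exact ((f.continuous.comp continuous_stoneCechUnit).sub continuous_const).max
          continuous_const
      · ext x
        simp [hC, max_eq_right_iff, sub_nonpos, not_lt]
    have hup : closure ((stoneCechUnit : X → StoneCech X) '' C) ⊆ upsilonSet X := by
      have h1 : closure ((stoneCechUnit : X → StoneCech X) '' C) ⊆ {q | 1/2 ≤ f q} := by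
        apply closure_minimal
        · rintro _ ⟨x, hx, rfl⟩
          show (1:ℝ)/2 ≤ f (stoneCechUnit x)
          exact le_of_lt hx
        · exact isClosed_le continuous_const f.continuous
      intro q hq
      have h2 : (1:ℝ)/2 ≤ f q := h1 hq
      have h3 : q ∈ interior (upsilonSet X) := by
        by_contra hqn
        have : f q = 0 := hf0 hqn
        rw [this] at h2; linarith
      exact interior_subset h3
    have hpc : IsPseudocompactSet (closure C) :=
      aux_pseudocompact_of_closure_subset hCopen hup
    rw [mem_iUnion₂]
    refine ⟨C, ⟨hcoz, hpc⟩, ?_⟩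
    intro hpcl
    have h1 : closure ((stoneCechUnit : X → StoneCech X) '' Cᶜ) ⊆ {q | f q ≤ 1/2} := by
      apply closure_minimal
      · rintro _ ⟨x, hx, rfl⟩
        show f (stoneCechUnit x) ≤ 1/2
        exact not_lt.mp hx
      · exact isClosed_le f.continuous continuous_const
    have h2 : f p ≤ 1/2 := h1 hpcl
    have h3 : f p = 1 := hf1 rfl
    rw [h3] at h2; linarith
  · -- ⊇
    intro p hp
    rw [mem_iUnion₂] at hp
    obtain ⟨C, ⟨hcoz, hpc⟩, hpC⟩ := hp
    apply interior_maximal ?_ isClosed_closure.isOpen_compl hpC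
    intro q hq
    have hq1 : q ∈ closure ((stoneCechUnit : X → StoneCech X) '' C) := by
      have hd : q ∈ closure (Set.range (stoneCechUnit : X → StoneCech X)) :=
        denseRange_stoneCechUnit q
      have hr : Set.range (stoneCechUnit : X → StoneCech X) =
          (stoneCechUnit : X → StoneCech X) '' C ∪ (stoneCechUnit : X → StoneCech X) '' Cᶜ := by
        rw [← image_union, union_compl_self, image_univ]
      rw [hr, closure_union] at hd
      rcases hd with hd | hd
      · exact hd
      · exact absurd hd hq
    have hsub : closure ((stoneCechUnit : X → StoneCech X) '' C) ⊆
        closure ((stoneCechUnit : X → StoneCech X) '' closure C) :=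
      closure_mono (image_mono subset_closure)
    exact aux_closure_image_subset_upsilon hpc (hsub hq1)
end

section
/- Let X be a Tychonoff space and let Z be a zero-set of X. Then cl_{βX} Z ⊆ int_{βX} υX if and only if Z is contained in a cozero-set of X whose closure in X is pseudocompact. -/
open Set Topology

section Aux
variable {X : Type*} [TopologicalSpace X]

lemma exists_stoneCech_extension {v : X → ℝ} (hv : Continuous v)
    (h01 : ∀ x, v x ∈ Icc (0:ℝ) 1) :
    ∃ V : C(StoneCech X, ℝ), (∀ x, V (stoneCechUnit x) = v x) ∧ ∀ p, V p ∈ Icc (0:ℝ) 1 := by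
  have hc : Continuous (fun x => (⟨v x, h01 x⟩ : Icc (0:ℝ) 1)) := hv.subtype_mk _
  refine ⟨⟨fun p => ((stoneCechExtend hc p : Icc (0:ℝ) 1) : ℝ),
    continuous_subtype_val.comp (continuous_stoneCechExtend hc)⟩, fun x => ?_, fun p => ?_⟩
  · have h := congrFun (stoneCechExtend_extends hc) x
    simp only [Function.comp_apply] at h
    simp [h]
  · exact (stoneCechExtend hc p).2

lemma closure_image_subset_upsilonSet {A : Set X}
    (hA : IsPseudocompactSet A) :
    closure ((stoneCechUnit : X → StoneCech X) '' A) ⊆ upsilonSet X := by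
  intro p hp
  rintro Zb ⟨F, rfl⟩ hpZ
  by_contra hne
  rw [Set.not_nonempty_iff_eq_empty] at hne
  have hFx : ∀ x : X, F (stoneCechUnit x) ≠ 0 := fun x hx =>
    (Set.eq_empty_iff_forall_notMem.mp hne (stoneCechUnit x)) ⟨hx, x, rfl⟩
  have hφc : Continuous (fun a : A => (|F (stoneCechUnit a.1)|)⁻¹) := by
    apply Continuous.inv₀
    · exact continuous_abs.comp (F.continuous.comp
        (continuous_stoneCechUnit.comp continuous_subtype_val))
    · intro a; simpa using hFx a.1
  obtain ⟨M, hM⟩ := hA ⟨_, hφc⟩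
  have key : ∀ a : A, (M+1)⁻¹ ≤ |F (stoneCechUnit a.1)| := by
    intro a
    have h1 : 0 < |F (stoneCechUnit a.1)| := abs_pos.mpr (hFx a.1)
    have h2 : (|F (stoneCechUnit a.1)|)⁻¹ ≤ M := le_trans (le_abs_self _) (hM a)
    have h3 : 0 < M := lt_of_lt_of_le (inv_pos.mpr h1) h2
    have hb : |F (stoneCechUnit a.1)| * (|F (stoneCechUnit a.1)|)⁻¹ = 1 :=
      mul_inv_cancel₀ h1.ne'
    rw [inv_eq_one_div, div_le_iff₀ (by linarith)]
    nlinarith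
  have hcl : closure ((stoneCechUnit : X → StoneCech X) '' A) ⊆ {q | (M+1)⁻¹ ≤ |F q|} := by
    apply closure_minimal
    · rintro _ ⟨a, ha, rfl⟩; exact key ⟨a, ha⟩
    · exact isClosed_le continuous_const (continuous_abs.comp F.continuous)
  have hAne : A.Nonempty := by
    rcases A.eq_empty_or_nonempty with h | h
    · rw [h] at hp; simp at hp
    · exact h
  obtain ⟨a₀, ha₀⟩ := hAne
  have h3 : 0 < M := lt_of_lt_of_le (inv_pos.mpr (abs_pos.mpr (hFx a₀)))
    (le_trans (le_abs_self _) (hM ⟨a₀, ha₀⟩))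
  have h4 := hcl hp
  have h5 : F p = 0 := hpZ
  simp only [mem_setOf_eq] at h4
  rw [h5] at h4
  simp only [abs_zero] at h4
  have : (0:ℝ) < (M+1)⁻¹ := by positivity
  linarith

lemma exists_bump [CompletelyRegularSpace X] {x₀ : X} {V : Set X}
    (hV : IsOpen V) (hx : x₀ ∈ V) :
    ∃ ψ : X → ℝ, Continuous ψ ∧ ψ x₀ = 1 ∧ (∀ x, x ∉ V → ψ x = 0) ∧
      ∀ x, ψ x ∈ Icc (0:ℝ) 1 := by
  obtain ⟨f, cf, hf0, hf1⟩ := CompletelyRegularSpace.completely_regular x₀ Vᶜ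
    hV.isClosed_compl (by simpa using hx)
  refine ⟨fun x => 1 - (f x : ℝ),
    continuous_const.sub (continuous_subtype_val.comp cf), ?_, ?_, ?_⟩
  · simp only []; rw [hf0]; norm_num
  · intro x hx'
    have h1 : f x = 1 := hf1 hx'
    simp only []; rw [h1]; norm_num
  · intro x
    have h1 := (f x).2.1
    have h2 := (f x).2.2
    exact ⟨by simpa using h2, by simpa using h1⟩

end Aux

/-- For a zero-set `Z` of a Tychonoff space `X`, `cl_{βX} Z ⊆ int_{βX} υX` if and only if
`Z` is contained in a cozero-set of `X` with pseudocompact closure. -/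
theorem closure_subset_interior_upsilon_iff (X : Type*) [TopologicalSpace X] [T2Space X]
    [CompletelyRegularSpace X] (Z : Set X) (hZ : IsZeroSet Z) :
    closure ((stoneCechUnit : X → StoneCech X) '' Z) ⊆ interior (upsilonSet X) ↔
      ∃ C : Set X, IsCozeroSet C ∧ IsPseudocompactSet (closure C) ∧ Z ⊆ C := by
  constructor
  · intro hcl
    have hdisj : Disjoint (closure ((stoneCechUnit : X → StoneCech X) '' Z))
        (interior (upsilonSet X))ᶜ :=
      disjoint_left.mpr fun q hq hq' => hq' (hcl hq)
    obtain ⟨G, hG0, hG1, hG01⟩ := exists_continuous_zero_one_of_isClosed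
      isClosed_closure (isOpen_interior.isClosed_compl) hdisj
    set g : X → ℝ := fun x => G (stoneCechUnit x) with hg
    have hgc : Continuous g := G.continuous.comp continuous_stoneCechUnit
    set C : Set X := {x | g x < 1/2} with hCdef
    have hCopen : IsOpen C := isOpen_lt hgc continuous_const
    have hZsubC : Z ⊆ C := by
      intro z hz
      have h1 := hG0 (subset_closure ⟨z, hz, rfl⟩)
      simp only [Pi.zero_apply] at h1
      show g z < 1/2
      show G (stoneCechUnit z) < 1/2
      rw [h1]
      norm_num
    refine ⟨C, ?_, ?_, hZsubC⟩
    · refine ⟨⟨fun x => max (1/2 - g x) 0,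
        (continuous_const.sub hgc).max continuous_const⟩, ?_⟩
      ext x
      simp only [ContinuousMap.coe_mk, mem_compl_iff, mem_preimage, mem_singleton_iff,
        hCdef, mem_setOf_eq]
      constructor
      · intro hx
        push_neg at hx
        exact max_eq_right (by linarith)
      · intro hx hlt
        have h2 := le_max_left (1/2 - g x) (0:ℝ)
        rw [hx] at h2
        linarith
    · -- pseudocompactness of closure C
      intro f
      by_contra hub
      push_neg at hub
      have hCA : C ⊆ closure C := subset_closure
      have hdense : ∀ (a : ↥(closure C)) (O : Set ↥(closure C)), IsOpen O → a ∈ O →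
          ∃ b : ↥(closure C), b ∈ O ∧ (b : X) ∈ C := by
        intro a O hO ha
        have hda : a ∈ closure (Subtype.val ⁻¹' C : Set ↥(closure C)) := by
          rw [closure_subtype]
          have himg : (Subtype.val '' (Subtype.val ⁻¹' C : Set ↥(closure C))) = C := by
            ext u
            constructor
            · rintro ⟨b, hb, rfl⟩
              exact hb
            · intro hu
              exact ⟨⟨u, hCA hu⟩, hu, rfl⟩
          rw [himg]
          exact a.2
        obtain ⟨b, hbO, hbC⟩ := mem_closure_iff.mp hda O hO ha
        exact ⟨b, hbO, hbC⟩
      have hC_unbdd : ∀ M : ℝ, ∃ x, ∃ hx : x ∈ C, M < |f ⟨x, hCA hx⟩| := by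
        intro M
        obtain ⟨a, ha⟩ := hub M
        have hO : IsOpen {b : ↥(closure C) | M < |f b|} :=
          isOpen_lt continuous_const (continuous_abs.comp f.continuous)
        obtain ⟨b, hbO, hbC⟩ := hdense a _ hO ha
        exact ⟨(b : X), hbC, hbO⟩
      classical
      set Fa : X → ℝ := fun x => if hx : x ∈ closure C then |f ⟨x, hx⟩| else 0 with hFa
      have hFaC : ∀ {x : X} (hx : x ∈ C), Fa x = |f ⟨x, hCA hx⟩| := by
        intro x hx
        simp only [hFa]
        rw [dif_pos (hCA hx)]
      choose xp hxpC hxpf using hC_unbdd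
      set y : ℕ → X := fun n => Nat.rec (xp 0) (fun _ p => xp (Fa p + 2)) n with hy
      have hyC : ∀ n, y n ∈ C := by
        intro n
        cases n with
        | zero => exact hxpC 0
        | succ k => exact hxpC _
      set c : ℕ → ℝ := fun n => Fa (y n) with hc
      have hstep : ∀ n, c n + 2 < c (n+1) := by
        intro n
        show Fa (y n) + 2 < Fa (y (n+1))
        have h1 : y (n+1) = xp (Fa (y n) + 2) := rfl
        rw [h1, hFaC (hxpC (Fa (y n) + 2))]
        exact hxpf (Fa (y n) + 2)
      have hcnn : ∀ n, 0 ≤ c n := by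
        intro n
        show 0 ≤ Fa (y n)
        rw [hFaC (hyC n)]
        exact abs_nonneg _
      have hc2n : ∀ n : ℕ, 2 * (n:ℝ) ≤ c n := by
        intro n
        induction n with
        | zero => simpa using hcnn 0
        | succ k ih =>
          have := hstep k
          push_cast
          push_cast at ih
          linarith
      have hmono : ∀ m n, m < n → c m + 2 < c n := by
        intro m n hmn
        induction n with
        | zero => omega
        | succ k ih =>
          rcases Nat.lt_succ_iff_lt_or_eq.mp hmn with h' | h'
          · have h2 := hstep k
            have := ih h'
            linarith
          · subst h'
            exact hstep m
      have hgap : ∀ m n, m ≠ n → 2 < |c m - c n| := by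
        intro m n hne
        rcases Nat.lt_or_ge m n with h | h
        · have := hmono m n h
          rw [abs_sub_comm, abs_of_pos (by linarith)]
          linarith
        · have h' : n < m := lt_of_le_of_ne h (Ne.symm hne)
          have := hmono n m h'
          rw [abs_of_pos (by linarith)]
          linarith
      have hιc : Continuous (fun b : ↥C => (⟨(b : X), hCA b.2⟩ : ↥(closure C))) :=
        continuous_subtype_val.subtype_mk _
      set U : ℕ → Set X := fun n =>
        Subtype.val '' {b : ↥C | |(|f ⟨(b : X), hCA b.2⟩|) - c n| < 1} with hU
      have hUopen : ∀ n, IsOpen (U n) := by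
        intro n
        apply hCopen.isOpenMap_subtype_val
        exact isOpen_lt (continuous_abs.comp
          ((continuous_abs.comp (f.continuous.comp hιc)).sub continuous_const))
          continuous_const
      have hUmem : ∀ {x : X} {n : ℕ}, x ∈ U n ↔ ∃ hx : x ∈ C, |(|f ⟨x, hCA hx⟩|) - c n| < 1 := by
        intro x n
        constructor
        · rintro ⟨b, hb, rfl⟩
          exact ⟨b.2, hb⟩
        · rintro ⟨hx, hlt⟩
          exact ⟨⟨x, hx⟩, hlt, rfl⟩
      have hUC : ∀ n, U n ⊆ C := by
        intro n x hx
        obtain ⟨hxC, -⟩ := hUmem.mp hx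
        exact hxC
      have hyU : ∀ n, y n ∈ U n := by
        intro n
        rw [hUmem]
        refine ⟨hyC n, ?_⟩
        have h1 : c n = |f ⟨y n, hCA (hyC n)⟩| := hFaC (hyC n)
        rw [← h1, sub_self, abs_zero]
        norm_num
      have hUdisj : ∀ m n, m ≠ n → ∀ x, x ∈ U m → x ∈ U n → False := by
        intro m n hne x hxm hxn
        obtain ⟨hxC, h1⟩ := hUmem.mp hxm
        obtain ⟨hxC', h2⟩ := hUmem.mp hxn
        have h3 := hgap m n hne
        have h4 : |c m - c n| ≤ |(|f ⟨x, hCA hxC⟩|) - c m| + |(|f ⟨x, hCA hxC⟩|) - c n| := by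
          have h5 := abs_sub_le (c m) (|f ⟨x, hCA hxC⟩|) (c n)
          rw [abs_sub_comm (c m) (|f ⟨x, hCA hxC⟩|)] at h5
          exact h5
        have h2' : |(|f ⟨x, hCA hxC⟩|) - c n| < 1 := h2
        linarith
      have hLF : ∀ z : X, ∃ t ∈ 𝓝 z, {n : ℕ | (U n ∩ t).Nonempty}.Finite := by
        intro z
        by_cases hz : z ∈ closure C
        · set fz : ℝ := |f (⟨z, hz⟩ : ↥(closure C))| with hfz
          have hQ : {b : ↥(closure C) | |(|f b|) - fz| < 1} ∈
              𝓝 (⟨z, hz⟩ : ↥(closure C)) := by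
            apply IsOpen.mem_nhds
            · exact isOpen_lt (continuous_abs.comp
                ((continuous_abs.comp f.continuous).sub continuous_const)) continuous_const
            · show |(|f (⟨z, hz⟩ : ↥(closure C))|) - fz| < 1
              rw [hfz, sub_self, abs_zero]
              norm_num
          rw [nhds_subtype_eq_comap] at hQ
          obtain ⟨t, ht, hsub⟩ := Filter.mem_comap.mp hQ
          refine ⟨t, ht, ?_⟩
          apply Set.Finite.subset (Set.finite_Iio ⌈(fz + 4)/2⌉₊)
          rintro n ⟨x, hxU, hxt⟩
          obtain ⟨hxC, h1⟩ := hUmem.mp hxU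
          have h2 : (⟨x, hCA hxC⟩ : ↥(closure C)) ∈ Subtype.val ⁻¹' t := hxt
          have h3 := hsub h2
          simp only [mem_setOf_eq] at h3
          have h4 := hc2n n
          rw [abs_lt] at h1 h3
          simp only [mem_Iio]
          rw [Nat.lt_ceil]
          linarith [h1.1, h1.2, h3.1, h3.2]
        · refine ⟨(closure C)ᶜ, (isClosed_closure.isOpen_compl).mem_nhds hz, ?_⟩
          apply Set.Finite.subset Set.finite_empty
          rintro n ⟨x, hxU, hxc⟩
          exact absurd (hCA (hUC n hxU)) hxc
      choose ψ hψc hψ1 hψ0 hψ01 using fun n => exists_bump (hUopen n) (hyU n)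
      set a : ℕ → ℝ := fun n => 1 - 1/(n+1) with ha
      have hapos : ∀ n : ℕ, 0 ≤ a n ∧ a n < 1 := by
        intro n
        have h1 : (0:ℝ) < (n:ℝ) + 1 := by positivity
        constructor
        · show (0:ℝ) ≤ 1 - 1/((n:ℝ)+1)
          have h2 : 1/((n:ℝ)+1) ≤ 1 := by
            rw [div_le_one h1]
            linarith [Nat.cast_nonneg (α := ℝ) n]
          linarith
        · show (1:ℝ) - 1/((n:ℝ)+1) < 1
          have h2 : 0 < 1/((n:ℝ)+1) := by positivity
          linarith
      set S : X → ℝ := fun z => ∑' n, a n * ψ n z with hS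
      have hterm0 : ∀ (z : X) (n : ℕ), z ∉ U n → a n * ψ n z = 0 := by
        intro z n hz
        rw [hψ0 n z hz, mul_zero]
      have hSloc : ∀ z : X, ∃ t ∈ 𝓝 z, ∃ s : Finset ℕ,
          ∀ x ∈ t, S x = ∑ n ∈ s, a n * ψ n x := by
        intro z
        obtain ⟨t, ht, htf⟩ := hLF z
        refine ⟨t, ht, htf.toFinset, fun x hx => ?_⟩
        apply tsum_eq_sum
        intro n hn
        apply hterm0
        intro hxU
        exact hn (htf.mem_toFinset.mpr ⟨x, hxU, hx⟩)
      have hScont : Continuous S := by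
        rw [continuous_iff_continuousAt]
        intro z
        obtain ⟨t, ht, s, hts⟩ := hSloc z
        have hc1 : ContinuousAt (fun x => ∑ n ∈ s, a n * ψ n x) z :=
          (continuous_finset_sum s (fun n _ => continuous_const.mul (hψc n))).continuousAt
        apply hc1.congr
        apply Filter.eventuallyEq_of_mem ht
        intro x hx
        exact (hts x hx).symm
      have hSmem : ∀ (m : ℕ) (z : X), z ∈ U m → S z = a m * ψ m z := by
        intro m z hz
        apply tsum_eq_single
        intro n hn
        apply hterm0
        intro hzn
        exact hUdisj n m hn z hzn hz
      have hSout : ∀ z : X, (∀ n, z ∉ U n) → S z = 0 := by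
        intro z hz
        have h1 : ∀ n, a n * ψ n z = 0 := fun n => hterm0 z n (hz n)
        calc S z = ∑' (_ : ℕ), (0:ℝ) := tsum_congr h1
        _ = 0 := tsum_zero
      have hSrange : ∀ z : X, 0 ≤ S z ∧ S z < 1 := by
        intro z
        by_cases hz : ∃ m, z ∈ U m
        · obtain ⟨m, hm⟩ := hz
          rw [hSmem m z hm]
          obtain ⟨ha0, ha1⟩ := hapos m
          obtain ⟨hp0, hp1⟩ := hψ01 m z
          constructor
          · exact mul_nonneg ha0 hp0
          · calc a m * ψ m z ≤ a m * 1 := by nlinarith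
            _ < 1 := by linarith
        · push_neg at hz
          rw [hSout z hz]
          norm_num
      set w : X → ℝ := fun z => 1 - S z with hw
      have hwc : Continuous w := continuous_const.sub hScont
      have hw01 : ∀ z, w z ∈ Icc (0:ℝ) 1 := by
        intro z
        obtain ⟨h0, h1⟩ := hSrange z
        constructor
        · show (0:ℝ) ≤ 1 - S z
          linarith
        · show (1:ℝ) - S z ≤ 1
          linarith
      have hwpos : ∀ z, 0 < w z := by
        intro z
        have := (hSrange z).2
        show 0 < 1 - S z
        linarith
      have hwy : ∀ n : ℕ, w (y n) = 1/((n:ℝ)+1) := by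
        intro n
        show 1 - S (y n) = 1/((n:ℝ)+1)
        rw [hSmem n (y n) (hyU n), hψ1 n, mul_one]
        show 1 - (1 - 1/((n:ℝ)+1)) = 1/((n:ℝ)+1)
        ring
      obtain ⟨Wb, hWbe, hWb01⟩ := exists_stoneCech_extension hwc hw01
      set T : ℕ → Set (StoneCech X) := fun n =>
        closure {q | ∃ m, n ≤ m ∧ q = stoneCechUnit (y m)} with hT
      have hTne : ∀ n, (T n).Nonempty := fun n =>
        ⟨stoneCechUnit (y n), subset_closure ⟨n, le_refl n, rfl⟩⟩
      have hTdec : ∀ n, T (n+1) ⊆ T n := by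
        intro n
        apply closure_mono
        rintro q ⟨m, hm, rfl⟩
        exact ⟨m, by omega, rfl⟩
      obtain ⟨p, hp⟩ := IsCompact.nonempty_iInter_of_sequence_nonempty_isCompact_isClosed
        T hTdec hTne isClosed_closure.isCompact (fun n => isClosed_closure)
      rw [mem_iInter] at hp
      have hWbple : ∀ n : ℕ, Wb p ≤ 1/((n:ℝ)+1) := by
        intro n
        have hsub2 : T n ⊆ {q | Wb q ≤ 1/((n:ℝ)+1)} := by
          apply closure_minimal
          · rintro q ⟨m, hm, rfl⟩
            simp only [mem_setOf_eq]
            rw [hWbe, hwy]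
            apply one_div_le_one_div_of_le (by positivity)
            have : (n:ℝ) ≤ (m:ℝ) := Nat.cast_le.mpr hm
            linarith
          · exact isClosed_le Wb.continuous continuous_const
        exact hsub2 (hp n)
      have hWbp0 : Wb p = 0 := by
        by_contra hne0
        have hpos : 0 < Wb p := lt_of_le_of_ne (hWb01 p).1 (Ne.symm hne0)
        obtain ⟨n, hn⟩ := exists_nat_gt (1 / Wb p)
        have h1 := hWbple n
        have h2 : 1 / Wb p < (n:ℝ) + 1 := by linarith
        rw [div_lt_iff₀ hpos] at h2
        have h3 : Wb p ≤ 1/((n:ℝ)+1) := h1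
        rw [le_div_iff₀ (by positivity)] at h3
        nlinarith
      have hpG : G p ≤ 1/2 := by
        have hsub3 : T 0 ⊆ {q | G q ≤ 1/2} := by
          apply closure_minimal
          · rintro q ⟨m, _, rfl⟩
            simp only [mem_setOf_eq]
            exact le_of_lt (hyC m)
          · exact isClosed_le G.continuous continuous_const
        exact hsub3 (hp 0)
      have hpυ : p ∈ upsilonSet X := by
        have hpint : p ∈ interior (upsilonSet X) := by
          by_contra hni
          have h1 := hG1 (show p ∈ (interior (upsilonSet X))ᶜ from hni)
          simp only [Pi.one_apply] at h1
          rw [h1] at hpG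
          norm_num at hpG
        exact interior_subset hpint
      obtain ⟨q, hqZ, hqR⟩ := hpυ (⇑Wb ⁻¹' {0}) ⟨Wb, rfl⟩ (by simpa using hWbp0)
      obtain ⟨x, rfl⟩ := hqR
      have hwx : w x = 0 := by
        rw [← hWbe x]
        exact hqZ
      exact absurd hwx (hwpos x).ne'
  · rintro ⟨C, ⟨k, hk⟩, hpc, hZC⟩
    obtain ⟨f, hf⟩ := hZ
    have hden : ∀ x, 0 < |f x| + |k x| := by
      intro x
      rcases lt_or_eq_of_le (add_nonneg (abs_nonneg (f x)) (abs_nonneg (k x))) with h | h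
      · linarith
      · exfalso
        have hf0 : f x = 0 := by
          have := abs_nonneg (f x); have := abs_nonneg (k x)
          have : |f x| = 0 := by linarith
          simpa using this
        have hk0 : k x = 0 := by
          have := abs_nonneg (f x); have := abs_nonneg (k x)
          have : |k x| = 0 := by linarith
          simpa using this
        have hxZ : x ∈ Z := by rw [hf]; simpa using hf0
        have hxC : x ∈ Cᶜ := by rw [hk]; simpa using hk0
        exact hxC (hZC hxZ)
    set h : X → ℝ := fun x => |f x| / (|f x| + |k x|) with hh
    have hhc : Continuous h := by
      apply Continuous.div
      · exact continuous_abs.comp f.continuous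
      · exact (continuous_abs.comp f.continuous).add (continuous_abs.comp k.continuous)
      · intro x; exact (hden x).ne'
    have hh01 : ∀ x, h x ∈ Icc (0:ℝ) 1 := by
      intro x
      constructor
      · exact div_nonneg (abs_nonneg _) (hden x).le
      · rw [div_le_one (hden x)]
        linarith [abs_nonneg (k x)]
    have hhZ : ∀ x ∈ Z, h x = 0 := by
      intro x hx
      have : f x = 0 := by rw [hf] at hx; simpa using hx
      simp [hh, this]
    have hhC : ∀ x ∈ Cᶜ, h x = 1 := by
      intro x hx
      have hk0 : k x = 0 := by rw [hk] at hx; simpa using hx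
      have hf0 : f x ≠ 0 := by
        intro h0
        exact hx (hZC (by rw [hf]; simpa using h0))
      simp only [hh, hk0, abs_zero, add_zero]
      exact div_self (by simpa using hf0)
    obtain ⟨H, hHe, hH01⟩ := exists_stoneCech_extension hhc hh01
    set W : Set (StoneCech X) := {p | H p < 1/2} with hW
    have hWopen : IsOpen W := isOpen_lt H.continuous continuous_const
    have hKW : closure ((stoneCechUnit : X → StoneCech X) '' Z) ⊆ W := by
      have h1 : closure ((stoneCechUnit : X → StoneCech X) '' Z) ⊆ {p | H p ≤ 0} := by
        apply closure_minimal
        · rintro _ ⟨z, hz, rfl⟩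
          simp only [mem_setOf_eq, hHe]
          exact le_of_eq (hhZ z hz)
        · exact isClosed_le H.continuous continuous_const
      intro p hp
      have h2 : H p ≤ 0 := h1 hp
      show H p < 1/2
      linarith
    have hWυ : W ⊆ upsilonSet X := by
      intro p hpW
      have hpC : p ∈ closure ((stoneCechUnit : X → StoneCech X) '' closure C) := by
        rw [mem_closure_iff]
        intro O hO hpO
        obtain ⟨x, hx⟩ := denseRange_stoneCechUnit.exists_mem_open (hO.inter hWopen)
          ⟨p, hpO, hpW⟩
        have hxC : x ∈ C := by
          by_contra hxc
          have := hhC x hxc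
          have h2 : H (stoneCechUnit x) < 1/2 := hx.2
          rw [hHe, this] at h2
          norm_num at h2
        exact ⟨stoneCechUnit x, hx.1, ⟨x, subset_closure hxC, rfl⟩⟩
      exact closure_image_subset_upsilonSet hpc hpC
    exact subset_trans hKW (subset_trans (interior_maximal hWυ hWopen) subset_rfl)
end

section
/- Let X be a Tychonoff space. Then ζX = X if and only if X is pseudocompact. -/
open Set Topology

/-- `ζX = X` if and only if `X` is pseudocompact. -/
theorem zetaSet_eq_self_iff (X : Type*) [TopologicalSpace X] [T2Space X]
    [CompletelyRegularSpace X] :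
    zetaSet X = Set.range (stoneCechUnit : X → StoneCech X) ↔ IsPseudocompact X := by
  constructor
  · intro h f
    by_cases hX : IsEmpty X
    · exact ⟨0, fun y => (hX.false y).elim⟩
    rw [not_isEmpty_iff] at hX
    set g : X → ℝ := fun x => (1 + |f x|)⁻¹ with hg
    have hgpos : ∀ x, 0 < g x := fun x => inv_pos.2 (by positivity)
    have hgle : ∀ x, g x ≤ 1 := fun x => by
      rw [hg]
      rw [inv_le_one_iff₀]
      right
      have := abs_nonneg (f x); linarith
    have hgc : Continuous g := by
      have hc : Continuous fun x : X => 1 + |f x| := by fun_prop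
      exact hc.inv₀ (fun x => by positivity)
    haveI : CompactSpace (Icc (0:ℝ) 1) := isCompact_iff_compactSpace.mp isCompact_Icc
    let φ : X → Icc (0:ℝ) 1 := fun x => ⟨g x, ⟨(hgpos x).le, hgle x⟩⟩
    have hφ : Continuous φ := hgc.subtype_mk _
    let G := stoneCechExtend hφ
    have hG : Continuous G := continuous_stoneCechExtend hφ
    let F : C(StoneCech X, ℝ) := ⟨fun q => (G q : ℝ), continuous_subtype_val.comp hG⟩
    have hFunit : ∀ x, F (stoneCechUnit x) = g x := fun x => by
      have h1 : G (stoneCechUnit x) = φ x := congrFun (stoneCechExtend_extends hφ) x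
      simp only [F, ContinuousMap.coe_mk, h1, φ]
    have hFpos : ∀ q, 0 < F q := by
      intro q
      have h0 : 0 ≤ F q := (G q).2.1
      rcases h0.lt_or_eq with hlt | heq
      · exact hlt
      exfalso
      have hqZ : q ∈ (F ⁻¹' {0} : Set (StoneCech X)) := by simp [← heq]
      have hdisj : (F ⁻¹' {0} : Set (StoneCech X)) ∩ Set.range (stoneCechUnit : X → StoneCech X) = ∅ := by
        ext r
        simp only [mem_inter_iff, mem_preimage, mem_singleton_iff, mem_empty_iff_false, iff_false,
          not_and]
        rintro hr ⟨x, rfl⟩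
        exact absurd hr (by rw [hFunit x]; exact (hgpos x).ne')
      have hnot : q ∉ upsilonSet X := by
        intro hq
        have := hq (F ⁻¹' {0}) ⟨F, rfl⟩ hqZ
        rw [hdisj] at this
        exact this.ne_empty rfl
      have hq : q ∈ zetaSet X := Or.inr (subset_closure hnot)
      rw [h] at hq
      have : q ∈ (F ⁻¹' {0} : Set (StoneCech X)) ∩ Set.range (stoneCechUnit : X → StoneCech X) :=
        ⟨hqZ, hq⟩
      rw [hdisj] at this
      exact this
    haveI : Nonempty (StoneCech X) := ⟨stoneCechUnit hX.some⟩
    obtain ⟨q₀, -, hq₀⟩ := isCompact_univ.exists_isMinOn univ_nonempty F.continuous.continuousOn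
    set ε := F q₀ with hε
    have hεpos : 0 < ε := hFpos q₀
    refine ⟨ε⁻¹, fun x => ?_⟩
    have h1 : ε ≤ g x := by rw [← hFunit x]; exact hq₀ (mem_univ _)
    have h2 : (g x)⁻¹ ≤ ε⁻¹ := inv_anti₀ hεpos h1
    have h3 : (g x)⁻¹ = 1 + |f x| := by rw [hg]; exact inv_inv _
    have := abs_nonneg (f x)
    linarith [h2, h3.symm.le]
  · intro hP
    have hups : upsilonSet X = univ := by
      ext p
      simp only [mem_univ, iff_true]
      rintro Z ⟨F, rfl⟩ hpZ
      by_contra hemp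
      rw [not_nonempty_iff_eq_empty] at hemp
      have hne : ∀ x : X, F (stoneCechUnit x) ≠ 0 := by
        intro x hx
        have : stoneCechUnit x ∈ (F ⁻¹' {0}) ∩ Set.range (stoneCechUnit : X → StoneCech X) :=
          ⟨hx, ⟨x, rfl⟩⟩
        rw [hemp] at this
        exact this
      haveI hXne : Nonempty X := by
        by_contra hO
        rw [not_nonempty_iff] at hO
        have : (Set.range (stoneCechUnit : X → StoneCech X)) = ∅ := range_eq_empty _
        have hd := denseRange_stoneCechUnit (α := X) p
        rw [this, closure_empty] at hd
        exact hd
      let g : C(X, ℝ) := ⟨fun x => (F (stoneCechUnit x))⁻¹,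
        (F.continuous.comp continuous_stoneCechUnit).inv₀ hne⟩
      obtain ⟨M, hM⟩ := hP g
      obtain ⟨x₀⟩ := hXne
      have hMpos : 0 < M :=
        lt_of_lt_of_le (abs_pos.2 (inv_ne_zero (hne x₀))) (hM x₀)
      have key : ∀ x : X, M⁻¹ ≤ |F (stoneCechUnit x)| := by
        intro x
        have hax : 0 < |F (stoneCechUnit x)| := abs_pos.2 (hne x)
        have := hM x
        rw [show |g x| = |F (stoneCechUnit x)|⁻¹ by simp [g, abs_inv]] at this
        exact (inv_le_comm₀ hax hMpos).mp this
      have hcl : IsClosed {q : StoneCech X | M⁻¹ ≤ |F q|} :=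
        isClosed_le continuous_const F.continuous.abs
      have hsub : Set.range (stoneCechUnit : X → StoneCech X) ⊆ {q | M⁻¹ ≤ |F q|} := by
        rintro _ ⟨x, rfl⟩; exact key x
      have hall : (univ : Set (StoneCech X)) ⊆ {q | M⁻¹ ≤ |F q|} := by
        rw [← (denseRange_stoneCechUnit (α := X)).closure_range]
        exact closure_minimal hsub hcl
      have hp := hall (mem_univ p)
      simp only [mem_setOf_eq] at hp
      have : |F p| = 0 := by rw [show F p = 0 from hpZ]; simp
      rw [this] at hp
      exact absurd hp (not_le.mpr (inv_pos.2 hMpos))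
    rw [zetaSet, hups, compl_univ, closure_empty, union_empty]
end

section
/- Let X be a Tychonoff space. Then ζX = βX if and only if there exists no cozero-set of X with pseudocompact closure in X containing a non-compact zero-set of X. -/
open Set Topology

noncomputable section ZetaAux

variable {X : Type*} [TopologicalSpace X]

lemma continuous_of_isClosed_cover {Y : Type*} [TopologicalSpace Y] {f : X → Y} {s t : Set X}
    (hs : IsClosed s) (ht : IsClosed t) (hcov : s ∪ t = univ)
    (h1 : ContinuousOn f s) (h2 : ContinuousOn f t) : Continuous f := by
  rw [continuous_iff_isClosed]
  intro K hK
  have e : f ⁻¹' K = (s ∩ f ⁻¹' K) ∪ (t ∩ f ⁻¹' K) := by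
    rw [← union_inter_distrib_right, hcov, univ_inter]
  rw [e]
  exact (h1.preimage_isClosed_of_isClosed hs hK).union (h2.preimage_isClosed_of_isClosed ht hK)


lemma isEmbedding_unit' [T2Space X] [CompletelyRegularSpace X] :
    Topology.IsEmbedding (stoneCechUnit : X → StoneCech X) := by
  constructor
  · rw [Topology.isInducing_iff_nhds]
    intro x
    refine le_antisymm (Filter.tendsto_iff_comap.mp (continuous_stoneCechUnit.tendsto x)) ?_
    intro U hU
    rw [Filter.mem_comap]
    rcases mem_nhds_iff.1 hU with ⟨V, hVU, hVopen, hxV⟩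
    obtain ⟨f, hfc, hfx, hfV⟩ :=
      CompletelyRegularSpace.completely_regular x Vᶜ hVopen.isClosed_compl (by simpa)
    refine ⟨(fun q => (stoneCechExtend hfc q).1) ⁻¹' Iio (1/2), ?_, ?_⟩
    · apply (isOpen_Iio.preimage
        (continuous_subtype_val.comp (continuous_stoneCechExtend hfc))).mem_nhds
      have h1 : stoneCechExtend hfc (stoneCechUnit x) = f x := congrFun (stoneCechExtend_extends hfc) x
      show (stoneCechExtend hfc (stoneCechUnit x)).1 ∈ Iio (1/2 : ℝ)
      rw [h1, hfx]
      norm_num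
    · intro y hy
      have h1 : stoneCechExtend hfc (stoneCechUnit y) = f y := congrFun (stoneCechExtend_extends hfc) y
      by_contra hyU
      have hyV : y ∈ Vᶜ := fun hyV => hyU (hVU hyV)
      have h2 : f y = 1 := hfV hyV
      have h3 : (stoneCechExtend hfc (stoneCechUnit y)).1 < 1/2 := hy
      rw [h1, h2] at h3
      norm_num at h3
  · intro x y hxy
    by_contra hne
    obtain ⟨f, hfc, hfx, hfy⟩ :=
      CompletelyRegularSpace.completely_regular x {y} isClosed_singleton (by simpa)
    have h1 : f x = f y := eq_if_stoneCechUnit_eq hfc hxy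
    have h2 : f y = 1 := hfy rfl
    rw [hfx, h2] at h1
    exact zero_ne_one (congrArg Subtype.val h1)

lemma mandelker {C : Set X} (hC : IsCozeroSet C) (k : C(↥(closure C), ℝ))
    (hk : ∀ M : ℝ, ∃ a, M < |k a|) :
    ∃ f : C(X, ℝ), ∀ M : ℝ, ∃ x ∈ C, M < f x := by
  classical
  obtain ⟨c, hc⟩ := hC
  have hmemC : ∀ x, x ∈ C ↔ c x ≠ 0 := by
    intro x
    constructor
    · intro hx hcx
      have hxc : x ∈ Cᶜ := by rw [hc]; exact hcx
      exact hxc hx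
    · intro h
      by_contra hx
      have hxc : x ∈ Cᶜ := hx
      rw [hc] at hxc
      exact h hxc
  set g : X → ℝ := fun x => min |c x| 1 with hgdef
  have hgcont : Continuous g := (continuous_abs.comp c.continuous).min continuous_const
  have hg0 : ∀ x, 0 ≤ g x := fun x => le_min (abs_nonneg _) one_pos.le
  have hg1 : ∀ x, g x ≤ 1 := fun x => min_le_right _ _
  have hgC : ∀ x, x ∈ C ↔ 0 < g x := by
    intro x
    rw [hmemC]
    constructor
    · intro h; exact lt_min (abs_pos.2 h) one_pos
    · intro h hcx
      rw [hgdef] at h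
      simp only [hcx, abs_zero] at h
      have : min (0:ℝ) 1 = 0 := min_eq_left one_pos.le
      rw [this] at h
      exact lt_irrefl _ h
  -- density of C in closure C for values of k
  have hdense : ∀ M : ℝ, ∃ x : X, ∃ hx : x ∈ C, M < |k ⟨x, subset_closure hx⟩| := by
    intro M
    obtain ⟨a, ha⟩ := hk M
    have hopen : IsOpen {b : ↥(closure C) | M < |k b|} :=
      isOpen_lt continuous_const k.continuous.abs
    obtain ⟨V, hVopen, hVeq⟩ := isOpen_induced_iff.1 hopen
    have haV : (a : X) ∈ V := by
      have : a ∈ Subtype.val ⁻¹' V := by rw [hVeq]; exact ha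
      exact this
    obtain ⟨x, hxV, hxC⟩ := mem_closure_iff.1 a.2 V hVopen haV
    refine ⟨x, hxC, ?_⟩
    have : (⟨x, subset_closure hxC⟩ : ↥(closure C)) ∈ Subtype.val ⁻¹' V := hxV
    rw [hVeq] at this
    exact this
  -- auxiliary |k| on X
  set K' : X → ℝ := fun x => if hx : x ∈ closure C then |k ⟨x, hx⟩| else 0 with hK'def
  have hK'val : ∀ (x) (hx : x ∈ closure C), K' x = |k ⟨x, hx⟩| := fun x hx => dif_pos hx
  set W : ℕ → Set X := fun n => {x | x ∈ C ∧ (n:ℝ) * 2 ^ n < K' x} with hWdef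
  have hWne : ∀ n, (W n).Nonempty := by
    intro n
    obtain ⟨x, hx, hlt⟩ := hdense ((n:ℝ) * 2 ^ n)
    exact ⟨x, hx, by rw [hK'val x (subset_closure hx)]; exact hlt⟩
  set σ : ℕ → ℝ := fun n => sSup (g '' W n) with hσdef
  have hbdd : ∀ n, BddAbove (g '' W n) := fun n =>
    ⟨1, by rintro _ ⟨x, _, rfl⟩; exact hg1 x⟩
  have hσpos : ∀ n, 0 < σ n := by
    intro n
    obtain ⟨x, hx⟩ := hWne n
    exact lt_of_lt_of_le ((hgC x).1 hx.1) (le_csSup (hbdd n) ⟨x, hx, rfl⟩)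
  have hxn : ∀ n : ℕ, ∃ x, x ∈ W n ∧ σ n / 2 < g x := by
    intro n
    have hlt : σ n / 2 < σ n := by linarith [hσpos n]
    obtain ⟨_, ⟨x, hx, rfl⟩, hgt⟩ :=
      exists_lt_of_lt_csSup ((hWne n).image g) hlt
    exact ⟨x, hx, hgt⟩
  -- the damping function θ
  set θ : ℝ → ℝ := fun t => ∑' n : ℕ, (1/2 : ℝ) ^ n * min 1 (2 * max t 0 / σ n) with hθdef
  have hterm_nonneg : ∀ (n : ℕ) (t : ℝ), 0 ≤ (1/2:ℝ)^n * min 1 (2 * max t 0 / σ n) := by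
    intro n t
    apply mul_nonneg (by positivity)
    exact le_min (by norm_num) (div_nonneg (by positivity) (hσpos n).le)
  have hterm_le : ∀ (n : ℕ) (t : ℝ), (1/2:ℝ)^n * min 1 (2 * max t 0 / σ n) ≤ (1/2:ℝ)^n :=
    fun n t => mul_le_of_le_one_right (by positivity) (min_le_left _ _)
  have hθsummable : ∀ t, Summable fun n : ℕ => (1/2:ℝ)^n * min 1 (2 * max t 0 / σ n) :=
    fun t => Summable.of_nonneg_of_le (fun n => hterm_nonneg n t) (fun n => hterm_le n t)
      summable_geometric_two
  have hθcont : Continuous θ := by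
    apply continuous_tsum (u := fun n : ℕ => (1/2:ℝ)^n)
    · intro n
      exact continuous_const.mul (continuous_const.min
        ((continuous_const.mul (continuous_id.max continuous_const)).div_const (σ n)))
    · exact summable_geometric_two
    · intro n t
      rw [Real.norm_eq_abs, abs_of_nonneg (hterm_nonneg n t)]
      exact hterm_le n t
  have hθ0 : θ 0 = 0 := by
    have hzero : ∀ n : ℕ, (1/2:ℝ)^n * min 1 (2 * max (0:ℝ) 0 / σ n) = 0 := by
      intro n
      rw [max_self, mul_zero, zero_div, min_eq_right one_pos.le, mul_zero]
    rw [hθdef]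
    simp only [hzero, tsum_zero]
  have hθlower : ∀ (n : ℕ) (t : ℝ), σ n / 2 < t → (1/2:ℝ)^n ≤ θ t := by
    intro n t ht
    have htpos : 0 < t := lt_of_le_of_lt (by linarith [hσpos n] : (0:ℝ) ≤ σ n / 2) ht
    have hmax : max t 0 = t := max_eq_left htpos.le
    have h1 : (1:ℝ) ≤ 2 * max t 0 / σ n := by
      rw [hmax, le_div_iff₀ (hσpos n)]
      linarith
    have hterm : (1/2:ℝ)^n * min 1 (2 * max t 0 / σ n) = (1/2:ℝ)^n := by
      rw [min_eq_left h1, mul_one]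
    calc (1/2:ℝ)^n = (1/2:ℝ)^n * min 1 (2 * max t 0 / σ n) := hterm.symm
      _ ≤ θ t := Summable.le_tsum (hθsummable t) n (fun m _ => hterm_nonneg m t)
  have hθnonneg : ∀ t, 0 ≤ θ t := fun t => tsum_nonneg (fun n => hterm_nonneg n t)
  -- the function F
  set F : X → ℝ := fun x => if hx : x ∈ closure C then θ (g x) * |k ⟨x, hx⟩| else 0 with hFdef
  have hCccl : IsClosed Cᶜ := by
    rw [hc]
    exact isClosed_singleton.preimage c.continuous
  have hFA : ContinuousOn F (closure C) := by
    rw [continuousOn_iff_continuous_restrict]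
    have he : (closure C).domRestrict F = fun a : ↥(closure C) => θ (g ↑a) * |k a| := by
      funext a
      simp only [Set.domRestrict, hFdef]
      rw [dif_pos a.2]
    rw [he]
    exact (hθcont.comp (hgcont.comp continuous_subtype_val)).mul k.continuous.abs
  have hFzero : ∀ x ∈ Cᶜ, F x = (fun _ => (0:ℝ)) x := by
    intro x hx
    by_cases hxc : x ∈ closure C
    · have hgx : g x = 0 :=
        le_antisymm (not_lt.1 fun h => hx ((hgC x).2 h)) (hg0 x)
      simp only [hFdef]
      rw [dif_pos hxc, hgx, hθ0, zero_mul]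
    · simp only [hFdef]
      rw [dif_neg hxc]
  have hFcont : Continuous F := by
    apply continuous_of_isClosed_cover isClosed_closure hCccl
    · rw [eq_univ_iff_forall]
      intro x
      by_cases hx : x ∈ C
      · exact Or.inl (subset_closure hx)
      · exact Or.inr hx
    · exact hFA
    · exact continuousOn_const.congr hFzero
  refine ⟨⟨F, hFcont⟩, ?_⟩
  intro M
  obtain ⟨n, hn⟩ := exists_nat_gt M
  obtain ⟨x, hxW, hxg⟩ := hxn n
  refine ⟨x, hxW.1, ?_⟩
  have hxcl : x ∈ closure C := subset_closure hxW.1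
  have hFx : (⟨F, hFcont⟩ : C(X,ℝ)) x = θ (g x) * |k ⟨x, hxcl⟩| := by
    show F x = _
    simp only [hFdef]
    rw [dif_pos hxcl]
  have h1 : (1/2:ℝ)^n ≤ θ (g x) := hθlower n (g x) hxg
  have h2 : (n:ℝ) * 2^n < |k ⟨x, hxcl⟩| := by
    have := hxW.2
    rwa [hK'val x hxcl] at this
  have h3 : (1/2:ℝ)^n * ((n:ℝ) * 2^n) < θ (g x) * |k ⟨x, hxcl⟩| :=
    mul_lt_mul' h1 h2 (by positivity) (lt_of_lt_of_le (by positivity) h1)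
  have h4 : (1/2:ℝ)^n * ((n:ℝ) * 2^n) = (n:ℝ) := by
    rw [one_div, inv_pow]
    field_simp
  rw [hFx]
  calc M < (n:ℝ) := hn
    _ = (1/2:ℝ)^n * ((n:ℝ) * 2^n) := h4.symm
    _ < θ (g x) * |k ⟨x, hxcl⟩| := h3

lemma bounded_of_compact_subset_upsilon (f : C(X, ℝ)) {K : Set (StoneCech X)}
    (hK : IsCompact K) (hKυ : K ⊆ upsilonSet X) :
    ∃ M : ℝ, ∀ x : X, stoneCechUnit x ∈ K → |f x| ≤ M := by
  set s : ℝ → ℝ := fun y => y / (1 + |y|) with hs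
  have hscont : Continuous s :=
    continuous_id.div (continuous_const.add continuous_abs) (fun y => by positivity)
  have hsabs : ∀ y, |s y| < 1 := by
    intro y
    rw [hs]
    simp only
    rw [abs_div, abs_of_pos (by positivity : (0:ℝ) < 1 + |y|), div_lt_one (by positivity)]
    linarith [abs_nonneg y]
  have hsmem : ∀ y, s y ∈ Icc (-1:ℝ) 1 := fun y =>
    ⟨by linarith [(abs_lt.1 (hsabs y)).1], by linarith [(abs_lt.1 (hsabs y)).2]⟩
  have hf₁cont : Continuous (fun x => (⟨s (f x), hsmem _⟩ : ↥(Icc (-1:ℝ) 1))) :=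
    (hscont.comp f.continuous).subtype_mk _
  set F₁ : StoneCech X → ℝ := fun q => (stoneCechExtend hf₁cont q).1 with hF₁
  have hF₁cont : Continuous F₁ :=
    continuous_subtype_val.comp (continuous_stoneCechExtend hf₁cont)
  have hF₁unit : ∀ x : X, F₁ (stoneCechUnit x) = s (f x) := fun x =>
    congrArg Subtype.val (congrFun (stoneCechExtend_extends hf₁cont) x)
  have habs_le : ∀ q, |F₁ q| ≤ 1 := by
    intro q
    have h := (stoneCechExtend hf₁cont q).2
    rw [abs_le]
    exact ⟨h.1, h.2⟩
  have hlt : ∀ q ∈ K, |F₁ q| < 1 := by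
    intro q hq
    rcases lt_or_eq_of_le (habs_le q) with h | h
    · exact h
    · exfalso
      have hz : IsZeroSet ((fun r => 1 - |F₁ r|) ⁻¹' {0} : Set (StoneCech X)) :=
        ⟨⟨fun r => 1 - |F₁ r|, continuous_const.sub hF₁cont.abs⟩, rfl⟩
      have hmem : q ∈ ((fun r => 1 - |F₁ r|) ⁻¹' {0} : Set (StoneCech X)) := by
        simp only [mem_preimage, mem_singleton_iff]
        rw [← h]; ring
      obtain ⟨w, hwZ, hwR⟩ := hKυ hq _ hz hmem
      obtain ⟨x, rfl⟩ := hwR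
      have : (1:ℝ) - |F₁ (stoneCechUnit x)| = 0 := hwZ
      rw [hF₁unit x] at this
      have := hsabs (f x)
      linarith
  set G : StoneCech X → ℝ := fun q => F₁ q / (1 - |F₁ q|) with hG
  have hGcont : ContinuousOn G K :=
    ContinuousOn.div hF₁cont.continuousOn (continuous_const.sub hF₁cont.abs).continuousOn
      (fun q hq => by have := hlt q hq; intro h0; linarith [abs_nonneg (F₁ q)])
  obtain ⟨M, hM⟩ := hK.exists_bound_of_continuousOn hGcont
  refine ⟨M, fun x hx => ?_⟩
  have hfx : G (stoneCechUnit x) = f x := by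
    rw [hG]
    simp only
    rw [hF₁unit x]
    set y := f x with hy
    have h1 : |s y| = |y| / (1 + |y|) := by
      rw [hs]; simp only
      rw [abs_div, abs_of_pos (by positivity : (0:ℝ) < 1 + |y|)]
    have hyne : (1:ℝ) + |y| ≠ 0 := by positivity
    have h2 : (1:ℝ) - |y| / (1 + |y|) = 1 / (1 + |y|) := by field_simp; ring
    rw [h1, h2, hs]
    simp only
    field_simp
  have := hM _ hx
  rw [Real.norm_eq_abs, hfx] at this
  exact this

end ZetaAux

/-- `ζX = βX` if and only if there exists no cozero-set of `X` with pseudocompact closure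
containing a non-compact zero-set of `X`. -/
theorem zetaSet_eq_univ_iff (X : Type*) [TopologicalSpace X] [T2Space X]
    [CompletelyRegularSpace X] :
    zetaSet X = Set.univ ↔
      ¬ ∃ C Z : Set X, IsCozeroSet C ∧ IsPseudocompactSet (closure C) ∧
        IsZeroSet Z ∧ ¬ IsCompact Z ∧ Z ⊆ C := by
  have hemb : Topology.IsEmbedding (stoneCechUnit : X → StoneCech X) := isEmbedding_unit'
  constructor
  · -- forward direction
    intro hzeta
    rintro ⟨C, Z, hC, hPC, hZ, hZnc, hZC⟩
    have hZne : Z.Nonempty := by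
      rcases Z.eq_empty_or_nonempty with h | h
      · exact absurd (h ▸ isCompact_empty) hZnc
      · exact h
    -- Step 1 : `closure (ι '' C) ⊆ υX`, using pseudocompactness of `closure C`.
    have hKυ : closure (stoneCechUnit '' C) ⊆ upsilonSet X := by
      intro q hq Z' hZ' hqZ'
      obtain ⟨Fz, hFz⟩ := hZ'
      by_contra hne
      rw [not_nonempty_iff_eq_empty] at hne
      have hFx : ∀ x : X, Fz (stoneCechUnit x) ≠ 0 := by
        intro x h0
        have : stoneCechUnit x ∈ Z' ∩ range (stoneCechUnit : X → StoneCech X) :=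
          ⟨by rw [hFz]; exact h0, ⟨x, rfl⟩⟩
        rw [hne] at this
        exact this
      set w : C(↥(closure C), ℝ) :=
        ⟨fun a => 1 / (Fz (stoneCechUnit ↑a))^2, by
          apply Continuous.div continuous_const
          · exact (Fz.continuous.comp (continuous_stoneCechUnit.comp continuous_subtype_val)).pow 2
          · intro a; exact pow_ne_zero _ (hFx ↑a)⟩ with hwdef
      obtain ⟨M, hM⟩ := hPC w
      obtain ⟨z₀, hz₀⟩ := hZne
      have hC₀ : z₀ ∈ closure C := subset_closure (hZC hz₀)
      have hMpos : 0 < M := by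
        have h1 := hM ⟨z₀, hC₀⟩
        have h2 : w ⟨z₀, hC₀⟩ ≠ 0 := one_div_ne_zero (pow_ne_zero _ (hFx z₀))
        calc (0:ℝ) < |w ⟨z₀, hC₀⟩| := abs_pos.2 h2
          _ ≤ M := h1
      have hbound : ∀ x ∈ C, 1/M ≤ (Fz (stoneCechUnit x))^2 := by
        intro x hx
        have h2 : 0 < (Fz (stoneCechUnit x))^2 :=
          lt_of_le_of_ne (sq_nonneg _) (fun h => (hFx x) (by
            have := pow_eq_zero_iff (n := 2) (by norm_num) |>.1 h.symm
            exact this))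
        have h1 : 1 / (Fz (stoneCechUnit x))^2 ≤ M := by
          have := hM ⟨x, subset_closure hx⟩
          exact le_trans (le_abs_self _) this
        rw [div_le_iff₀ h2] at h1
        rw [div_le_iff₀ hMpos]
        linarith
      have hclosed : closure (stoneCechUnit '' C) ⊆ {q | 1/M ≤ (Fz q)^2} :=
        closure_minimal (by rintro _ ⟨x, hx, rfl⟩; exact hbound x hx)
          (isClosed_le continuous_const (Fz.continuous.pow 2))
      have h3 := hclosed hq
      rw [mem_setOf_eq] at h3
      have hq0 : Fz q = 0 := by rw [hFz] at hqZ'; exact hqZ'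
      rw [hq0] at h3
      norm_num at h3
      linarith
    -- Step 2 : separate `Z` from `Cᶜ`.
    obtain ⟨zf, hzf⟩ := hZ
    obtain ⟨cf, hcf⟩ := hC
    have hden : ∀ x, 0 < |zf x| + |cf x| := by
      intro x
      by_contra h
      push_neg at h
      have h1 : zf x = 0 := by
        have := abs_nonneg (zf x); have := abs_nonneg (cf x)
        have : |zf x| = 0 := by linarith
        exact abs_eq_zero.1 this
      have h2 : cf x = 0 := by
        have := abs_nonneg (zf x); have := abs_nonneg (cf x)
        have : |cf x| = 0 := by linarith
        exact abs_eq_zero.1 this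
      have hxZ : x ∈ Z := by rw [hzf]; exact h1
      have hxC : x ∈ Cᶜ := by rw [hcf]; exact h2
      exact hxC (hZC hxZ)
    set u : X → ℝ := fun x => |zf x| / (|zf x| + |cf x|) with hudef
    have hucont : Continuous u :=
      (zf.continuous.abs).div ((zf.continuous.abs).add (cf.continuous.abs))
        (fun x => (hden x).ne')
    have humem : ∀ x, u x ∈ Icc (0:ℝ) 1 := fun x =>
      ⟨div_nonneg (abs_nonneg _) (hden x).le, by
        rw [div_le_one (hden x)]; linarith [abs_nonneg (cf x)]⟩
    have huZ : ∀ x ∈ Z, u x = 0 := by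
      intro x hx
      have h1 : zf x = 0 := by rw [hzf] at hx; exact hx
      simp only [hudef, h1, abs_zero, zero_div]
    have huC : ∀ x ∈ Cᶜ, u x = 1 := by
      intro x hx
      have h1 : cf x = 0 := by rwa [hcf] at hx
      have h2 : zf x ≠ 0 := by
        intro h0
        exact hx (hZC (by rw [hzf]; exact h0))
      simp only [hudef, h1, abs_zero, add_zero]
      exact div_self (abs_ne_zero.2 h2)
    have hu'c : Continuous (fun x => (⟨u x, humem x⟩ : ↥(Icc (0:ℝ) 1))) :=
      hucont.subtype_mk _
    set U : StoneCech X → ℝ := fun q => (stoneCechExtend hu'c q).1 with hUdef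
    have hUcont : Continuous U := continuous_subtype_val.comp (continuous_stoneCechExtend hu'c)
    have hUunit : ∀ x, U (stoneCechUnit x) = u x := fun x =>
      congrArg Subtype.val (congrFun (stoneCechExtend_extends hu'c) x)
    have hZcl : IsClosed Z := by
      rw [hzf]; exact isClosed_singleton.preimage zf.continuous
    have hp : ∃ p ∈ closure (stoneCechUnit '' Z), p ∉ stoneCechUnit '' Z := by
      by_contra h
      push_neg at h
      have hcl : closure (stoneCechUnit '' Z) = stoneCechUnit '' Z :=
        Subset.antisymm h subset_closure
      have hclosed : IsClosed (stoneCechUnit '' Z) := by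
        rw [← hcl]; exact isClosed_closure
      exact hZnc (hemb.isCompact_iff.mpr hclosed.isCompact)
    obtain ⟨p, hpcl, hpim⟩ := hp
    have hpX : p ∉ range (stoneCechUnit : X → StoneCech X) := by
      rintro ⟨x, rfl⟩
      have hxZ : x ∈ closure Z := by
        rw [hemb.toIsInducing.closure_eq_preimage_closure_image Z]
        exact hpcl
      rw [hZcl.closure_eq] at hxZ
      exact hpim ⟨x, hxZ, rfl⟩
    have hUp : U p = 0 := by
      have hsub : closure (stoneCechUnit '' Z) ⊆ {q | U q = 0} :=
        closure_minimal (by rintro _ ⟨x, hx, rfl⟩; rw [mem_setOf_eq, hUunit x]; exact huZ x hx)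
          (isClosed_eq hUcont continuous_const)
      exact hsub hpcl
    have hOopen : IsOpen {q : StoneCech X | U q < 1/2} := isOpen_lt hUcont continuous_const
    have hpO : p ∈ {q : StoneCech X | U q < 1/2} := by
      rw [mem_setOf_eq, hUp]; norm_num
    have hOυ : {q : StoneCech X | U q < 1/2} ⊆ upsilonSet X := by
      intro q hqO
      have hqcl : q ∈ closure (stoneCechUnit '' C) := by
        rw [mem_closure_iff]
        intro N hNopen hqN
        obtain ⟨x, hx⟩ := denseRange_stoneCechUnit.exists_mem_open (hNopen.inter hOopen)
          ⟨q, hqN, hqO⟩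
        have hxC : x ∈ C := by
          by_contra hxc
          have h1 : U (stoneCechUnit x) < 1/2 := hx.2
          rw [hUunit x, huC x hxc] at h1
          norm_num at h1
        exact ⟨stoneCechUnit x, hx.1, ⟨x, hxC, rfl⟩⟩
      exact hKυ hqcl
    have hpzeta : p ∈ zetaSet X := by rw [hzeta]; exact mem_univ p
    rcases hpzeta with h | h
    · exact hpX h
    · rw [mem_closure_iff] at h
      obtain ⟨w', hw'O, hw'c⟩ := h _ hOopen hpO
      exact hw'c (hOυ hw'O)
  · -- reverse direction
    intro hno
    rw [eq_univ_iff_forall]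
    intro p
    by_contra hp
    rw [zetaSet, mem_union] at hp
    push_neg at hp
    obtain ⟨hpX, hpcl⟩ := hp
    have hOopen : IsOpen (closure (upsilonSet X)ᶜ)ᶜ := isClosed_closure.isOpen_compl
    have hpO : p ∈ (closure (upsilonSet X)ᶜ)ᶜ := hpcl
    have hOυ : (closure (upsilonSet X)ᶜ)ᶜ ⊆ upsilonSet X := by
      intro q hq
      by_contra h
      exact hq (subset_closure h)
    obtain ⟨f, hf0, hf1, hf01⟩ :=
      exists_continuous_zero_one_of_isClosed (isClosed_singleton : IsClosed {p})
        hOopen.isClosed_compl (disjoint_singleton_left.mpr (fun h => h hpO))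
    have hfι : Continuous fun x : X => f (stoneCechUnit x) :=
      f.continuous.comp continuous_stoneCechUnit
    set Z : Set X := (fun x => f (stoneCechUnit x)) ⁻¹' {0} with hZdef
    set C : Set X := {x | f (stoneCechUnit x) < 1/2} with hCdef
    have hZzero : IsZeroSet Z := ⟨⟨fun x => f (stoneCechUnit x), hfι⟩, rfl⟩
    have hCcoz : IsCozeroSet C := by
      refine ⟨⟨fun x => max (1/2 - f (stoneCechUnit x)) 0,
        (continuous_const.sub hfι).max continuous_const⟩, ?_⟩
      ext x
      simp only [mem_compl_iff, hCdef, mem_setOf_eq, not_lt, mem_preimage, mem_singleton_iff,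
        ContinuousMap.coe_mk]
      rw [max_eq_right_iff, sub_nonpos]
    have hZC : Z ⊆ C := by
      intro x hx
      have h1 : f (stoneCechUnit x) = 0 := hx
      show f (stoneCechUnit x) < 1/2
      rw [h1]; norm_num
    have hclK : closure (stoneCechUnit '' C) ⊆ (closure (upsilonSet X)ᶜ)ᶜ := by
      have h1 : stoneCechUnit '' C ⊆ {q | f q ≤ 1/2} := by
        rintro _ ⟨x, hx, rfl⟩
        have hx' : f (stoneCechUnit x) < 1/2 := hx
        exact le_of_lt hx'
      have h2 : closure (stoneCechUnit '' C) ⊆ {q | f q ≤ 1/2} :=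
        closure_minimal h1 (isClosed_le f.continuous continuous_const)
      intro q hq
      by_contra hqO
      have h3 : f q = 1 := hf1 hqO
      have h4 := h2 hq
      rw [mem_setOf_eq, h3] at h4
      norm_num at h4
    have hZnc : ¬ IsCompact Z := by
      intro hcomp
      have hclim : IsClosed (stoneCechUnit '' Z) :=
        (hcomp.image continuous_stoneCechUnit).isClosed
      have hpim : p ∉ stoneCechUnit '' Z := by
        rintro ⟨x, _, rfl⟩
        exact hpX ⟨x, rfl⟩
      obtain ⟨e, he0, he1, he01⟩ :=
        exists_continuous_zero_one_of_isClosed (isClosed_singleton : IsClosed {p}) hclim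
          (disjoint_singleton_left.mpr hpim)
      have hz : IsZeroSet ((fun q => f q + e q) ⁻¹' {0} : Set (StoneCech X)) :=
        ⟨⟨fun q => f q + e q, f.continuous.add e.continuous⟩, rfl⟩
      have hpυ : p ∈ upsilonSet X := hOυ hpO
      have hpmem : p ∈ ((fun q => f q + e q) ⁻¹' {0} : Set (StoneCech X)) := by
        have h1 : f p = 0 := hf0 rfl
        have h2 : e p = 0 := he0 rfl
        simp only [mem_preimage, mem_singleton_iff, h1, h2, add_zero]
      obtain ⟨w', hw'Z, hw'R⟩ := hpυ _ hz hpmem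
      obtain ⟨x, rfl⟩ := hw'R
      have h1 : f (stoneCechUnit x) + e (stoneCechUnit x) = 0 := hw'Z
      have h2 : 0 ≤ f (stoneCechUnit x) := (hf01 _).1
      have h3 : 0 ≤ e (stoneCechUnit x) := (he01 _).1
      have h4 : f (stoneCechUnit x) = 0 := by linarith
      have h5 : e (stoneCechUnit x) = 1 := he1 ⟨x, h4, rfl⟩
      rw [h4, h5] at h1
      norm_num at h1
    have hPC : IsPseudocompactSet (closure C) := by
      by_contra hnp
      unfold IsPseudocompactSet at hnp
      push_neg at hnp
      obtain ⟨k, hk⟩ := hnp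
      obtain ⟨f', hf'⟩ := mandelker hCcoz k hk
      have hKcomp : IsCompact (closure (stoneCechUnit '' C)) := isClosed_closure.isCompact
      obtain ⟨M, hM⟩ := bounded_of_compact_subset_upsilon f' hKcomp (hclK.trans hOυ)
      obtain ⟨x, hxC, hxM⟩ := hf' M
      have h1 := hM x (subset_closure ⟨x, hxC, rfl⟩)
      linarith [le_abs_self (f' x)]
    exact hno ⟨C, Z, hCcoz, hPC, hZzero, hZnc, hZC⟩
end

section
/- Let X be a Tychonoff space. The following are equivalent: (a) ζX = αX, where αX = X ∪ (βX \ υX); (b) υX \ X ⊆ int_{βX} υX; (c) every free z-ultrafilter in X with the countable intersection property has an element contained in a cozero-set of X with pseudocompact closure in X. -/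
open Set Topology

/-- A z-filter on `Y`: a nonempty family of nonempty zero-sets, closed under finite
intersections and under zero-set supersets. -/
def IsZFilter {Y : Type*} [TopologicalSpace Y] (F : Set (Set Y)) : Prop :=
  F.Nonempty ∧ (∀ Z ∈ F, IsZeroSet Z ∧ Z.Nonempty) ∧
    (∀ Z ∈ F, ∀ W ∈ F, Z ∩ W ∈ F) ∧
    (∀ Z ∈ F, ∀ W : Set Y, IsZeroSet W → Z ⊆ W → W ∈ F)

/-- A z-ultrafilter: a maximal z-filter. -/
def IsZUltrafilter {Y : Type*} [TopologicalSpace Y] (F : Set (Set Y)) : Prop :=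
  IsZFilter F ∧ ∀ G : Set (Set Y), IsZFilter G → F ⊆ G → G = F

/-- A family of sets has the countable intersection property if every countable
subfamily has nonempty intersection. -/
def HasCIP {Y : Type*} (F : Set (Set Y)) : Prop :=
  ∀ G ⊆ F, G.Countable → (⋂₀ G).Nonempty

namespace ZetaAux

variable {X : Type*} [TopologicalSpace X]

/-- Extension of a `[0,1]`-valued continuous map to the Stone–Čech compactification. -/
lemma extend01 {h : X → ℝ} (hc : Continuous h) (hb : ∀ x, h x ∈ Icc (0:ℝ) 1) :
    ∃ H : C(StoneCech X, ℝ), (∀ x, H (stoneCechUnit x) = h x) ∧ ∀ p, H p ∈ Icc (0:ℝ) 1 := by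
  let h' : X → Icc (0:ℝ) 1 := fun x => ⟨h x, hb x⟩
  have hc' : Continuous h' := hc.subtype_mk _
  refine ⟨⟨fun p => ((stoneCechExtend hc' p : Icc (0:ℝ) 1) : ℝ),
    continuous_subtype_val.comp (continuous_stoneCechExtend hc')⟩, fun x => ?_, fun p => ?_⟩
  · have := congrFun (stoneCechExtend_extends hc') x
    simpa [h'] using congrArg Subtype.val this
  · exact (stoneCechExtend hc' p).2

lemma le_on_closure {H : StoneCech X → ℝ} (hH : Continuous H) {S : Set X} {c : ℝ}
    (h : ∀ x ∈ S, H (stoneCechUnit x) ≤ c) {p} (hp : p ∈ closure (stoneCechUnit '' S)) :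
    H p ≤ c := by
  have hsub : closure (stoneCechUnit '' S) ⊆ H ⁻¹' (Iic c) :=
    closure_minimal (by rintro _ ⟨x, hx, rfl⟩; exact h x hx) (isClosed_Iic.preimage hH)
  exact hsub hp

lemma ge_on_closure {H : StoneCech X → ℝ} (hH : Continuous H) {S : Set X} {c : ℝ}
    (h : ∀ x ∈ S, c ≤ H (stoneCechUnit x)) {p} (hp : p ∈ closure (stoneCechUnit '' S)) :
    c ≤ H p := by
  have := le_on_closure (hH.neg) (S := S) (c := -c) (fun x hx => by simpa using h x hx) hp
  simpa using this

lemma eq_on_closure {H : StoneCech X → ℝ} (hH : Continuous H) {S : Set X} {c : ℝ}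
    (h : ∀ x ∈ S, H (stoneCechUnit x) = c) {p} (hp : p ∈ closure (stoneCechUnit '' S)) :
    H p = c :=
  le_antisymm (le_on_closure hH (fun x hx => (h x hx).le) hp)
    (ge_on_closure hH (fun x hx => (h x hx).ge) hp)

/-- Density of the image: if `H p < c` then `p` is in the closure of the image of
`{x | H (ι x) < c}`. -/
lemma mem_closure_image_lt {H : StoneCech X → ℝ} (hH : Continuous H) {p : StoneCech X} {c : ℝ}
    (hp : H p < c) : p ∈ closure (stoneCechUnit '' {x | H (stoneCechUnit x) < c}) := by
  rw [mem_closure_iff]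
  intro U hU hpU
  have hUo : IsOpen (U ∩ H ⁻¹' (Iio c)) := hU.inter (isOpen_Iio.preimage hH)
  obtain ⟨q, ⟨hqU, hqc⟩, x, rfl⟩ :=
    denseRange_stoneCechUnit.inter_open_nonempty _ hUo ⟨p, hpU, hp⟩
  exact ⟨stoneCechUnit x, hqU, ⟨x, hqc, rfl⟩⟩

lemma isZeroSet_le {h : X → ℝ} (hc : Continuous h) (c : ℝ) : IsZeroSet {x | h x ≤ c} := by
  refine ⟨⟨fun x => max (h x - c) 0, by fun_prop⟩, ?_⟩
  ext x
  simp only [mem_setOf_eq, mem_preimage, ContinuousMap.coe_mk, mem_singleton_iff]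
  rw [max_eq_right_iff, sub_nonpos]

lemma isZeroSet_univ : IsZeroSet (univ : Set X) :=
  ⟨⟨fun _ => 0, continuous_const⟩, by ext x; simp⟩

lemma zeroSet_inter {Z W : Set X} (hZ : IsZeroSet Z) (hW : IsZeroSet W) :
    IsZeroSet (Z ∩ W) := by
  obtain ⟨f, rfl⟩ := hZ
  obtain ⟨g, rfl⟩ := hW
  refine ⟨⟨fun x => |f x| + |g x|, by fun_prop⟩, ?_⟩
  ext x
  simp only [mem_inter_iff, mem_preimage, mem_singleton_iff, ContinuousMap.coe_mk]
  constructor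
  · rintro ⟨h1, h2⟩; simp [h1, h2]
  · intro h
    have h1 : |f x| = 0 := by nlinarith [abs_nonneg (f x), abs_nonneg (g x)]
    have h2 : |g x| = 0 := by nlinarith [abs_nonneg (f x), abs_nonneg (g x)]
    exact ⟨abs_eq_zero.1 h1, abs_eq_zero.1 h2⟩

/-- Every zero-set has a representative valued in `[0,1]`. -/
lemma zeroRep {Z : Set X} (hZ : IsZeroSet Z) :
    ∃ h : X → ℝ, Continuous h ∧ (∀ x, h x ∈ Icc (0:ℝ) 1) ∧ ∀ x, x ∈ Z ↔ h x = 0 := by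
  obtain ⟨f, rfl⟩ := hZ
  refine ⟨fun x => min |f x| 1, by fun_prop, fun x => ⟨le_min (abs_nonneg _) zero_le_one,
    min_le_right _ _⟩, fun x => ?_⟩
  simp only [mem_preimage, mem_singleton_iff]
  constructor
  · intro hx; simp [hx]
  · intro hx
    rcases min_eq_iff.1 hx with ⟨h1, _⟩ | ⟨h1, _⟩
    · exact abs_eq_zero.1 h1
    · norm_num at h1

/-- A `βX`-extension witnessing a zero-set. -/
lemma vanish_extend {Z : Set X} (hZ : IsZeroSet Z) :
    ∃ H : C(StoneCech X, ℝ), (∀ p, H p ∈ Icc (0:ℝ) 1) ∧ ∀ x, x ∈ Z ↔ H (stoneCechUnit x) = 0 := by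
  obtain ⟨h, hc, hb, hiff⟩ := zeroRep hZ
  obtain ⟨H, hext, hHb⟩ := extend01 hc hb
  exact ⟨H, hHb, fun x => by rw [hext]; exact hiff x⟩


/-- Disjoint zero-sets of `X` have disjoint closures in `βX` (complete separation). -/
lemma sep {Z W : Set X} (hZ : IsZeroSet Z) (hW : IsZeroSet W) (hd : Z ∩ W = ∅) :
    closure (stoneCechUnit '' Z) ∩ closure (stoneCechUnit '' W) = ∅ := by
  obtain ⟨f, fc, fb, fz⟩ := zeroRep hZ
  obtain ⟨g, gc, gb, gz⟩ := zeroRep hW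
  have hpos : ∀ x, 0 < f x + g x := by
    intro x
    rcases (add_nonneg (fb x).1 (gb x).1).lt_or_eq with h | h
    · exact h
    · exfalso
      have hf : f x = 0 := by nlinarith [(fb x).1, (gb x).1]
      have hg : g x = 0 := by nlinarith [(fb x).1, (gb x).1]
      have hx : x ∈ Z ∩ W := ⟨(fz x).2 hf, (gz x).2 hg⟩
      rw [hd] at hx; exact hx
  set h : X → ℝ := fun x => f x / (f x + g x) with hh
  have hcont : Continuous h := fc.div (fc.add gc) fun x => (hpos x).ne'
  have hb : ∀ x, h x ∈ Icc (0:ℝ) 1 := fun x =>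
    ⟨div_nonneg (fb x).1 (hpos x).le, by
      rw [hh]; dsimp only; rw [div_le_one (hpos x)]; linarith [(gb x).1]⟩
  obtain ⟨H, hext, hHb⟩ := extend01 hcont hb
  have hZ0 : ∀ x ∈ Z, H (stoneCechUnit x) = 0 := fun x hx => by
    rw [hext]; simp [hh, (fz x).1 hx]
  have hW1 : ∀ x ∈ W, H (stoneCechUnit x) = 1 := fun x hx => by
    have hg0 : g x = 0 := (gz x).1 hx
    have hf : f x ≠ 0 := by have := hpos x; rw [hg0, add_zero] at this; exact this.ne'
    rw [hext]; simp [hh, hg0, div_self hf]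
  ext p
  simp only [mem_inter_iff, mem_empty_iff_false, iff_false, not_and]
  intro h1 h2
  have e0 : H p = 0 := eq_on_closure H.continuous hZ0 h1
  have e1 : H p = 1 := eq_on_closure H.continuous hW1 h2
  rw [e0] at e1; norm_num at e1

/-- The z-ultrafilter associated to a point of `βX`. -/
def Ap (p : StoneCech X) : Set (Set X) :=
  {Z | IsZeroSet Z ∧ p ∈ closure (stoneCechUnit '' Z)}

lemma le_mem_Ap {u : StoneCech X → ℝ} (hu : Continuous u) {p : StoneCech X} {c : ℝ}
    (hp : u p < c) : {x | u (stoneCechUnit x) ≤ c} ∈ Ap p := by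
  refine ⟨isZeroSet_le (hu.comp continuous_stoneCechUnit) c, ?_⟩
  have hsub : {x | u (stoneCechUnit x) < c} ⊆ {x | u (stoneCechUnit x) ≤ c} :=
    fun x hx => le_of_lt (mem_setOf_eq ▸ hx)
  exact closure_mono (image_mono hsub) (mem_closure_image_lt hu hp)

lemma closure_inter_cond {S : Set X} {u : StoneCech X → ℝ} (hu : Continuous u) {p : StoneCech X}
    {c : ℝ} (hp : p ∈ closure (stoneCechUnit '' S)) (hpc : u p < c) :
    p ∈ closure (stoneCechUnit '' (S ∩ {x | u (stoneCechUnit x) ≤ c})) := by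
  rw [mem_closure_iff] at hp ⊢
  intro U hU hpU
  obtain ⟨y, ⟨hyU, hyc⟩, x, hxS, rfl⟩ :=
    hp (U ∩ u ⁻¹' Iio c) (hU.inter (isOpen_Iio.preimage hu)) ⟨hpU, hpc⟩
  have hyc' : x ∈ {x | u (stoneCechUnit x) ≤ c} := mem_setOf_eq ▸ le_of_lt hyc
  exact ⟨stoneCechUnit x, hyU, ⟨x, ⟨hxS, hyc'⟩, rfl⟩⟩

lemma Ap_inter {p : StoneCech X} {Z W : Set X} (hZ : Z ∈ Ap p) (hW : W ∈ Ap p) :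
    Z ∩ W ∈ Ap p := by
  refine ⟨zeroSet_inter hZ.1 hW.1, ?_⟩
  by_contra hnc
  obtain ⟨u, hu0, hu1, hub⟩ := exists_continuous_zero_one_of_isClosed
    (isClosed_singleton (x := p)) isClosed_closure (disjoint_singleton_left.2 hnc)
  have hup : (u : StoneCech X → ℝ) p < 1/3 := by
    have h0 := hu0 (mem_singleton p)
    simp only [Pi.zero_apply] at h0
    rw [h0]; norm_num
  set Z' := Z ∩ {x | u (stoneCechUnit x) ≤ 1/3} with hZ'
  set W' := W ∩ {x | u (stoneCechUnit x) ≤ 1/3} with hW'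
  have hucont : Continuous (u : StoneCech X → ℝ) := u.continuous
  have hZ'z : IsZeroSet Z' := zeroSet_inter hZ.1 (isZeroSet_le (hucont.comp continuous_stoneCechUnit) _)
  have hW'z : IsZeroSet W' := zeroSet_inter hW.1 (isZeroSet_le (hucont.comp continuous_stoneCechUnit) _)
  have hdisj : Z' ∩ W' = ∅ := by
    rw [eq_empty_iff_forall_notMem]
    rintro x ⟨⟨hxZ, hx3⟩, ⟨hxW, -⟩⟩
    have hmem : stoneCechUnit x ∈ closure (stoneCechUnit '' (Z ∩ W)) :=
      subset_closure ⟨x, ⟨hxZ, hxW⟩, rfl⟩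
    have h1 := hu1 hmem
    simp only [Pi.one_apply] at h1
    have hx3' : (u : StoneCech X → ℝ) (stoneCechUnit x) ≤ 1/3 := hx3
    rw [h1] at hx3'; norm_num at hx3'
  have hpZ' : p ∈ closure (stoneCechUnit '' Z') := closure_inter_cond hucont hZ.2 hup
  have hpW' : p ∈ closure (stoneCechUnit '' W') := closure_inter_cond hucont hW.2 hup
  have := sep hZ'z hW'z hdisj
  have : p ∈ (∅ : Set (StoneCech X)) := this ▸ ⟨hpZ', hpW'⟩
  exact this

lemma Ap_nonempty {p : StoneCech X} {Z : Set X} (hZ : Z ∈ Ap p) : Z.Nonempty := by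
  rcases Z.eq_empty_or_nonempty with rfl | h
  · exact absurd hZ.2 (by simp)
  · exact h

lemma isZFilter_Ap (p : StoneCech X) : IsZFilter (Ap p) := by
  refine ⟨⟨univ, isZeroSet_univ, ?_⟩, fun Z hZ => ⟨hZ.1, Ap_nonempty hZ⟩,
    fun Z hZ W hW => Ap_inter hZ hW,
    fun Z hZ W hWz hsub => ⟨hWz, closure_mono (image_mono hsub) hZ.2⟩⟩
  rw [image_univ]
  exact denseRange_stoneCechUnit p

lemma Ap_max (p : StoneCech X) {G : Set (Set X)} (hG : IsZFilter G) (hsub : Ap p ⊆ G) :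
    G = Ap p := by
  refine Subset.antisymm (fun W hW => ?_) hsub
  obtain ⟨hWz, hWne⟩ := hG.2.1 W hW
  refine ⟨hWz, ?_⟩
  by_contra hnc
  obtain ⟨u, hu0, hu1, hub⟩ := exists_continuous_zero_one_of_isClosed
    (isClosed_singleton (x := p)) isClosed_closure (disjoint_singleton_left.2 hnc)
  have hup : (u : StoneCech X → ℝ) p < 1/3 := by
    have h0 := hu0 (mem_singleton p)
    simp only [Pi.zero_apply] at h0
    rw [h0]; norm_num
  have hZ : {x | (u : StoneCech X → ℝ) (stoneCechUnit x) ≤ 1/3} ∈ Ap p :=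
    le_mem_Ap u.continuous hup
  have hmem := hG.2.2.1 _ (hsub hZ) W hW
  obtain ⟨x, hx3, hxW⟩ := (hG.2.1 _ hmem).2
  have h1 := hu1 (subset_closure ⟨x, hxW, rfl⟩ :
    stoneCechUnit x ∈ closure (stoneCechUnit '' W))
  simp only [Pi.one_apply] at h1
  have hx3' : (u : StoneCech X → ℝ) (stoneCechUnit x) ≤ 1/3 := hx3
  rw [h1] at hx3'; norm_num at hx3'

lemma isZUltrafilter_Ap (p : StoneCech X) : IsZUltrafilter (Ap p) :=
  ⟨isZFilter_Ap p, fun _ hG hsub => Ap_max p hG hsub⟩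


/-- The closure in `βX` of a pseudocompact subset of `X` lies in `υX`. -/
lemma closure_pseudocompact_subset_upsilon {K : Set X} (hK : IsPseudocompactSet K) :
    closure (stoneCechUnit '' K) ⊆ upsilonSet X := by
  rcases K.eq_empty_or_nonempty with rfl | ⟨x0, hx0⟩
  · simp
  intro q hq Z' hZ' hqZ'
  by_contra hempty
  rw [not_nonempty_iff_eq_empty] at hempty
  obtain ⟨H, rfl⟩ := hZ'
  have hne : ∀ x : X, H (stoneCechUnit x) ≠ 0 := by
    intro x hx
    have hmem : stoneCechUnit x ∈ (⇑H ⁻¹' {0}) ∩ range stoneCechUnit := ⟨hx, ⟨x, rfl⟩⟩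
    rw [hempty] at hmem; exact hmem
  set f : C(K, ℝ) := ⟨fun a => (|H (stoneCechUnit (a : X))|)⁻¹, by
    apply Continuous.inv₀
    · exact continuous_abs.comp (H.continuous.comp (continuous_stoneCechUnit.comp
        continuous_subtype_val))
    · intro a; exact abs_ne_zero.2 (hne a)⟩ with hf
  obtain ⟨M, hM⟩ := hK f
  have hfnn : ∀ a : K, (0:ℝ) ≤ f a := fun a => inv_nonneg.2 (abs_nonneg _)
  have hMpos : 0 < M := by
    have h1 := hM ⟨x0, hx0⟩
    have h2 : 0 < |H (stoneCechUnit x0)|⁻¹ := inv_pos.2 (abs_pos.2 (hne x0))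
    have h3 : f ⟨x0, hx0⟩ = |H (stoneCechUnit x0)|⁻¹ := rfl
    rw [abs_of_nonneg (hfnn _)] at h1
    rw [h3] at h1
    linarith
  have hKey : ∀ x ∈ K, M⁻¹ ≤ |H (stoneCechUnit x)| := by
    intro x hxK
    have h1 := hM ⟨x, hxK⟩
    rw [abs_of_nonneg (hfnn _)] at h1
    have h2 : (|H (stoneCechUnit x)|)⁻¹ ≤ M := h1
    have h3 : 0 < |H (stoneCechUnit x)| := abs_pos.2 (hne x)
    nlinarith [mul_inv_cancel₀ h3.ne', mul_inv_cancel₀ hMpos.ne',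
      mul_le_mul_of_nonneg_left h2 h3.le]
  have hq' : M⁻¹ ≤ |H q| :=
    ge_on_closure (continuous_abs.comp H.continuous) hKey hq
  have : H q = 0 := hqZ'
  rw [this] at hq'
  simp at hq'
  linarith [inv_pos.2 hMpos]

/-- If a continuous real-valued function on `X` is unbounded on `A`, then the `βX`-closure of
`A` escapes `υX`. -/
lemma escape {g : X → ℝ} (hg : Continuous g) {A : Set X}
    (hub : ∀ n : ℕ, ∃ x ∈ A, (n : ℝ) ≤ |g x|)
    (hA : closure (stoneCechUnit '' A) ⊆ upsilonSet X) : False := by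
  set t : X → ℝ := fun x => |g x| / (1 + |g x|) with ht
  have hden : ∀ x : X, 0 < 1 + |g x| := fun x => by positivity
  have htc : Continuous t := (continuous_abs.comp hg).div
    (continuous_const.add (continuous_abs.comp hg)) fun x => (hden x).ne'
  have htb : ∀ x, t x ∈ Icc (0:ℝ) 1 := fun x =>
    ⟨div_nonneg (abs_nonneg _) (hden x).le, by
      rw [ht]; dsimp only; rw [div_le_one (hden x)]; linarith [abs_nonneg (g x)]⟩
  have htlt : ∀ x, t x < 1 := fun x => by
    rw [ht]; dsimp only; rw [div_lt_one (hden x)]; linarith [abs_nonneg (g x)]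
  obtain ⟨T, hext, hTb⟩ := extend01 htc htb
  set S : ℕ → Set X := fun n => {x | x ∈ A ∧ 1 - 1/((n:ℝ)+1) ≤ t x} with hS
  have hSsub : ∀ n, S (n+1) ⊆ S n := by
    intro n x hx
    obtain ⟨hxA, hxt⟩ := hx
    refine ⟨hxA, le_trans ?_ hxt⟩
    have h1 : (0:ℝ) < (n:ℝ)+1 := by positivity
    have h2 : (0:ℝ) < (n:ℝ)+1+1 := by positivity
    have h3 : 1/((n:ℝ)+1+1) ≤ 1/((n:ℝ)+1) := by
      apply one_div_le_one_div_of_le h1; push_cast; linarith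
    push_cast at hxt ⊢
    linarith
  have hSmem : ∀ n : ℕ, ∀ x ∈ A, (n:ℝ) ≤ |g x| → x ∈ S n := by
    intro n x hxA hxg
    refine ⟨hxA, ?_⟩
    have h1 : 1 - t x = 1/(1+|g x|) := by
      rw [ht]; dsimp only; field_simp; ring
    have h2 : 1/(1+|g x|) ≤ 1/((n:ℝ)+1) :=
      one_div_le_one_div_of_le (by positivity) (by linarith)
    linarith
  have hSne : ∀ n, (closure (stoneCechUnit '' S n)).Nonempty := by
    intro n
    obtain ⟨x, hxA, hxg⟩ := hub n
    exact ⟨stoneCechUnit x, subset_closure ⟨x, hSmem n x hxA hxg, rfl⟩⟩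
  obtain ⟨q, hq⟩ := IsCompact.nonempty_iInter_of_sequence_nonempty_isCompact_isClosed
    (fun n => closure (stoneCechUnit '' S n))
    (fun n => closure_mono (image_mono (hSsub n))) hSne
    isClosed_closure.isCompact (fun _ => isClosed_closure)
  rw [mem_iInter] at hq
  have hT1 : T q = 1 := by
    have hle : T q ≤ 1 := (hTb q).2
    have hge : ∀ n : ℕ, 1 - 1/((n:ℝ)+1) ≤ T q := by
      intro n
      refine ge_on_closure T.continuous (fun x hx => ?_) (hq n)
      rw [hext x]; exact hx.2
    by_contra hne1
    have hlt : T q < 1 := lt_of_le_of_ne hle hne1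
    obtain ⟨n, hn⟩ := exists_nat_one_div_lt (show (0:ℝ) < 1 - T q by linarith)
    have := hge n
    linarith
  have hqu : q ∈ upsilonSet X := by
    apply hA
    refine closure_mono (image_mono (fun x hx => hx.1)) (hq 0)
  set ZZ : C(StoneCech X, ℝ) := ⟨fun r => 1 - T r, continuous_const.sub T.continuous⟩ with hZZ
  have hqZ : q ∈ (⇑ZZ) ⁻¹' {0} := by simp [hZZ, hT1]
  obtain ⟨y, hy0, x, rfl⟩ := hqu ((⇑ZZ) ⁻¹' {0}) ⟨ZZ, rfl⟩ hqZ
  have h1 : (1:ℝ) - T (stoneCechUnit x) = 0 := hy0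
  rw [hext x] at h1
  have := htlt x
  linarith


/-- Cozero sets are open. -/
lemma IsCozeroSet_isOpen {C : Set X} (hC : IsCozeroSet C) : IsOpen C := by
  obtain ⟨h, hh⟩ := hC
  have : IsClosed Cᶜ := hh ▸ (isClosed_singleton.preimage h.continuous)
  exact isClosed_compl_iff.1 (by simpa using this)

/-- If `C` is a cozero set whose `βX`-closure lies in `υX`, then `cl_X C` is pseudocompact. -/
lemma cozero_pseudocompact [CompletelyRegularSpace X] {C : Set X} (hC : IsCozeroSet C)
    (hcl : closure (stoneCechUnit '' C) ⊆ upsilonSet X) : IsPseudocompactSet (closure C) := by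
  intro f
  by_contra hb
  push_neg at hb
  have hCop : IsOpen C := IsCozeroSet_isOpen hC
  -- unboundedness transfers to points of `C`
  have hub : ∀ M : ℝ, ∃ x : X, ∃ hx : x ∈ C, M < |f ⟨x, subset_closure hx⟩| := by
    intro M
    obtain ⟨a, ha⟩ := hb M
    have hOop : IsOpen {b : closure C | M < |f b|} :=
      isOpen_lt continuous_const (continuous_abs.comp f.continuous)
    obtain ⟨O', hO'op, hO'pre⟩ := isOpen_induced_iff.1 hOop
    have haO' : (a : X) ∈ O' := by
      have h1 : a ∈ {b : closure C | M < |f b|} := ha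
      rw [← hO'pre] at h1; exact h1
    obtain ⟨x, hxO', hxC⟩ := (mem_closure_iff.1 a.2) O' hO'op haO'
    refine ⟨x, hxC, ?_⟩
    have h2 : (⟨x, subset_closure hxC⟩ : closure C) ∈ {b : closure C | M < |f b|} := by
      rw [← hO'pre]; exact hxO'
    exact h2
  have hchoice : ∀ n : ℕ, ∃ x : X, ∃ hx : x ∈ C, (n:ℝ) + 2 < |f ⟨x, subset_closure hx⟩| :=
    fun n => hub ((n:ℝ)+2)
  choose a ha hval using hchoice
  -- the open sets U n
  have hSop : ∀ n : ℕ,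
      IsOpen {b : closure C | |f b - f (⟨a n, subset_closure (ha n)⟩ : closure C)| < 1} :=
    fun n => isOpen_lt (continuous_abs.comp (f.continuous.sub continuous_const)) continuous_const
  choose V hVop hVpre using fun n => isOpen_induced_iff.1 (hSop n)
  set U : ℕ → Set X := fun n => V n ∩ C with hU
  have hUop : ∀ n, IsOpen (U n) := fun n => (hVop n).inter hCop
  have haU : ∀ n, a n ∈ U n := by
    intro n
    refine ⟨?_, ha n⟩
    have h1 : (⟨a n, subset_closure (ha n)⟩ : closure C) ∈
        (Subtype.val ⁻¹' V n : Set (closure C)) := by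
      rw [hVpre n]; simp
    exact h1
  -- key membership translation
  have hmemV : ∀ n : ℕ, ∀ y : X, ∀ hy : y ∈ closure C, y ∈ V n →
      |f ⟨y, hy⟩ - f (⟨a n, subset_closure (ha n)⟩ : closure C)| < 1 := by
    intro n y hy hyV
    have h1 : (⟨y, hy⟩ : closure C) ∈ (Subtype.val ⁻¹' V n : Set (closure C)) := hyV
    rw [hVpre n] at h1; exact h1
  -- local finiteness
  have hLF : LocallyFinite U := by
    intro x
    by_cases hx : x ∈ closure C
    · have hWop : IsOpen {c : closure C | |f c - f (⟨x, hx⟩ : closure C)| < 1} :=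
        isOpen_lt (continuous_abs.comp (f.continuous.sub continuous_const)) continuous_const
      obtain ⟨W', hW'op, hW'pre⟩ := isOpen_induced_iff.1 hWop
      have hxW' : x ∈ W' := by
        have h1 : (⟨x, hx⟩ : closure C) ∈ (Subtype.val ⁻¹' W' : Set (closure C)) := by
          rw [hW'pre]; simp
        exact h1
      refine ⟨W', hW'op.mem_nhds hxW', ?_⟩
      apply Set.Finite.subset (Set.finite_Iio (⌈|f (⟨x, hx⟩ : closure C)| + 2⌉₊ : ℕ))
      rintro n ⟨y, ⟨hyV, hyC⟩, hyW'⟩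
      have hyK : y ∈ closure C := subset_closure hyC
      have h1 := hmemV n y hyK hyV
      have h2 : |f ⟨y, hyK⟩ - f (⟨x, hx⟩ : closure C)| < 1 := by
        have h3 : (⟨y, hyK⟩ : closure C) ∈ (Subtype.val ⁻¹' W' : Set (closure C)) := hyW'
        rw [hW'pre] at h3; exact h3
      have h4 := hval n
      have t1 : |f (⟨a n, subset_closure (ha n)⟩ : closure C)| - |f ⟨y, hyK⟩| ≤
          |f (⟨a n, subset_closure (ha n)⟩ : closure C) - f ⟨y, hyK⟩| :=
        abs_sub_abs_le_abs_sub _ _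
      have t2 : |f (⟨a n, subset_closure (ha n)⟩ : closure C) - f ⟨y, hyK⟩| =
          |f ⟨y, hyK⟩ - f (⟨a n, subset_closure (ha n)⟩ : closure C)| := abs_sub_comm _ _
      have t3 : |f ⟨y, hyK⟩| - |f (⟨x, hx⟩ : closure C)| ≤
          |f ⟨y, hyK⟩ - f (⟨x, hx⟩ : closure C)| := abs_sub_abs_le_abs_sub _ _
      have : (n:ℝ) < |f (⟨x, hx⟩ : closure C)| + 2 := by linarith
      exact mem_Iio.2 (Nat.lt_ceil.2 this)
    · refine ⟨(closure C)ᶜ, (isClosed_closure.isOpen_compl).mem_nhds hx, ?_⟩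
      apply Set.Finite.subset (Set.finite_empty)
      rintro n ⟨y, ⟨-, hyC⟩, hyK⟩
      exact hyK (subset_closure hyC)
  -- bump functions
  have hbump : ∀ n : ℕ, ∃ g : X → ℝ, Continuous g ∧ g (a n) = 1 ∧
      (∀ x, 0 ≤ g x ∧ g x ≤ 1) ∧ ∀ x ∉ U n, g x = 0 := by
    intro n
    obtain ⟨φ, hφc, hφ0, hφ1⟩ := CompletelyRegularSpace.completely_regular (a n) (U n)ᶜ
      (hUop n).isClosed_compl (by simp [haU n])
    refine ⟨fun x => 1 - (φ x : ℝ), by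
      exact continuous_const.sub (continuous_subtype_val.comp hφc), ?_, ?_, ?_⟩
    · show (1:ℝ) - (φ (a n) : ℝ) = 1
      rw [show ((φ (a n) : ℝ)) = 0 from congrArg Subtype.val hφ0]; ring
    · intro x
      constructor
      · show (0:ℝ) ≤ 1 - (φ x : ℝ)
        linarith [(φ x).2.2]
      · show (1:ℝ) - (φ x : ℝ) ≤ 1
        linarith [(φ x).2.1]
    · intro x hx
      have h1 : φ x = 1 := hφ1 hx
      show (1:ℝ) - (φ x : ℝ) = 0
      rw [show ((φ x : ℝ)) = 1 from congrArg Subtype.val h1]; ring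
  choose g hgc hg1 hgb hg0 using hbump
  set G : X → ℝ := fun x => ∑ᶠ n : ℕ, ((n:ℝ)+1) * g n x with hG
  have hsupp : ∀ n : ℕ, Function.support (fun x => ((n:ℝ)+1) * g n x) ⊆ U n := by
    intro n x hx
    by_contra hxU
    exact hx (by simp [hg0 n x hxU])
  have hGc : Continuous G :=
    continuous_finsum (fun n => continuous_const.mul (hgc n)) (hLF.subset hsupp)
  have hGval : ∀ n : ℕ, (n:ℝ) ≤ |G (a n)| := by
    intro n
    have hfin : (Function.support fun m : ℕ => ((m:ℝ)+1) * g m (a n)).Finite := by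
      apply (hLF.point_finite (a n)).subset
      intro m hm
      by_contra hmU
      exact hm (by simp [hg0 m (a n) hmU])
    have hle : ((n:ℝ)+1) * g n (a n) ≤ G (a n) :=
      single_le_finsum (f := fun m : ℕ => ((m:ℝ)+1) * g m (a n)) n hfin
        (fun m => mul_nonneg (by positivity) (hgb m (a n)).1)
    rw [hg1 n, mul_one] at hle
    rw [abs_of_nonneg (by linarith [Nat.cast_nonneg (α := ℝ) n] : (0:ℝ) ≤ G (a n))]
    linarith
  exact escape hGc (fun n => ⟨a n, ha n, hGval n⟩) hcl


/-- Every z-ultrafilter clusters at some point of `βX`. -/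
lemma exists_mem_all_closures {F : Set (Set X)} (hF : IsZUltrafilter F) :
    ∃ p : StoneCech X, ∀ Z ∈ F, p ∈ closure (stoneCechUnit '' Z) := by
  classical
  by_contra h
  push_neg at h
  have hempty : (univ : Set (StoneCech X)) ∩
      ⋂ (Z : F), closure (stoneCechUnit '' (Z : Set X)) = ∅ := by
    rw [eq_empty_iff_forall_notMem]
    rintro p ⟨-, hp⟩
    rw [mem_iInter] at hp
    obtain ⟨Z, hZF, hpZ⟩ := h p
    exact hpZ (hp ⟨Z, hZF⟩)
  obtain ⟨u, hu⟩ := isCompact_univ.elim_finite_subfamily_closed _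
    (fun _ : F => isClosed_closure) hempty
  have hW : ∀ s : Finset F, (⋂ Z ∈ s, (Z : Set X)) ∈ F := by
    intro s
    induction s using Finset.induction_on with
    | empty =>
      simp only [Finset.notMem_empty, iInter_of_empty, iInter_univ]
      obtain ⟨Z0, hZ0⟩ := hF.1.1
      exact hF.1.2.2.2 Z0 hZ0 univ isZeroSet_univ (subset_univ _)
    | @insert a s ha ih =>
      rw [Finset.set_biInter_insert]
      exact hF.1.2.2.1 _ a.2 _ ih
  obtain ⟨x, hx⟩ := (hF.1.2.1 _ (hW u)).2
  have hxmem : stoneCechUnit x ∈ (univ : Set (StoneCech X)) ∩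
      ⋂ Z ∈ u, closure (stoneCechUnit '' (Z : Set X)) := by
    refine ⟨trivial, ?_⟩
    rw [mem_iInter₂]
    intro Z hZu
    exact subset_closure ⟨x, (by exact mem_iInter₂.1 hx Z hZu), rfl⟩
  rw [hu] at hxmem
  exact hxmem

lemma eq_Ap {F : Set (Set X)} (hF : IsZUltrafilter F) {p : StoneCech X}
    (hp : ∀ Z ∈ F, p ∈ closure (stoneCechUnit '' Z)) : F = Ap p :=
  (hF.2 (Ap p) (isZFilter_Ap p) (fun Z hZ => ⟨(hF.1.2.1 Z hZ).1, hp Z hZ⟩)).symm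

lemma not_range_of_free {F : Set (Set X)} (hF : IsZUltrafilter F) (hfree : ⋂₀ F = ∅)
    {p : StoneCech X} (hp : ∀ Z ∈ F, p ∈ closure (stoneCechUnit '' Z)) :
    p ∉ range (stoneCechUnit : X → StoneCech X) := by
  rintro ⟨x, rfl⟩
  have hx : x ∈ ⋂₀ F := by
    intro Z hZ
    obtain ⟨H, hHb, hHiff⟩ := vanish_extend (hF.1.2.1 Z hZ).1
    have h0 : H (stoneCechUnit x) = 0 :=
      eq_on_closure H.continuous (fun y hy => (hHiff y).1 hy) (hp Z hZ)
    exact (hHiff x).2 h0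
  rw [hfree] at hx
  exact hx

lemma free_Ap {p : StoneCech X} (hp : p ∉ range (stoneCechUnit : X → StoneCech X)) :
    ⋂₀ (Ap p) = ∅ := by
  rw [eq_empty_iff_forall_notMem]
  intro x hx
  apply hp
  refine ⟨x, ?_⟩
  by_contra hne
  obtain ⟨u, hu0, hu1, -⟩ := exists_continuous_zero_one_of_isClosed
    (isClosed_singleton (x := p)) (isClosed_singleton (x := stoneCechUnit x))
    (by rw [disjoint_singleton]; exact fun h => hne h.symm)
  have hup : (u : StoneCech X → ℝ) p < 1/3 := by
    have h0 := hu0 (mem_singleton p)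
    simp only [Pi.zero_apply] at h0
    rw [h0]; norm_num
  have hZ := le_mem_Ap u.continuous hup
  have hx3 : (u : StoneCech X → ℝ) (stoneCechUnit x) ≤ 1/3 := hx _ hZ
  have h1 := hu1 (mem_singleton (stoneCechUnit x))
  simp only [Pi.one_apply] at h1
  rw [h1] at hx3
  norm_num at hx3

lemma mem_upsilon_of_cip {p : StoneCech X} (hcip : HasCIP (Ap p)) : p ∈ upsilonSet X := by
  intro Z' hZ' hpZ'
  obtain ⟨H, rfl⟩ := hZ'
  have hH0 : H p = 0 := hpZ'
  set Zn : ℕ → Set X := fun n => {x | |H (stoneCechUnit x)| ≤ 1/((n:ℝ)+1)} with hZn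
  have hZnmem : ∀ n, Zn n ∈ Ap p := by
    intro n
    apply le_mem_Ap (continuous_abs.comp H.continuous)
    simp only [Function.comp_apply, hH0, abs_zero]
    positivity
  obtain ⟨x, hx⟩ := hcip (range Zn) (by rintro _ ⟨n, rfl⟩; exact hZnmem n) (countable_range _)
  have hx0 : H (stoneCechUnit x) = 0 := by
    by_contra h0
    obtain ⟨n, hn⟩ := exists_nat_one_div_lt (abs_pos.2 h0)
    have h1 : |H (stoneCechUnit x)| ≤ 1/((n:ℝ)+1) := hx (Zn n) ⟨n, rfl⟩
    linarith
  exact ⟨stoneCechUnit x, hx0, x, rfl⟩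

lemma cip_Ap {p : StoneCech X} (hp : p ∈ upsilonSet X) : HasCIP (Ap p) := by
  intro G hG hGc
  rcases G.eq_empty_or_nonempty with rfl | hGne
  · rw [sInter_empty]
    have hXne : Nonempty X := denseRange_stoneCechUnit.nonempty_iff.mpr ⟨p⟩
    exact univ_nonempty
  obtain ⟨Z, hZeq⟩ := Set.Countable.exists_eq_range hGc hGne
  have hZmem : ∀ n, Z n ∈ Ap p := fun n => hG (hZeq ▸ mem_range_self n)
  choose H hHb hHiff using fun n => vanish_extend (hZmem n).1
  have hH0 : ∀ n, H n p = 0 := fun n =>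
    eq_on_closure (H n).continuous (fun y hy => (hHiff n y).1 hy) (hZmem n).2
  have hterm : ∀ (n : ℕ) (q : StoneCech X), ‖(1/2:ℝ)^n * H n q‖ ≤ (1/2:ℝ)^n := by
    intro n q
    rw [Real.norm_eq_abs, abs_mul, abs_of_nonneg (by positivity : (0:ℝ) ≤ (1/2:ℝ)^n)]
    have h1 : |H n q| ≤ 1 := abs_le.2 ⟨by linarith [(hHb n q).1], (hHb n q).2⟩
    nlinarith [pow_nonneg (by norm_num : (0:ℝ) ≤ 1/2) n]
  set SS : StoneCech X → ℝ := fun q => ∑' n, (1/2:ℝ)^n * H n q with hSS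
  have hSSc : Continuous SS :=
    continuous_tsum (fun n => continuous_const.mul (H n).continuous) summable_geometric_two hterm
  have hsum : ∀ q, Summable fun n => (1/2:ℝ)^n * H n q := fun q =>
    Summable.of_norm_bounded summable_geometric_two (fun n => hterm n q)
  have hSSp : SS p = 0 := by simp [hSS, hH0]
  obtain ⟨y, hy0, x, rfl⟩ := hp (SS ⁻¹' {0}) ⟨⟨SS, hSSc⟩, rfl⟩ hSSp
  refine ⟨x, ?_⟩
  intro W hW
  rw [hZeq] at hW
  obtain ⟨n, rfl⟩ := hW
  have hSx : SS (stoneCechUnit x) = 0 := hy0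
  have hterm0 : (1/2:ℝ)^n * H n (stoneCechUnit x) = 0 := by
    have hle := Summable.le_tsum (hsum (stoneCechUnit x)) n
      (fun m _ => mul_nonneg (by positivity) (hHb m _).1)
    have hnn : 0 ≤ (1/2:ℝ)^n * H n (stoneCechUnit x) :=
      mul_nonneg (by positivity) (hHb n _).1
    have hSx' : (∑' m : ℕ, (1/2:ℝ)^m * H m (stoneCechUnit x)) = 0 := hSx
    rw [hSx'] at hle
    linarith
  have hHx : H n (stoneCechUnit x) = 0 := by
    have h2 : ((1:ℝ)/2)^n ≠ 0 := by positivity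
    rcases mul_eq_zero.1 hterm0 with h | h
    · exact absurd h h2
    · exact h
  exact (hHiff n x).2 hHx


/-- Direction (b) → (c). -/
lemma dir_bc [CompletelyRegularSpace X]
    (hb : upsilonSet X \ range (stoneCechUnit : X → StoneCech X) ⊆ interior (upsilonSet X))
    {F : Set (Set X)} (hF : IsZUltrafilter F) (hfree : ⋂₀ F = ∅) (hcip : HasCIP F) :
    ∃ Z ∈ F, ∃ C : Set X, IsCozeroSet C ∧ IsPseudocompactSet (closure C) ∧ Z ⊆ C := by
  obtain ⟨p, hp⟩ := exists_mem_all_closures hF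
  have hFAp : F = Ap p := eq_Ap hF hp
  have hpr : p ∉ range (stoneCechUnit : X → StoneCech X) := not_range_of_free hF hfree hp
  have hpu : p ∈ upsilonSet X := mem_upsilon_of_cip (hFAp ▸ hcip)
  have hpint : p ∈ interior (upsilonSet X) := hb ⟨hpu, hpr⟩
  obtain ⟨u, hu0, hu1, hub⟩ := exists_continuous_zero_one_of_isClosed
    (isClosed_singleton (x := p)) (isOpen_interior.isClosed_compl)
    (disjoint_singleton_left.2 (fun h => h hpint))
  have hup : (u : StoneCech X → ℝ) p < 1/3 := by
    have h0 := hu0 (mem_singleton p)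
    simp only [Pi.zero_apply] at h0
    rw [h0]; norm_num
  set Z := {x : X | (u : StoneCech X → ℝ) (stoneCechUnit x) ≤ 1/3} with hZdef
  have hZAp : Z ∈ Ap p := le_mem_Ap u.continuous hup
  set C := {x : X | (u : StoneCech X → ℝ) (stoneCechUnit x) < 2/3} with hCdef
  have hCcoz : IsCozeroSet C := by
    show IsZeroSet Cᶜ
    have hCc : Cᶜ = {x : X | -((u : StoneCech X → ℝ) (stoneCechUnit x)) ≤ -(2/3)} := by
      ext x
      simp only [hCdef, mem_compl_iff, mem_setOf_eq, not_lt, neg_le_neg_iff]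
    rw [hCc]
    exact isZeroSet_le ((u.continuous.comp continuous_stoneCechUnit).neg) _
  have hsubZC : Z ⊆ C := by
    intro x hx
    have h1 : (u : StoneCech X → ℝ) (stoneCechUnit x) ≤ 1/3 := hx
    show (u : StoneCech X → ℝ) (stoneCechUnit x) < 2/3
    linarith
  have hclC : closure (stoneCechUnit '' C) ⊆ upsilonSet X := by
    have h1 : stoneCechUnit '' C ⊆ (u : StoneCech X → ℝ) ⁻¹' (Iic (2/3)) := by
      rintro _ ⟨x, hx, rfl⟩
      have hx' : (u : StoneCech X → ℝ) (stoneCechUnit x) < 2/3 := hx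
      exact le_of_lt hx'
    have h2 : closure (stoneCechUnit '' C) ⊆ (u : StoneCech X → ℝ) ⁻¹' (Iic (2/3)) :=
      closure_minimal h1 (isClosed_Iic.preimage u.continuous)
    intro q hq
    have hq3 : (u : StoneCech X → ℝ) q ≤ 2/3 := h2 hq
    have hqint : q ∈ interior (upsilonSet X) := by
      by_contra hqq
      have h1q := hu1 (mem_compl hqq)
      simp only [Pi.one_apply] at h1q
      rw [h1q] at hq3
      norm_num at hq3
    exact interior_subset hqint
  exact ⟨Z, hFAp ▸ hZAp, C, hCcoz, cozero_pseudocompact hCcoz hclC, hsubZC⟩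

/-- Direction (c) → (b). -/
lemma dir_cb
    (hc : ∀ F : Set (Set X), IsZUltrafilter F → ⋂₀ F = ∅ → HasCIP F →
      ∃ Z ∈ F, ∃ C : Set X, IsCozeroSet C ∧ IsPseudocompactSet (closure C) ∧ Z ⊆ C) :
    upsilonSet X \ range (stoneCechUnit : X → StoneCech X) ⊆ interior (upsilonSet X) := by
  rintro p ⟨hpu, hpr⟩
  obtain ⟨Z, hZF, C, hCcoz, hCpsc, hZC⟩ :=
    hc (Ap p) (isZUltrafilter_Ap p) (free_Ap hpr) (cip_Ap hpu)
  have hZCc : Z ∩ Cᶜ = ∅ := by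
    rw [eq_empty_iff_forall_notMem]
    rintro x ⟨hxZ, hxCc⟩
    exact hxCc (hZC hxZ)
  have hsep := sep hZF.1 hCcoz hZCc
  set Uo := (closure (stoneCechUnit '' Cᶜ))ᶜ with hUodef
  have hUo : IsOpen Uo := isClosed_closure.isOpen_compl
  have hpUo : p ∈ Uo := by
    intro hmem
    have : p ∈ closure (stoneCechUnit '' Z) ∩ closure (stoneCechUnit '' Cᶜ) := ⟨hZF.2, hmem⟩
    rw [hsep] at this
    exact this
  have hUsub : Uo ⊆ closure (stoneCechUnit '' closure C) := by
    have h1 : Uo ⊆ closure (Uo ∩ range stoneCechUnit) :=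
      (denseRange_stoneCechUnit : DenseRange (stoneCechUnit : X → StoneCech X)).open_subset_closure_inter hUo
    refine h1.trans (closure_mono ?_)
    rintro y ⟨hyU, x, rfl⟩
    refine ⟨x, subset_closure ?_, rfl⟩
    by_contra hxC
    exact hyU (subset_closure ⟨x, hxC, rfl⟩)
  have hups := closure_pseudocompact_subset_upsilon hCpsc
  exact mem_interior.2 ⟨Uo, hUsub.trans hups, hUo, hpUo⟩

end ZetaAux

/-- The following are equivalent for a Tychonoff space `X`:
(a) `ζX = αX`, where `αX = X ∪ (βX \ υX)`;
(b) `υX \ X ⊆ int_{βX} υX`;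
(c) every free z-ultrafilter in `X` with the countable intersection property has an element
contained in a cozero-set of `X` with pseudocompact closure. -/
theorem zetaSet_eq_alphaSet_tfae (X : Type*) [TopologicalSpace X] [T2Space X]
    [CompletelyRegularSpace X] :
    (zetaSet X = Set.range (stoneCechUnit : X → StoneCech X) ∪ (upsilonSet X)ᶜ ↔
        upsilonSet X \ Set.range (stoneCechUnit : X → StoneCech X) ⊆ interior (upsilonSet X)) ∧
    (upsilonSet X \ Set.range (stoneCechUnit : X → StoneCech X) ⊆ interior (upsilonSet X) ↔
        ∀ F : Set (Set X), IsZUltrafilter F → ⋂₀ F = ∅ → HasCIP F →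
          ∃ Z ∈ F, ∃ C : Set X, IsCozeroSet C ∧ IsPseudocompactSet (closure C) ∧ Z ⊆ C) := by
  constructor
  · rw [zetaSet, closure_compl]
    constructor
    · intro h p hp
      by_contra hpint
      have hmem : p ∈ Set.range (stoneCechUnit : X → StoneCech X) ∪ (upsilonSet X)ᶜ := by
        rw [← h]
        exact Or.inr hpint
      rcases hmem with hmem | hmem
      · exact hp.2 hmem
      · exact hmem hp.1
    · intro h
      apply Subset.antisymm
      · rintro p (hp | hp)
        · exact Or.inl hp
        · by_cases hpr : p ∈ Set.range (stoneCechUnit : X → StoneCech X)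
          · exact Or.inl hpr
          · by_cases hpu : p ∈ upsilonSet X
            · exact absurd (h ⟨hpu, hpr⟩) hp
            · exact Or.inr hpu
      · rintro p (hp | hp)
        · exact Or.inl hp
        · exact Or.inr fun hint => hp (interior_subset hint)
  · exact ⟨fun hb F hF hfree hcip => ZetaAux.dir_bc hb hF hfree hcip,
      fun hc => ZetaAux.dir_cb hc⟩
end

section
/- For a Tychonoff space X, the Hewitt realcompactification υX is locally compact if and only if every z-ultrafilter in X with the countable intersection property has an element contained in a cozero-set of X with pseudocompact closure in X. -/
open Set Topology

section Aux
variable {X : Type*} [TopologicalSpace X]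

lemma isZeroSet_inter {Z W : Set X} (hZ : IsZeroSet Z) (hW : IsZeroSet W) :
    IsZeroSet (Z ∩ W) := by
  obtain ⟨f, rfl⟩ := hZ
  obtain ⟨g, rfl⟩ := hW
  refine ⟨⟨fun x => |f x| + |g x|, (f.continuous.abs.add g.continuous.abs)⟩, ?_⟩
  ext x
  simp only [mem_inter_iff, mem_preimage, mem_singleton_iff, ContinuousMap.coe_mk]
  rw [add_eq_zero_iff_of_nonneg (abs_nonneg _) (abs_nonneg _), abs_eq_zero, abs_eq_zero]

lemma isZeroSet_le (f : C(X, ℝ)) (a : ℝ) : IsZeroSet {x | f x ≤ a} := by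
  refine ⟨⟨fun x => max (f x - a) 0, (f.continuous.sub continuous_const).max continuous_const⟩, ?_⟩
  ext x
  simp only [mem_setOf_eq, mem_preimage, mem_singleton_iff, ContinuousMap.coe_mk]
  rw [max_eq_right_iff, sub_nonpos]

lemma isZeroSet_ge (f : C(X, ℝ)) (a : ℝ) : IsZeroSet {x | a ≤ f x} := by
  refine ⟨⟨fun x => max (a - f x) 0, (continuous_const.sub f.continuous).max continuous_const⟩, ?_⟩
  ext x
  simp only [mem_setOf_eq, mem_preimage, mem_singleton_iff, ContinuousMap.coe_mk]
  rw [max_eq_right_iff, sub_nonpos]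

lemma isZeroSet_univ : IsZeroSet (univ : Set X) := by
  refine ⟨⟨fun _ => 0, continuous_const⟩, ?_⟩
  ext x; simp

lemma exists_stoneCech_ext {a b : ℝ} {f : X → ℝ} (hf : Continuous f)
    (hab : ∀ x, f x ∈ Icc a b) :
    ∃ F : StoneCech X → ℝ, Continuous F ∧ (∀ x, F (stoneCechUnit x) = f x) ∧
      ∀ q, F q ∈ Icc a b := by
  have hf' : Continuous (fun x => (⟨f x, hab x⟩ : Icc a b)) := hf.subtype_mk _
  let F0 : StoneCech X → Icc a b := stoneCechExtend hf'
  refine ⟨fun q => (F0 q : ℝ),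
    continuous_subtype_val.comp (continuous_stoneCechExtend hf'), fun x => ?_, fun q =>
    (F0 q).2⟩
  have := congrFun (stoneCechExtend_extends hf') x
  rw [Function.comp_apply] at this
  show ((F0 (stoneCechUnit x) : Icc a b) : ℝ) = f x
  rw [show F0 (stoneCechUnit x) = _ from this]

end Aux

section Aux2
variable {X : Type*} [TopologicalSpace X]

lemma closure_image_disjoint {Z W : Set X} (hZ : IsZeroSet Z) (hW : IsZeroSet W)
    (hd : Z ∩ W = ∅) :
    closure (stoneCechUnit '' Z) ∩ closure (stoneCechUnit '' W) = ∅ := by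
  obtain ⟨f, rfl⟩ := hZ
  obtain ⟨g, rfl⟩ := hW
  have hne : ∀ x : X, |f x| + |g x| ≠ 0 := by
    intro x hx
    rw [add_eq_zero_iff_of_nonneg (abs_nonneg _) (abs_nonneg _), abs_eq_zero, abs_eq_zero] at hx
    have : x ∈ f ⁻¹' {0} ∩ g ⁻¹' {0} := ⟨hx.1, hx.2⟩
    rw [hd] at this
    exact this
  have hpos : ∀ x : X, 0 < |f x| + |g x| := fun x =>
    lt_of_le_of_ne (add_nonneg (abs_nonneg _) (abs_nonneg _)) (Ne.symm (hne x))
  set k : X → ℝ := fun x => |f x| / (|f x| + |g x|) with hk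
  have hkc : Continuous k :=
    (f.continuous.abs).div (f.continuous.abs.add g.continuous.abs) hne
  have hk01 : ∀ x, k x ∈ Icc (0:ℝ) 1 := fun x =>
    ⟨div_nonneg (abs_nonneg _) (le_of_lt (hpos x)),
      (div_le_one (hpos x)).2 (le_add_of_nonneg_right (abs_nonneg _))⟩
  obtain ⟨K, hKc, hKe, _⟩ := exists_stoneCech_ext hkc hk01
  have h1 : closure (stoneCechUnit '' (f ⁻¹' {0})) ⊆ K ⁻¹' {0} := by
    apply closure_minimal _ (isClosed_singleton.preimage hKc)
    rintro - ⟨x, hx, rfl⟩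
    have hfx : f x = 0 := hx
    simp only [mem_preimage, mem_singleton_iff, hKe x, hk, hfx, abs_zero, zero_div]
  have h2 : closure (stoneCechUnit '' (g ⁻¹' {0})) ⊆ K ⁻¹' {1} := by
    apply closure_minimal _ (isClosed_singleton.preimage hKc)
    rintro - ⟨x, hx, rfl⟩
    have hgx : g x = 0 := hx
    have hfx : f x ≠ 0 := by
      intro h0
      have : x ∈ f ⁻¹' {0} ∩ g ⁻¹' {0} := ⟨h0, hgx⟩
      rw [hd] at this; exact this
    simp only [mem_preimage, mem_singleton_iff, hKe x, hk, hgx, abs_zero, add_zero]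
    exact div_self (abs_ne_zero.2 hfx)
  rw [eq_empty_iff_forall_notMem]
  rintro q ⟨hq1, hq2⟩
  have e0 : K q = 0 := h1 hq1
  have e1 : K q = 1 := h2 hq2
  rw [e0] at e1
  exact zero_ne_one e1

lemma urysohn_beta {p : StoneCech X} {K : Set (StoneCech X)} (hK : IsClosed K) (hp : p ∉ K) :
    ∃ h : C(StoneCech X, ℝ), EqOn h 0 K ∧ h p = 1 ∧ ∀ q, h q ∈ Icc (0:ℝ) 1 := by
  obtain ⟨h, h0, h1, hI⟩ := exists_continuous_zero_one_of_isClosed hK isClosed_singleton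
    (disjoint_singleton_right.2 hp)
  exact ⟨h, h0, h1 rfl, hI⟩

/-- density helper: if `p ∈ closure (e '' Z)` and `h p > c` then
`p ∈ closure (e '' (Z ∩ {x | c ≤ h (e x)}))`. -/
lemma mem_closure_inter_level {p : StoneCech X} {Z : Set X} (h : C(StoneCech X, ℝ)) {c : ℝ}
    (hp : p ∈ closure (stoneCechUnit '' Z)) (hc : c < h p) :
    p ∈ closure (stoneCechUnit '' (Z ∩ {x | c ≤ h (stoneCechUnit x)})) := by
  rw [mem_closure_iff] at hp ⊢
  intro O hO hpO
  have hO' : IsOpen (O ∩ h ⁻¹' Ioi c) := hO.inter (isOpen_Ioi.preimage h.continuous)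
  obtain ⟨q, hqO, x, hxZ, rfl⟩ := hp _ hO' ⟨hpO, hc⟩
  exact ⟨stoneCechUnit x, hqO.1, x, ⟨hxZ, le_of_lt (show c < h (stoneCechUnit x) from hqO.2)⟩, rfl⟩

lemma mem_closure_level {p : StoneCech X} (h : C(StoneCech X, ℝ)) {c : ℝ} (hc : c < h p) :
    p ∈ closure (stoneCechUnit '' {x | c ≤ h (stoneCechUnit x)}) := by
  have hp : p ∈ closure (stoneCechUnit '' (univ : Set X)) := by
    rw [image_univ, denseRange_stoneCechUnit.closure_range]
    trivial
  simpa using mem_closure_inter_level h hp hc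

lemma nonempty_of_mem_closure {Y : Type*} [TopologicalSpace Y] {s : Set Y} {p : Y}
    (h : p ∈ closure s) : s.Nonempty := by
  rcases s.eq_empty_or_nonempty with rfl | hs
  · rw [closure_empty] at h; exact absurd h (notMem_empty p)
  · exact hs

lemma range_subset_upsilon : Set.range (stoneCechUnit : X → StoneCech X) ⊆ upsilonSet X := by
  rintro - ⟨x, rfl⟩ Z _ hZ
  exact ⟨stoneCechUnit x, hZ, mem_range_self x⟩

end Aux2

section ZA
variable {X : Type*} [TopologicalSpace X]

/-- The z-ultrafilter associated to a point of `βX`. -/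
def zA (p : StoneCech X) : Set (Set X) :=
  {Z | IsZeroSet Z ∧ p ∈ closure (stoneCechUnit '' Z)}

lemma zA_isZFilter (p : StoneCech X) : IsZFilter (zA p) := by
  have huniv : (univ : Set X) ∈ zA p := by
    refine ⟨isZeroSet_univ, ?_⟩
    rw [image_univ, denseRange_stoneCechUnit.closure_range]
    trivial
  refine ⟨⟨univ, huniv⟩, ?_, ?_, ?_⟩
  · rintro Z ⟨hZ, hpZ⟩
    refine ⟨hZ, ?_⟩
    obtain ⟨-, x, hx, -⟩ := nonempty_of_mem_closure hpZ
    exact ⟨x, hx⟩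
  · rintro Z ⟨hZ, hpZ⟩ W ⟨hW, hpW⟩
    refine ⟨isZeroSet_inter hZ hW, ?_⟩
    by_contra hpZW
    obtain ⟨h, h0, h1, _⟩ := urysohn_beta isClosed_closure hpZW
    set Z' := Z ∩ {x | (1:ℝ)/2 ≤ h (stoneCechUnit x)} with hZ'def
    set W' := W ∩ {x | (1:ℝ)/2 ≤ h (stoneCechUnit x)} with hW'def
    have hZ'z : IsZeroSet Z' := isZeroSet_inter hZ (isZeroSet_ge (h.comp ⟨_, continuous_stoneCechUnit⟩) _)
    have hW'z : IsZeroSet W' := isZeroSet_inter hW (isZeroSet_ge (h.comp ⟨_, continuous_stoneCechUnit⟩) _)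
    have hd : Z' ∩ W' = ∅ := by
      rw [eq_empty_iff_forall_notMem]
      rintro x ⟨⟨hxZ, hx2⟩, ⟨hxW, -⟩⟩
      have : h (stoneCechUnit x) = 0 :=
        h0 (subset_closure ⟨x, ⟨hxZ, hxW⟩, rfl⟩)
      have hx2' : (1:ℝ)/2 ≤ h (stoneCechUnit x) := hx2
      rw [this] at hx2'
      norm_num at hx2'
    have hdisj := closure_image_disjoint hZ'z hW'z hd
    have hpc : (1:ℝ)/2 < h p := by rw [h1]; norm_num
    have hp1 : p ∈ closure (stoneCechUnit '' Z') := mem_closure_inter_level h hpZ hpc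
    have hp2 : p ∈ closure (stoneCechUnit '' W') := mem_closure_inter_level h hpW hpc
    rw [eq_empty_iff_forall_notMem] at hdisj
    exact hdisj p ⟨hp1, hp2⟩
  · rintro Z ⟨-, hpZ⟩ W hWz hZW
    exact ⟨hWz, closure_mono (image_mono hZW) hpZ⟩

lemma zA_isZUltrafilter (p : StoneCech X) : IsZUltrafilter (zA p) := by
  refine ⟨zA_isZFilter p, fun G hG hsub => ?_⟩
  apply Set.Subset.antisymm _ hsub
  intro Z hZG
  have hZz : IsZeroSet Z := (hG.2.1 Z hZG).1
  refine ⟨hZz, ?_⟩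
  by_contra hpZ
  obtain ⟨h, h0, h1, _⟩ := urysohn_beta isClosed_closure hpZ
  set W := {x : X | (1:ℝ)/2 ≤ h (stoneCechUnit x)} with hWdef
  have hWz : IsZeroSet W := isZeroSet_ge (h.comp ⟨_, continuous_stoneCechUnit⟩) _
  have hWmem : W ∈ zA p := by
    refine ⟨hWz, ?_⟩
    have : (1:ℝ)/2 < h p := by rw [h1]; norm_num
    exact mem_closure_level h this
  have hZW : Z ∩ W ∈ G := hG.2.2.1 Z hZG W (hsub hWmem)
  obtain ⟨x, hxZ, hxW⟩ := (hG.2.1 _ hZW).2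
  have : h (stoneCechUnit x) = 0 := h0 (subset_closure ⟨x, hxZ, rfl⟩)
  have hxW' : (1:ℝ)/2 ≤ h (stoneCechUnit x) := hxW
  rw [this] at hxW'
  norm_num at hxW'

end ZA

section CIP
variable {X : Type*} [TopologicalSpace X]

lemma zA_hasCIP {p : StoneCech X} (hp : p ∈ upsilonSet X) : HasCIP (zA p) := by
  intro G hG hGc
  rcases G.eq_empty_or_nonempty with rfl | hGne
  · rw [sInter_empty]
    have hpu : p ∈ closure (Set.range (stoneCechUnit : X → StoneCech X)) := by
      rw [denseRange_stoneCechUnit.closure_range]; trivial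
    obtain ⟨-, x, -⟩ := nonempty_of_mem_closure hpu
    exact ⟨x, trivial⟩
  obtain ⟨g, rfl⟩ := Set.Countable.exists_eq_range hGc hGne
  have hgz : ∀ n, IsZeroSet (g n) ∧ p ∈ closure (stoneCechUnit '' (g n)) := fun n =>
    hG (mem_range_self n)
  choose f hf using fun n => (hgz n).1
  -- truncated distance functions
  set t : ℕ → X → ℝ := fun n x => min |f n x| ((1/2 : ℝ) ^ n) with ht
  have htc : ∀ n, Continuous (t n) := fun n =>
    ((f n).continuous.abs).min continuous_const
  have htmem : ∀ n x, t n x ∈ Icc (0:ℝ) ((1/2 : ℝ) ^ n) := fun n x =>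
    ⟨le_min (abs_nonneg _) (by positivity), min_le_right _ _⟩
  have hext : ∀ n, ∃ T : StoneCech X → ℝ, Continuous T ∧
      (∀ x, T (stoneCechUnit x) = t n x) ∧ ∀ q, T q ∈ Icc (0:ℝ) ((1/2 : ℝ) ^ n) := fun n =>
    exists_stoneCech_ext (htc n) (htmem n)
  choose T hTc hTe hTmem using hext
  have hsum : Summable (fun n => ((1:ℝ)/2) ^ n) :=
    summable_geometric_of_lt_one (by norm_num) (by norm_num)
  set Φ : StoneCech X → ℝ := fun q => ∑' n, T n q with hΦ
  have hΦc : Continuous Φ := by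
    apply continuous_tsum hTc hsum
    intro n q
    rw [Real.norm_eq_abs, abs_of_nonneg (hTmem n q).1]
    exact (hTmem n q).2
  have hTsummable : ∀ q, Summable (fun n => T n q) := fun q =>
    Summable.of_nonneg_of_le (fun n => (hTmem n q).1) (fun n => (hTmem n q).2) hsum
  -- each T n vanishes at p
  have hTp : ∀ n, T n p = 0 := by
    intro n
    have hcl : closure (stoneCechUnit '' (g n)) ⊆ (T n) ⁻¹' {0} := by
      apply closure_minimal _ (isClosed_singleton.preimage (hTc n))
      rintro - ⟨x, hx, rfl⟩
      have hfx : f n x = 0 := by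
        have : x ∈ (f n) ⁻¹' {0} := by rw [← hf n]; exact hx
        exact this
      simp only [mem_preimage, mem_singleton_iff, hTe n x, ht, hfx, abs_zero]
      exact min_eq_left (by positivity)
    exact hcl (hgz n).2
  have hΦp : Φ p = 0 := by
    rw [hΦ]
    simp only
    rw [show (fun n => T n p) = fun _ => (0:ℝ) from funext hTp]
    exact tsum_zero
  -- apply the upsilon property
  obtain ⟨-, hqZ, x, rfl⟩ := hp (Φ ⁻¹' {0}) ⟨⟨Φ, hΦc⟩, rfl⟩ hΦp
  refine ⟨x, ?_⟩
  have hΦx : (∑' n, t n x) = 0 := by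
    have : Φ (stoneCechUnit x) = 0 := hqZ
    rw [hΦ] at this
    simp only at this
    rw [← this]
    exact tsum_congr fun n => (hTe n x).symm
  have hts : Summable (fun n => t n x) :=
    Summable.of_nonneg_of_le (fun n => (htmem n x).1) (fun n => (htmem n x).2) hsum
  have htzero : ∀ n, t n x = 0 := by
    intro n
    have h1 : t n x ≤ ∑' m, t m x := Summable.le_tsum hts n fun m _ => (htmem m x).1
    rw [hΦx] at h1
    exact le_antisymm h1 (htmem n x).1
  intro Z hZ
  obtain ⟨n, rfl⟩ := hZ
  have := htzero n
  rw [ht] at this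
  simp only at this
  have hfx : f n x = 0 := by
    by_contra hne
    have h2 : (0:ℝ) < min |f n x| ((1/2:ℝ)^n) := lt_min (abs_pos.2 hne) (by positivity)
    rw [this] at h2
    exact lt_irrefl 0 h2
  rw [hf n]
  exact hfx

end CIP

section L1
variable {X : Type*} [TopologicalSpace X]

lemma mem_zUltrafilter_of_inter {F : Set (Set X)} (hF : IsZUltrafilter F) {W : Set X}
    (hWz : IsZeroSet W) (hmeet : ∀ Z ∈ F, (Z ∩ W).Nonempty) : W ∈ F := by
  set G : Set (Set X) := {V | IsZeroSet V ∧ ∃ Z ∈ F, Z ∩ W ⊆ V} with hGdef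
  have hFG : F ⊆ G := fun Z hZ => ⟨(hF.1.2.1 Z hZ).1, Z, hZ, inter_subset_left⟩
  obtain ⟨Z₀, hZ₀⟩ := hF.1.1
  have hWG : W ∈ G := ⟨hWz, Z₀, hZ₀, inter_subset_right⟩
  have hG : IsZFilter G := by
    refine ⟨⟨W, hWG⟩, ?_, ?_, ?_⟩
    · rintro V ⟨hVz, Z, hZF, hsub⟩
      exact ⟨hVz, (hmeet Z hZF).mono hsub⟩
    · rintro V₁ ⟨h1z, Z₁, h1F, h1s⟩ V₂ ⟨h2z, Z₂, h2F, h2s⟩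
      refine ⟨isZeroSet_inter h1z h2z, Z₁ ∩ Z₂, hF.1.2.2.1 Z₁ h1F Z₂ h2F, ?_⟩
      intro x hx
      exact ⟨h1s ⟨hx.1.1, hx.2⟩, h2s ⟨hx.1.2, hx.2⟩⟩
    · rintro V ⟨hVz, Z, hZF, hsub⟩ V' hV'z hVV'
      exact ⟨hV'z, Z, hZF, hsub.trans hVV'⟩
  rw [← hF.2 G hG hFG]
  exact hWG

lemma closure_image_subset_upsilon_of_pseudocompact {A : Set X}
    (hps : IsPseudocompactSet (closure A)) :
    closure (stoneCechUnit '' A) ⊆ upsilonSet X := by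
  intro q hq Zb hZb hqZ
  obtain ⟨g, rfl⟩ := hZb
  by_contra hne
  have hgx : ∀ x : X, g (stoneCechUnit x) ≠ 0 := by
    intro x hx
    exact hne ⟨stoneCechUnit x, hx, mem_range_self x⟩
  have hφc : Continuous fun y : closure A => |g (stoneCechUnit (y : X))|⁻¹ := by
    apply Continuous.inv₀
    · exact ((g.continuous.comp continuous_stoneCechUnit).comp continuous_subtype_val).abs
    · exact fun y => abs_ne_zero.2 (hgx _)
  obtain ⟨M, hM⟩ := hps ⟨_, hφc⟩
  set ε : ℝ := (|M| + 1)⁻¹ with hε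
  have hεpos : 0 < ε := by positivity
  have hO : IsOpen {r : StoneCech X | |g r| < ε} :=
    isOpen_lt (g.continuous.abs) continuous_const
  have hqO : q ∈ {r : StoneCech X | |g r| < ε} := by
    have : g q = 0 := hqZ
    simp [this, hεpos]
  rw [mem_closure_iff] at hq
  obtain ⟨r, hrO, x, hxA, rfl⟩ := hq _ hO hqO
  set y : closure A := ⟨x, subset_closure hxA⟩ with hy
  have hb := hM y
  have ha : (0:ℝ) < |g (stoneCechUnit x)| := abs_pos.2 (hgx x)
  have hφy : |(|g (stoneCechUnit x)|⁻¹)| = |g (stoneCechUnit x)|⁻¹ :=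
    abs_of_nonneg (by positivity)
  have hb' : |g (stoneCechUnit x)|⁻¹ ≤ M := by
    have : |(ContinuousMap.mk _ hφc) y| ≤ M := hb
    simpa [hy, hφy] using this
  have hlt : |g (stoneCechUnit x)| < ε := hrO
  have hinv : |g (stoneCechUnit x)| * |g (stoneCechUnit x)|⁻¹ = 1 := mul_inv_cancel₀ (ne_of_gt ha)
  have hMle : M ≤ |M| := le_abs_self M
  have h1 : |g (stoneCechUnit x)| * (|M| + 1) < ε * (|M| + 1) :=
    mul_lt_mul_of_pos_right hlt (by positivity)
  have h2 : ε * (|M| + 1) = 1 := inv_mul_cancel₀ (by positivity)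
  have h3 : |g (stoneCechUnit x)| * |g (stoneCechUnit x)|⁻¹ ≤ |g (stoneCechUnit x)| * M :=
    mul_le_mul_of_nonneg_left hb' (le_of_lt ha)
  nlinarith

end L1

section L2
variable {X : Type*} [TopologicalSpace X] [CompletelyRegularSpace X]

lemma pseudocompact_of_closure_subset_upsilon {C : Set X} (hC : IsOpen C)
    (h2 : closure (stoneCechUnit '' C) ⊆ upsilonSet X) :
    IsPseudocompactSet (closure C) := by
  by_contra hps
  simp only [IsPseudocompactSet, not_forall, not_exists, not_le] at hps
  obtain ⟨f, hf⟩ := hps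
  choose pick hpick using hf
  set y : ℕ → closure C := fun n => Nat.rec (pick 0) (fun _ yn => pick (|f yn| + 2)) n with hy
  have hystep : ∀ n, |f (y n)| + 2 < |f (y (n + 1))| := fun n => hpick _
  have hv : ∀ n : ℕ, 2 * (n : ℝ) ≤ |f (y n)| := by
    intro n
    induction n with
    | zero => simpa using abs_nonneg (f (y 0))
    | succ n ih =>
      have := hystep n
      push_cast
      linarith
  -- open pieces of the subtype
  have hUopen : ∀ c : ℝ, IsOpen {z : closure C | |f z - c| < 1} := fun c =>
    isOpen_lt ((f.continuous.sub continuous_const).abs) continuous_const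
  have hVex : ∀ n : ℕ, ∃ V : Set X, IsOpen V ∧
      Subtype.val ⁻¹' V = {z : closure C | |f z - f (y n)| < 1} := fun n =>
    isOpen_induced_iff.mp (hUopen (f (y n)))
  choose V hVopen hVeq using hVex
  have hyV : ∀ n, ((y n) : X) ∈ V n := by
    intro n
    have : y n ∈ {z : closure C | |f z - f (y n)| < 1} := by
      simp [mem_setOf_eq]
    rw [← hVeq n] at this
    exact this
  have hVC : ∀ n, (V n ∩ C).Nonempty := by
    intro n
    have hyc : ((y n) : X) ∈ closure C := (y n).2
    rw [mem_closure_iff] at hyc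
    exact hyc _ (hVopen n) (hyV n)
  choose x hxV hxC using hVC
  set z : (n : ℕ) → closure C := fun n => ⟨x n, subset_closure (hxC n)⟩ with hz
  have hfz : ∀ n, |f (z n) - f (y n)| < 1 := by
    intro n
    have : (z n : X) ∈ V n := hxV n
    have h' : z n ∈ Subtype.val ⁻¹' (V n) := this
    rw [hVeq n] at h'
    exact h'
  -- local finiteness of the family V n ∩ C
  have hOlf : LocallyFinite (fun n => V n ∩ C) := by
    intro w
    by_cases hw : w ∈ closure C
    · set w' : closure C := ⟨w, hw⟩ with hw'
      obtain ⟨V', hV'open, hV'eq⟩ := isOpen_induced_iff.mp (hUopen (f w'))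
      have hwV' : w ∈ V' := by
        have : w' ∈ {z : closure C | |f z - f w'| < 1} := by simp [mem_setOf_eq]
        rw [← hV'eq] at this
        exact this
      refine ⟨V', hV'open.mem_nhds hwV', ?_⟩
      apply Set.Finite.subset (Set.finite_lt_nat ⌈(|f w'| + 4) / 2⌉₊)
      rintro n ⟨u, ⟨⟨huV, huC⟩, huV'⟩⟩
      set u' : closure C := ⟨u, subset_closure huC⟩ with hu'
      have h1 : |f u' - f (y n)| < 1 := by
        have : u' ∈ Subtype.val ⁻¹' (V n) := huV
        rw [hVeq n] at this
        exact this
      have h2 : |f u' - f w'| < 1 := by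
        have : u' ∈ Subtype.val ⁻¹' V' := huV'
        rw [hV'eq] at this
        exact this
      have ha1 : |f (y n)| - |f u'| ≤ |f (y n) - f u'| := abs_sub_abs_le_abs_sub _ _
      have ha2 : |f u'| - |f w'| ≤ |f u' - f w'| := abs_sub_abs_le_abs_sub _ _
      rw [abs_sub_comm] at h1
      have h3 := hv n
      show n < ⌈(|f w'| + 4) / 2⌉₊
      rw [Nat.lt_ceil]
      have : 2 * (n : ℝ) < |f w'| + 4 := by linarith
      linarith
    · refine ⟨(closure C)ᶜ, (isClosed_closure.isOpen_compl).mem_nhds hw, ?_⟩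
      have : {n : ℕ | ((V n ∩ C) ∩ (closure C)ᶜ).Nonempty} = ∅ := by
        rw [eq_empty_iff_forall_notMem]
        rintro n ⟨u, ⟨⟨-, huC⟩, hu'⟩⟩
        exact hu' (subset_closure huC)
      rw [this]
      exact Set.finite_empty
  -- bump functions
  have hbump : ∀ n : ℕ, ∃ φ : X → unitInterval, Continuous φ ∧ φ (x n) = 0 ∧
      EqOn φ 1 (V n ∩ C)ᶜ := fun n =>
    CompletelyRegularSpace.completely_regular (x n) (V n ∩ C)ᶜ
      (((hVopen n).inter hC).isClosed_compl) (fun hmem => hmem ⟨hxV n, hxC n⟩)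
  choose φ hφc hφx hφ1 using hbump
  set ψ : ℕ → X → ℝ := fun n u => (n : ℝ) * (1 - (φ n u : ℝ)) with hψ
  have hψc : ∀ n, Continuous (ψ n) := fun n =>
    continuous_const.mul (continuous_const.sub (continuous_subtype_val.comp (hφc n)))
  have hψ0 : ∀ n u, 0 ≤ ψ n u := fun n u =>
    mul_nonneg (Nat.cast_nonneg n) (by linarith [(φ n u).2.2])
  have hψsupp : ∀ n, Function.support (ψ n) ⊆ V n ∩ C := by
    intro n u hu
    by_contra hmem
    apply hu
    have : φ n u = 1 := hφ1 n hmem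
    simp [hψ, this]
  have hψlf : LocallyFinite (fun n => Function.support (ψ n)) :=
    hOlf.subset hψsupp
  set σ : X → ℝ := fun u => ∑ᶠ n, ψ n u with hσ
  have hσc : Continuous σ := continuous_finsum hψc hψlf
  have hσ0 : ∀ u, 0 ≤ σ u := fun u => finsum_nonneg (fun n => hψ0 n u)
  have hσx : ∀ n : ℕ, (n : ℝ) ≤ σ (x n) := by
    intro n
    have hfin : (Function.support fun j => ψ j (x n)).Finite := by
      apply Set.Finite.subset (hψlf.point_finite (x n))
      intro j hj
      exact hj
    have := single_le_finsum n hfin (fun j => hψ0 j (x n))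
    have hval : ψ n (x n) = (n : ℝ) := by
      simp [hψ, hφx n]
    rw [hval] at this
    exact this
  -- the function h and its extension
  set h : X → ℝ := fun u => (1 + σ u)⁻¹ with hh
  have hhpos : ∀ u, 0 < 1 + σ u := fun u => by linarith [hσ0 u]
  have hhc : Continuous h := (continuous_const.add hσc).inv₀ (fun u => ne_of_gt (hhpos u))
  have hhmem : ∀ u, h u ∈ Icc (0:ℝ) 1 := by
    intro u
    constructor
    · exact inv_nonneg.2 (le_of_lt (hhpos u))
    · rw [inv_le_one_iff₀]
      right
      linarith [hσ0 u]
  obtain ⟨H, hHc, hHe, hHmem⟩ := exists_stoneCech_ext hhc hhmem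
  -- the cluster point
  set S : ℕ → Set (StoneCech X) := fun N => closure (stoneCechUnit '' (x '' Ici N)) with hS
  have hSne : ∀ N, (S N).Nonempty := fun N =>
    ⟨stoneCechUnit (x N), subset_closure ⟨x N, ⟨N, le_refl N, rfl⟩, rfl⟩⟩
  have hSsub : ∀ N, S (N + 1) ⊆ S N := fun N =>
    closure_mono (image_mono (image_mono (Ici_subset_Ici.2 (Nat.le_succ N))))
  have hScl : ∀ N, IsClosed (S N) := fun N => isClosed_closure
  have hScomp : IsCompact (S 0) := (hScl 0).isCompact
  obtain ⟨q, hq⟩ := IsCompact.nonempty_iInter_of_sequence_nonempty_isCompact_isClosed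
    S hSsub hSne hScomp hScl
  have hqS : ∀ N, q ∈ S N := by
    intro N
    exact mem_iInter.mp hq N
  have hqC : q ∈ closure (stoneCechUnit '' C) := by
    have : S 0 ⊆ closure (stoneCechUnit '' C) := by
      apply closure_mono
      apply image_mono
      rintro - ⟨m, -, rfl⟩
      exact hxC m
    exact this (hqS 0)
  -- H q = 0
  have hHq0 : H q = 0 := by
    have hle : ∀ N : ℕ, H q ≤ (1 + (N:ℝ))⁻¹ := by
      intro N
      have hclosed : IsClosed {r : StoneCech X | H r ≤ (1 + (N:ℝ))⁻¹} :=
        isClosed_le hHc continuous_const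
      have hsub : stoneCechUnit '' (x '' Ici N) ⊆ {r | H r ≤ (1 + (N:ℝ))⁻¹} := by
        rintro - ⟨-, ⟨m, hm, rfl⟩, rfl⟩
        show H (stoneCechUnit (x m)) ≤ (1 + (N:ℝ))⁻¹
        rw [hHe]
        have h1 : (1:ℝ) + N ≤ 1 + σ (x m) := by
          have := hσx m
          have hNm : (N:ℝ) ≤ (m:ℝ) := Nat.cast_le.mpr hm
          linarith
        exact inv_anti₀ (by positivity) h1
      have := closure_minimal hsub hclosed
      exact this (hqS N)
    have hnn : 0 ≤ H q := (hHmem q).1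
    have htendsto : Filter.Tendsto (fun N : ℕ => (1 + (N:ℝ))⁻¹) Filter.atTop (𝓝 0) := by
      have := tendsto_one_div_add_atTop_nhds_zero_nat (𝕜 := ℝ)
      convert this using 2 with N
      rw [one_div, add_comm]
    have := ge_of_tendsto' htendsto hle
    linarith
  -- contradiction with q ∈ υX
  have hqups : q ∈ upsilonSet X := h2 hqC
  obtain ⟨-, hr0, x', rfl⟩ := hqups (H ⁻¹' {0}) ⟨⟨H, hHc⟩, rfl⟩ hHq0
  have : H (stoneCechUnit x') = 0 := hr0
  rw [hHe] at this
  exact (inv_ne_zero (ne_of_gt (hhpos x'))) this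

end L2

/-- `υX` is locally compact if and only if every z-ultrafilter in `X` with the countable
intersection property has an element contained in a cozero-set of `X` with pseudocompact
closure. -/
theorem upsilon_locallyCompact_iff (X : Type*) [TopologicalSpace X] [T2Space X]
    [CompletelyRegularSpace X] :
    LocallyCompactSpace (upsilonSet X) ↔
      ∀ F : Set (Set X), IsZUltrafilter F → HasCIP F →
        ∃ Z ∈ F, ∃ C : Set X, IsCozeroSet C ∧ IsPseudocompactSet (closure C) ∧ Z ⊆ C := by
  constructor
  · -- forward direction
    intro hLC F hF hCIP
    have huniv : (univ : Set X) ∈ F := by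
      obtain ⟨Z₀, h0⟩ := hF.1.1
      exact hF.1.2.2.2 Z₀ h0 univ isZeroSet_univ (subset_univ _)
    -- find a point in the intersection of all closures
    classical
    have hfinite : ∀ u : Finset ↥F, ∃ Z ∈ F, Z ⊆ ⋂ i ∈ u, (i : Set X) := by
      intro u
      induction u using Finset.induction_on with
      | empty => exact ⟨univ, huniv, by simp⟩
      | @insert i u hni ih =>
        obtain ⟨Z, hZ, hsub⟩ := ih
        refine ⟨(i : Set X) ∩ Z, hF.1.2.2.1 _ i.2 _ hZ, ?_⟩
        intro a ha
        rw [Set.mem_iInter₂]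
        intro j hj
        rcases Finset.mem_insert.mp hj with rfl | hj
        · exact ha.1
        · exact Set.mem_iInter₂.mp (hsub ha.2) j hj
    have hclosed : ∀ i : ↥F, IsClosed (closure (stoneCechUnit '' (i : Set X))) :=
      fun _ => isClosed_closure
    have hnonempty : ∀ u : Finset ↥F,
        ((univ : Set (StoneCech X)) ∩ ⋂ i ∈ u, closure (stoneCechUnit '' (i : Set X))).Nonempty := by
      intro u
      obtain ⟨Z, hZ, hsub⟩ := hfinite u
      obtain ⟨a, ha⟩ := (hF.1.2.1 Z hZ).2
      refine ⟨stoneCechUnit a, trivial, ?_⟩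
      rw [Set.mem_iInter₂]
      intro j hj
      exact subset_closure ⟨a, Set.mem_iInter₂.mp (hsub ha) j hj, rfl⟩
    obtain ⟨p, -, hp⟩ := IsCompact.inter_iInter_nonempty isCompact_univ
      (fun i : ↥F => closure (stoneCechUnit '' (i : Set X))) hclosed hnonempty
    rw [Set.mem_iInter] at hp
    have hFsub : F ⊆ zA p := fun Z hZ => ⟨(hF.1.2.1 Z hZ).1, hp ⟨Z, hZ⟩⟩
    have hFA : zA p = F := hF.2 (zA p) (zA_isZFilter p) hFsub
    -- p lies in υX
    have hpu : p ∈ upsilonSet X := by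
      intro Zb hZb hpZ
      obtain ⟨g, rfl⟩ := hZb
      by_contra hne
      set W : ℕ → Set X := fun n => {x | |g (stoneCechUnit x)| ≤ 1 / ((n : ℝ) + 1)} with hW
      have hWz : ∀ n, IsZeroSet (W n) := fun n =>
        isZeroSet_le ⟨fun x => |g (stoneCechUnit x)|,
          (g.continuous.comp continuous_stoneCechUnit).abs⟩ _
      have hWF : ∀ n, W n ∈ F := by
        intro n
        apply mem_zUltrafilter_of_inter hF (hWz n)
        intro Z hZ
        have hpcl : p ∈ closure (stoneCechUnit '' Z) := (hFsub hZ).2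
        have hO : IsOpen {r : StoneCech X | |g r| < 1 / ((n : ℝ) + 1)} :=
          isOpen_lt g.continuous.abs continuous_const
        have hpO : p ∈ {r : StoneCech X | |g r| < 1 / ((n : ℝ) + 1)} := by
          have : g p = 0 := hpZ
          simp only [mem_setOf_eq, this, abs_zero]
          positivity
        rw [mem_closure_iff] at hpcl
        obtain ⟨r, hrO, a, haZ, rfl⟩ := hpcl _ hO hpO
        exact ⟨a, haZ, le_of_lt (show |g (stoneCechUnit a)| < 1 / ((n : ℝ) + 1) from hrO)⟩
      obtain ⟨a, ha⟩ := hCIP (Set.range W) (by rintro - ⟨n, rfl⟩; exact hWF n)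
        (countable_range W)
      have habs : ∀ n : ℕ, |g (stoneCechUnit a)| ≤ 1 / ((n : ℝ) + 1) := fun n =>
        ha (W n) ⟨n, rfl⟩
      have hga : g (stoneCechUnit a) = 0 := by
        have hle := ge_of_tendsto' tendsto_one_div_add_atTop_nhds_zero_nat habs
        have := abs_nonneg (g (stoneCechUnit a))
        exact abs_eq_zero.mp (le_antisymm hle this)
      exact hne ⟨stoneCechUnit a, hga, mem_range_self a⟩
    -- use local compactness at p
    obtain ⟨s, hsnhds, -, hscomp⟩ := hLC.local_compact_nhds ⟨p, hpu⟩ univ Filter.univ_mem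
    rw [mem_nhds_iff] at hsnhds
    obtain ⟨O, hOs, hOopen, hpO⟩ := hsnhds
    obtain ⟨U, hUopen, hUeq⟩ := isOpen_induced_iff.mp hOopen
    have hpU : p ∈ U := by
      have : (⟨p, hpu⟩ : upsilonSet X) ∈ Subtype.val ⁻¹' U := by rw [hUeq]; exact hpO
      exact this
    set K' : Set (StoneCech X) := Subtype.val '' s with hK'
    have hK'comp : IsCompact K' := hscomp.image continuous_subtype_val
    have hK'ups : K' ⊆ upsilonSet X := by
      rintro - ⟨⟨q, hq⟩, -, rfl⟩
      exact hq
    have hUsub : U ∩ upsilonSet X ⊆ K' := by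
      rintro q ⟨hqU, hqu⟩
      refine ⟨⟨q, hqu⟩, hOs ?_, rfl⟩
      rw [← hUeq]
      exact hqU
    obtain ⟨h, h0, h1, -⟩ := urysohn_beta (isClosed_compl_iff.2 hUopen)
      (fun hmem => hmem hpU)
    set Z : Set X := {x | (1:ℝ)/2 ≤ h (stoneCechUnit x)} with hZdef
    set Cz : Set X := {x | (1:ℝ)/4 < h (stoneCechUnit x)} with hCzdef
    have hZz : IsZeroSet Z := isZeroSet_ge (h.comp ⟨_, continuous_stoneCechUnit⟩) _
    have hCoz : IsCozeroSet Cz := by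
      have hcompl : Czᶜ = {x : X | h (stoneCechUnit x) ≤ (1:ℝ)/4} := by
        ext x
        simp [hCzdef, not_lt]
      rw [IsCozeroSet, hcompl]
      exact isZeroSet_le (h.comp ⟨_, continuous_stoneCechUnit⟩) _
    have hZmem : Z ∈ F := by
      rw [← hFA]
      refine ⟨hZz, mem_closure_level h ?_⟩
      rw [h1]; norm_num
    have hCzopen : IsOpen Cz :=
      isOpen_lt continuous_const (h.continuous.comp continuous_stoneCechUnit)
    have hclsub : closure (stoneCechUnit '' Cz) ⊆ upsilonSet X := by
      have hsubK : stoneCechUnit '' Cz ⊆ K' := by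
        rintro - ⟨a, haC, rfl⟩
        apply hUsub
        constructor
        · by_contra hnot
          have hz := h0 (show stoneCechUnit a ∈ Uᶜ from hnot)
          have : (1:ℝ)/4 < h (stoneCechUnit a) := haC
          rw [show h (stoneCechUnit a) = 0 from hz] at this
          norm_num at this
        · exact range_subset_upsilon (mem_range_self a)
      exact (closure_minimal hsubK hK'comp.isClosed).trans hK'ups
    refine ⟨Z, hZmem, Cz, hCoz,
      pseudocompact_of_closure_subset_upsilon hCzopen hclsub, ?_⟩
    intro a ha
    have : (1:ℝ)/2 ≤ h (stoneCechUnit a) := ha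
    show (1:ℝ)/4 < h (stoneCechUnit a)
    linarith
  · -- reverse direction
    intro hyp
    haveI : WeaklyLocallyCompactSpace (upsilonSet X) := by
      constructor
      rintro ⟨p, hp⟩
      obtain ⟨Z, hZF, C, hCoz, hCps, hZC⟩ := hyp (zA p) (zA_isZUltrafilter p) (zA_hasCIP hp)
      obtain ⟨hZz, hpZ⟩ := hZF
      have hdisj : closure (stoneCechUnit '' Z) ∩ closure (stoneCechUnit '' Cᶜ) = ∅ := by
        apply closure_image_disjoint hZz hCoz
        rw [eq_empty_iff_forall_notMem]
        rintro a ⟨haZ, haC⟩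
        exact haC (hZC haZ)
      have hclC : closure (stoneCechUnit '' C) ⊆ upsilonSet X :=
        closure_image_subset_upsilon_of_pseudocompact hCps
      set K : Set (upsilonSet X) := Subtype.val ⁻¹' (closure (stoneCechUnit '' C)) with hK
      refine ⟨K, ?_, ?_⟩
      · rw [Topology.IsEmbedding.subtypeVal.isCompact_iff]
        have himg : Subtype.val '' K = closure (stoneCechUnit '' C) := by
          rw [hK, Subtype.image_preimage_coe]
          exact inter_eq_right.2 hclC
        rw [himg]
        exact isClosed_closure.isCompact
      · have hpN : p ∉ closure (stoneCechUnit '' Cᶜ) := by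
          intro hmem
          rw [eq_empty_iff_forall_notMem] at hdisj
          exact hdisj p ⟨hpZ, hmem⟩
        have hNopen : IsOpen (closure (stoneCechUnit '' Cᶜ))ᶜ := isClosed_closure.isOpen_compl
        rw [mem_nhds_iff]
        refine ⟨Subtype.val ⁻¹' (closure (stoneCechUnit '' Cᶜ))ᶜ, ?_, hNopen.preimage
          continuous_subtype_val, hpN⟩
        rintro ⟨q, hq⟩ hqN
        show q ∈ closure (stoneCechUnit '' C)
        have hquniv : q ∈ closure (Set.range (stoneCechUnit : X → StoneCech X)) := by
          rw [denseRange_stoneCechUnit.closure_range]; trivial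
        have hrange : Set.range (stoneCechUnit : X → StoneCech X) =
            stoneCechUnit '' C ∪ stoneCechUnit '' Cᶜ := by
          rw [← image_union, union_compl_self, image_univ]
        rw [hrange, closure_union] at hquniv
        rcases hquniv with hq1 | hq2
        · exact hq1
        · exact absurd hq2 hqN
    infer_instance
end
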